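/- arXiv:1401.1243 — 6 statements merged into one kernel-verified Lean document; each statement's English description precedes it below -/
import Mathlib

section
/- For independent identically distributed real random variables X and Y, P(|X+Y| ≤ 1) < 2 · P(|X−Y| ≤ 1). -/
open MeasureTheory ProbabilityTheory

section SWproof

open Finset
open scoped ENNReal

open Finset

namespace SWcomb

noncomputable section
open Classical in
/-- ordered count of pairs (i,j), i ≠ j, with relation g on values -/
def cnt (n : ℕ) (g : ℝ → ℝ → Prop) (x : Fin n → ℝ) : ℕ :=
  ((Finset.univ : Finset (Fin n × Fin n)).filter
    (fun p => p.1 ≠ p.2 ∧ g (x p.1) (x p.2))).card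

open Classical in
lemma cnt_succAbove (g : ℝ → ℝ → Prop) (hg : ∀ a b, g a b ↔ g b a)
    {n : ℕ} (x : Fin (n+1) → ℝ) (i₀ : Fin (n+1)) :
    cnt (n+1) g x = cnt n g (x ∘ i₀.succAbove)
      + 2 * ((Finset.univ.filter (fun j => j ≠ i₀ ∧ g (x i₀) (x j))).card) := by
  classical
  set P : Finset (Fin (n+1) × Fin (n+1)) :=
    Finset.univ.filter (fun p => p.1 ≠ p.2 ∧ g (x p.1) (x p.2)) with hP
  -- split by whether i₀ occurs
  have hsplit : P.card = (P.filter (fun p => p.1 ≠ i₀ ∧ p.2 ≠ i₀)).card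
      + (P.filter (fun p => ¬(p.1 ≠ i₀ ∧ p.2 ≠ i₀))).card := by
    exact (Finset.card_filter_add_card_filter_not _).symm
  -- first part equals cnt n g x'
  have h1 : (P.filter (fun p => p.1 ≠ i₀ ∧ p.2 ≠ i₀)).card = cnt n g (x ∘ i₀.succAbove) := by
    rw [cnt]
    refine (Finset.card_bij (fun p _ => ((i₀.succAbove p.1, i₀.succAbove p.2) : Fin (n+1) × Fin (n+1))) ?_ ?_ ?_).symm
    · rintro p hp
      simp only [Finset.mem_filter, Finset.mem_univ, true_and] at hp
      simp only [hP, Finset.mem_filter, Finset.mem_univ, true_and]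
      refine ⟨⟨fun h => hp.1 (Fin.succAbove_right_injective h), hp.2⟩,
        Fin.succAbove_ne i₀ p.1, Fin.succAbove_ne i₀ p.2⟩
    · rintro p₁ h₁ p₂ h₂ h
      have h1 := congrArg Prod.fst h
      have h2 := congrArg Prod.snd h
      simp only at h1 h2
      exact Prod.ext (Fin.succAbove_right_injective h1) (Fin.succAbove_right_injective h2)
    · rintro b hb
      simp only [hP, Finset.mem_filter, Finset.mem_univ, true_and] at hb
      obtain ⟨⟨hne, hgb⟩, h1, h2⟩ := hb
      obtain ⟨z1, hz1⟩ := Fin.exists_succAbove_eq (Ne.symm h1).symm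
      obtain ⟨z2, hz2⟩ := Fin.exists_succAbove_eq (Ne.symm h2).symm
      refine ⟨(z1, z2), ?_, ?_⟩
      · simp only [Finset.mem_filter, Finset.mem_univ, true_and, Function.comp]
        constructor
        · rintro rfl; exact hne (by rw [← hz1, ← hz2])
        · rw [hz1, hz2]; exact hgb
      · simp only [Prod.ext_iff]; exact ⟨hz1, hz2⟩
  -- second part: pairs involving i₀
  have h2 : (P.filter (fun p => ¬(p.1 ≠ i₀ ∧ p.2 ≠ i₀))).card
      = 2 * ((Finset.univ.filter (fun j => j ≠ i₀ ∧ g (x i₀) (x j))).card) := by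
    have hsplit2 : (P.filter (fun p => ¬(p.1 ≠ i₀ ∧ p.2 ≠ i₀))).card
        = ((P.filter (fun p => ¬(p.1 ≠ i₀ ∧ p.2 ≠ i₀))).filter (fun p => p.1 = i₀)).card
        + ((P.filter (fun p => ¬(p.1 ≠ i₀ ∧ p.2 ≠ i₀))).filter (fun p => ¬ p.1 = i₀)).card := by
      exact (Finset.card_filter_add_card_filter_not _).symm
    have e1 : ((P.filter (fun p => ¬(p.1 ≠ i₀ ∧ p.2 ≠ i₀))).filter (fun p => p.1 = i₀)).card
        = (Finset.univ.filter (fun j => j ≠ i₀ ∧ g (x i₀) (x j))).card := by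
      refine Finset.card_bij (fun p _ => p.2) ?_ ?_ ?_
      · rintro p hp
        simp only [hP, Finset.mem_filter, Finset.mem_univ, true_and] at hp
        obtain ⟨⟨⟨hne, hgb⟩, -⟩, h1⟩ := hp
        simp only [Finset.mem_filter, Finset.mem_univ, true_and]
        exact ⟨by rw [← h1]; exact (Ne.symm hne), by rw [← h1]; exact hgb⟩
      · rintro p₁ h₁ p₂ h₂ h
        simp only [hP, Finset.mem_filter] at h₁ h₂
        exact Prod.ext (h₁.2.trans h₂.2.symm) h
      · rintro j hj
        simp only [Finset.mem_filter, Finset.mem_univ, true_and] at hj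
        refine ⟨(i₀, j), ?_, rfl⟩
        simp only [hP, Finset.mem_filter, Finset.mem_univ, true_and, and_true]
        exact ⟨⟨Ne.symm hj.1, hj.2⟩, fun h => h.1 rfl⟩
    have e2 : ((P.filter (fun p => ¬(p.1 ≠ i₀ ∧ p.2 ≠ i₀))).filter (fun p => ¬ p.1 = i₀)).card
        = (Finset.univ.filter (fun j => j ≠ i₀ ∧ g (x i₀) (x j))).card := by
      refine Finset.card_bij (fun p _ => p.1) ?_ ?_ ?_
      · rintro p hp
        simp only [hP, Finset.mem_filter, Finset.mem_univ, true_and] at hp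
        obtain ⟨⟨⟨hne, hgb⟩, hnot⟩, h1⟩ := hp
        have h2 : p.2 = i₀ := by
          by_contra h2; exact hnot ⟨h1, h2⟩
        simp only [Finset.mem_filter, Finset.mem_univ, true_and]
        refine ⟨by rw [← h2]; exact hne, ?_⟩
        rw [hg]; rw [← h2]; exact hgb
      · rintro p₁ h₁ p₂ h₂ h
        simp only [hP, Finset.mem_filter, Finset.mem_univ, true_and] at h₁ h₂
        have k₁ : p₁.2 = i₀ := by
          rcases h₁ with ⟨⟨-, hnot⟩, hh⟩
          by_contra h2; exact hnot ⟨hh, h2⟩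
        have k₂ : p₂.2 = i₀ := by
          rcases h₂ with ⟨⟨-, hnot⟩, hh⟩
          by_contra h2; exact hnot ⟨hh, h2⟩
        exact Prod.ext h (k₁.trans k₂.symm)
      · rintro j hj
        simp only [Finset.mem_filter, Finset.mem_univ, true_and] at hj
        refine ⟨(j, i₀), ?_, rfl⟩
        simp only [hP, Finset.mem_filter, Finset.mem_univ, true_and, and_true]
        exact ⟨⟨⟨hj.1, (hg (x i₀) (x j)).mp hj.2⟩, fun h => h.2 rfl⟩, fun h => hj.1 h⟩
    rw [hsplit2, e1, e2]; ring
  rw [cnt, ← hP, hsplit, h1, h2]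

end

end SWcomb

namespace SWcomb

noncomputable section

open Classical in
/-- window count -/
def wcnt {n : ℕ} (x : Fin n → ℝ) (c : ℝ) : ℕ :=
  (Finset.univ.filter (fun j : Fin n => c ≤ x j ∧ x j ≤ c + 1)).card

open Classical in
lemma wcnt_le_max {n : ℕ} (x : Fin n → ℝ) (i₀ : Fin n)
    (hmax : ∀ i : Fin n, wcnt x (x i) ≤ wcnt x (x i₀)) (c : ℝ) :
    wcnt x c ≤ wcnt x (x i₀) := by
  classical
  rcases Finset.eq_empty_or_nonempty
      (Finset.univ.filter (fun j : Fin n => c ≤ x j ∧ x j ≤ c + 1)) with he | hne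
  · simp [wcnt, he]
  · obtain ⟨j₁, hj₁mem, hj₁min⟩ := Finset.exists_min_image _ x hne
    simp only [Finset.mem_filter, Finset.mem_univ, true_and] at hj₁mem
    have hsub : (Finset.univ.filter (fun j : Fin n => c ≤ x j ∧ x j ≤ c + 1))
        ⊆ (Finset.univ.filter (fun j : Fin n => x j₁ ≤ x j ∧ x j ≤ x j₁ + 1)) := by
      intro j hj
      simp only [Finset.mem_filter, Finset.mem_univ, true_and] at hj ⊢
      refine ⟨hj₁min j (by simp [Finset.mem_filter, hj.1, hj.2]), ?_⟩
      calc x j ≤ c + 1 := hj.2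
        _ ≤ x j₁ + 1 := by linarith [hj₁mem.1]
    calc wcnt x c ≤ wcnt x (x j₁) := Finset.card_le_card hsub
      _ ≤ wcnt x (x i₀) := hmax j₁

open Classical in
/-- key: the max-window point has few "sum-partners" relative to "diff-partners" -/
lemma d_le_two_m {n : ℕ} (x : Fin n → ℝ) (i₀ : Fin n)
    (hmax : ∀ i : Fin n, wcnt x (x i) ≤ wcnt x (x i₀)) :
    (Finset.univ.filter (fun j => j ≠ i₀ ∧ |x i₀ + x j| ≤ 1)).card
      ≤ 2 * (Finset.univ.filter (fun j => j ≠ i₀ ∧ |x i₀ - x j| ≤ 1)).card + 2 := by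
  classical
  set W := wcnt x (x i₀) with hW
  -- d ≤ 2 W
  have hd : (Finset.univ.filter (fun j => j ≠ i₀ ∧ |x i₀ + x j| ≤ 1)).card ≤ 2 * W := by
    have hsub : (Finset.univ.filter (fun j => j ≠ i₀ ∧ |x i₀ + x j| ≤ 1))
        ⊆ (Finset.univ.filter (fun j : Fin n => (-1 - x i₀) ≤ x j ∧ x j ≤ (-1 - x i₀) + 1))
          ∪ (Finset.univ.filter (fun j : Fin n => (- x i₀) ≤ x j ∧ x j ≤ (- x i₀) + 1)) := by
      intro j hj
      simp only [Finset.mem_filter, Finset.mem_univ, true_and] at hj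
      have habs := abs_le.mp hj.2
      rcases le_or_gt (x j) (- x i₀) with hc | hc
      · apply Finset.mem_union_left
        simp only [Finset.mem_filter, Finset.mem_univ, true_and]
        constructor <;> linarith [habs.1, habs.2]
      · apply Finset.mem_union_right
        simp only [Finset.mem_filter, Finset.mem_univ, true_and]
        constructor <;> linarith [habs.1, habs.2]
    calc (Finset.univ.filter (fun j => j ≠ i₀ ∧ |x i₀ + x j| ≤ 1)).card
        ≤ _ := Finset.card_le_card hsub
      _ ≤ (Finset.univ.filter (fun j : Fin n => (-1 - x i₀) ≤ x j ∧ x j ≤ (-1 - x i₀) + 1)).card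
          + (Finset.univ.filter (fun j : Fin n => (- x i₀) ≤ x j ∧ x j ≤ (- x i₀) + 1)).card :=
        Finset.card_union_le _ _
      _ ≤ W + W := by
        have h1 := wcnt_le_max x i₀ hmax (-1 - x i₀)
        have h2 := wcnt_le_max x i₀ hmax (- x i₀)
        rw [wcnt] at h1 h2
        omega
      _ = 2 * W := by ring
  -- W ≤ m + 1
  have hm : W ≤ (Finset.univ.filter (fun j => j ≠ i₀ ∧ |x i₀ - x j| ≤ 1)).card + 1 := by
    have hsub : (Finset.univ.filter (fun j : Fin n => x i₀ ≤ x j ∧ x j ≤ x i₀ + 1))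
        ⊆ insert i₀ (Finset.univ.filter (fun j => j ≠ i₀ ∧ |x i₀ - x j| ≤ 1)) := by
      intro j hj
      simp only [Finset.mem_filter, Finset.mem_univ, true_and] at hj
      rcases eq_or_ne j i₀ with rfl | hne
      · exact Finset.mem_insert_self _ _
      · apply Finset.mem_insert_of_mem
        simp only [Finset.mem_filter, Finset.mem_univ, true_and]
        exact ⟨hne, abs_le.mpr ⟨by linarith [hj.2], by linarith [hj.1]⟩⟩
    calc W ≤ (insert i₀ (Finset.univ.filter (fun j => j ≠ i₀ ∧ |x i₀ - x j| ≤ 1))).card :=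
        Finset.card_le_card hsub
      _ ≤ _ + 1 := Finset.card_insert_le _ _
  omega

open Classical in
theorem cnt_sum_le {n : ℕ} (x : Fin n → ℝ) :
    cnt n (fun a b => |a + b| ≤ 1) x ≤ 2 * cnt n (fun a b => |a - b| ≤ 1) x + 4 * n := by
  classical
  induction n with
  | zero =>
      simp [cnt]
  | succ n ih =>
      obtain ⟨i₀, -, hmax⟩ := Finset.exists_max_image (Finset.univ : Finset (Fin (n+1)))
        (fun i => wcnt x (x i)) ⟨0, Finset.mem_univ 0⟩
      have hmax' : ∀ i : Fin (n+1), wcnt x (x i) ≤ wcnt x (x i₀) := fun i => hmax i (Finset.mem_univ i)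
      have hA := cnt_succAbove (fun a b => |a + b| ≤ 1) (fun a b => by show |a+b| ≤ 1 ↔ |b+a| ≤ 1; rw [add_comm]) x i₀
      have hB := cnt_succAbove (fun a b => |a - b| ≤ 1) (fun a b => by show |a-b| ≤ 1 ↔ |b-a| ≤ 1; rw [abs_sub_comm]) x i₀
      have hdm := d_le_two_m x i₀ hmax'
      have hih := ih (x ∘ i₀.succAbove)
      omega

end

end SWcomb


namespace SWmeas

open SWcomb

def Ssum : Set (ℝ × ℝ) := {p | |p.1 + p.2| ≤ 1}
def Sdiff : Set (ℝ × ℝ) := {p | |p.1 - p.2| ≤ 1}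

lemma measSsum : MeasurableSet Ssum :=
  measurableSet_le ((continuous_fst.add continuous_snd).abs.measurable) measurable_const

lemma measSdiff : MeasurableSet Sdiff :=
  measurableSet_le ((continuous_fst.sub continuous_snd).abs.measurable) measurable_const

variable (ν : Measure ℝ) [IsProbabilityMeasure ν]

lemma map_pair {n : ℕ} {i j : Fin n} (hij : i ≠ j) :
    (Measure.pi (fun _ : Fin n => ν)).map (fun ω => (ω i, ω j)) = ν.prod ν := by
  classical
  have hmeas : Measurable fun ω : Fin n → ℝ => (ω i, ω j) :=
    (measurable_pi_apply i).prodMk (measurable_pi_apply j)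
  refine (Measure.prod_eq ?_).symm
  intro s t hs ht
  rw [Measure.map_apply hmeas (hs.prod ht)]
  have hpre : (fun ω : Fin n → ℝ => (ω i, ω j)) ⁻¹' (s ×ˢ t)
      = Set.pi Set.univ (fun k => if k = i then s else if k = j then t else Set.univ) := by
    ext ω
    simp only [Set.mem_preimage, Set.mem_prod, Set.mem_pi, Set.mem_univ, true_implies]
    constructor
    · rintro ⟨h1, h2⟩ k
      split_ifs with hk1 hk2
      · subst hk1; exact h1
      · subst hk2; exact h2
      · trivial
    · intro h
      refine ⟨?_, ?_⟩
      · have := h i; simpa using this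
      · have := h j
        simp only [if_neg (Ne.symm hij), if_pos rfl] at this
        exact this
  rw [hpre, Measure.pi_pi]
  have hval : ∀ k : Fin n, ν (if k = i then s else if k = j then t else Set.univ)
      = if k = i then ν s else if k = j then ν t else 1 := by
    intro k; split_ifs <;> simp
  rw [Finset.prod_congr rfl (fun k _ => hval k)]
  rw [← Finset.mul_prod_erase Finset.univ _ (Finset.mem_univ i), if_pos rfl]
  have hjmem : j ∈ Finset.univ.erase i := Finset.mem_erase.mpr ⟨Ne.symm hij, Finset.mem_univ j⟩
  rw [← Finset.mul_prod_erase _ _ hjmem, if_neg (Ne.symm hij), if_pos rfl]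
  have hone : ∀ k ∈ (Finset.univ.erase i).erase j,
      (if k = i then ν s else if k = j then ν t else 1) = 1 := by
    intro k hk
    have hk1 := (Finset.mem_erase.mp hk).1
    have hk2 := (Finset.mem_erase.mp (Finset.mem_erase.mp hk).2).1
    rw [if_neg hk2, if_neg hk1]
  rw [Finset.prod_congr rfl hone]
  simp [mul_comm]

open Classical in
lemma cnt_cast_eq (n : ℕ) (g : ℝ → ℝ → Prop) (x : Fin n → ℝ) :
    ((cnt n g x : ℕ) : ℝ≥0∞)
      = ∑ p ∈ (Finset.univ : Finset (Fin n)).offDiag,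
          (((fun ω : Fin n → ℝ => (ω p.1, ω p.2)) ⁻¹' {q : ℝ × ℝ | g q.1 q.2}).indicator
            (fun _ => (1 : ℝ≥0∞)) x) := by
  classical
  have h1 : cnt n g x = ∑ p ∈ (Finset.univ : Finset (Fin n)).offDiag,
      (if g (x p.1) (x p.2) then 1 else 0) := by
    rw [cnt, Finset.card_filter]
    rw [← Finset.sum_filter_add_sum_filter_not Finset.univ (fun p : Fin n × Fin n => p.1 ≠ p.2)]
    have hz : ∑ p ∈ Finset.univ.filter (fun p : Fin n × Fin n => ¬ p.1 ≠ p.2),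
        (if p.1 ≠ p.2 ∧ g (x p.1) (x p.2) then 1 else 0) = 0 := by
      apply Finset.sum_eq_zero
      intro p hp
      simp only [Finset.mem_filter, not_not] at hp
      simp [hp.2]
    have he : Finset.univ.filter (fun p : Fin n × Fin n => p.1 ≠ p.2)
        = (Finset.univ : Finset (Fin n)).offDiag := by
      ext p; simp [Finset.mem_offDiag]
    rw [hz, add_zero, he]
    apply Finset.sum_congr rfl
    intro p hp
    rw [Finset.mem_offDiag] at hp
    simp [hp.2.2]
  rw [h1, Nat.cast_sum]
  apply Finset.sum_congr rfl
  intro p hp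
  rw [Set.indicator_apply]
  simp only [Set.mem_preimage, Set.mem_setOf_eq]
  by_cases hc : g (x p.1) (x p.2)
  · simp [hc]
  · simp [hc]

open Classical in
lemma lintegral_cnt (n : ℕ) (g : ℝ → ℝ → Prop)
    (hSg : MeasurableSet {q : ℝ × ℝ | g q.1 q.2}) :
    ∫⁻ ω, ((cnt n g ω : ℕ) : ℝ≥0∞) ∂(Measure.pi fun _ : Fin n => ν)
      = ((n * n - n : ℕ) : ℝ≥0∞) * (ν.prod ν) {q : ℝ × ℝ | g q.1 q.2} := by
  classical
  have hmeasp : ∀ p : Fin n × Fin n, Measurable fun ω : Fin n → ℝ => (ω p.1, ω p.2) :=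
    fun p => (measurable_pi_apply p.1).prodMk (measurable_pi_apply p.2)
  calc ∫⁻ ω, ((cnt n g ω : ℕ) : ℝ≥0∞) ∂(Measure.pi fun _ : Fin n => ν)
      = ∫⁻ ω, ∑ p ∈ (Finset.univ : Finset (Fin n)).offDiag,
          (((fun ω' : Fin n → ℝ => (ω' p.1, ω' p.2)) ⁻¹' {q : ℝ × ℝ | g q.1 q.2}).indicator
            (fun _ => (1 : ℝ≥0∞)) ω) ∂_ := by
        apply lintegral_congr; intro ω; exact cnt_cast_eq n g ω
    _ = ∑ p ∈ (Finset.univ : Finset (Fin n)).offDiag,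
          ∫⁻ ω, (((fun ω' : Fin n → ℝ => (ω' p.1, ω' p.2)) ⁻¹' {q : ℝ × ℝ | g q.1 q.2}).indicator
            (fun _ => (1 : ℝ≥0∞)) ω) ∂(Measure.pi fun _ : Fin n => ν) := by
        apply lintegral_finset_sum
        intro p _
        exact (measurable_const.indicator ((hmeasp p) hSg))
    _ = ∑ p ∈ (Finset.univ : Finset (Fin n)).offDiag,
          (ν.prod ν) {q : ℝ × ℝ | g q.1 q.2} := by
        apply Finset.sum_congr rfl
        intro p hp
        rw [Finset.mem_offDiag] at hp
        rw [lintegral_indicator ((hmeasp p) hSg)]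
        simp only [lintegral_const, Measure.restrict_apply MeasurableSet.univ, Set.univ_inter, one_mul]
        rw [← Measure.map_apply (hmeasp p) hSg, map_pair ν hp.2.2]
    _ = ((n * n - n : ℕ) : ℝ≥0∞) * (ν.prod ν) {q : ℝ × ℝ | g q.1 q.2} := by
        rw [Finset.sum_const, Finset.offDiag_card]
        simp [Finset.card_univ, nsmul_eq_mul]

lemma Ssum_eq : {q : ℝ × ℝ | (fun a b => |a + b| ≤ 1) q.1 q.2} = Ssum := rfl
lemma Sdiff_eq : {q : ℝ × ℝ | (fun a b => |a - b| ≤ 1) q.1 q.2} = Sdiff := rfl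

theorem nonstrict : (ν.prod ν) Ssum ≤ 2 * (ν.prod ν) Sdiff := by
  classical
  set I := (ν.prod ν) Ssum with hI
  set J := (ν.prod ν) Sdiff with hJ
  have hIfin : I ≠ ⊤ := (measure_lt_top _ _).ne
  have hJfin : J ≠ ⊤ := (measure_lt_top _ _).ne
  -- key ENNReal inequality for each n
  have key : ∀ n : ℕ, ((n * n - n : ℕ) : ℝ≥0∞) * I
      ≤ 2 * (((n * n - n : ℕ) : ℝ≥0∞) * J) + 4 * n := by
    intro n
    have h1 := lintegral_cnt ν n (fun a b => |a + b| ≤ 1) (Ssum_eq ▸ measSsum)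
    have h2 := lintegral_cnt ν n (fun a b => |a - b| ≤ 1) (Sdiff_eq ▸ measSdiff)
    rw [Ssum_eq] at h1
    rw [Sdiff_eq] at h2
    rw [← hI] at h1
    rw [← hJ] at h2
    calc ((n * n - n : ℕ) : ℝ≥0∞) * I
        = ∫⁻ ω, ((cnt n (fun a b => |a + b| ≤ 1) ω : ℕ) : ℝ≥0∞)
            ∂(Measure.pi fun _ : Fin n => ν) := h1.symm
      _ ≤ ∫⁻ ω, (2 * ((cnt n (fun a b => |a - b| ≤ 1) ω : ℕ) : ℝ≥0∞) + 4 * n)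
            ∂(Measure.pi fun _ : Fin n => ν) := by
          apply lintegral_mono
          intro ω
          have := cnt_sum_le ω
          have hcast : ((cnt n (fun a b => |a + b| ≤ 1) ω : ℕ) : ℝ≥0∞)
              ≤ ((2 * cnt n (fun a b => |a - b| ≤ 1) ω + 4 * n : ℕ) : ℝ≥0∞) :=
            Nat.cast_le.mpr this
          refine hcast.trans ?_
          push_cast
          ring_nf
          exact le_refl _
      _ = 2 * (((n * n - n : ℕ) : ℝ≥0∞) * J) + 4 * n := by
          rw [lintegral_add_right _ measurable_const]
          rw [lintegral_const_mul]
          · rw [h2]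
            simp [measure_univ]
          · -- measurability of cnt as fn of ω
            have : (fun ω => ((cnt n (fun a b => |a - b| ≤ 1) ω : ℕ) : ℝ≥0∞))
                = fun ω => ∑ p ∈ (Finset.univ : Finset (Fin n)).offDiag,
                  (((fun ω' : Fin n → ℝ => (ω' p.1, ω' p.2)) ⁻¹' Sdiff).indicator
                    (fun _ => (1 : ℝ≥0∞)) ω) := by
              funext ω
              exact cnt_cast_eq n _ ω
            rw [this]
            apply Finset.measurable_sum
            intro p _
            exact (measurable_const.indicator
              (((measurable_pi_apply p.1).prodMk (measurable_pi_apply p.2)) measSdiff))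
  -- pass to reals
  have keyR : ∀ n : ℕ, ((n * n - n : ℕ) : ℝ) * I.toReal
      ≤ 2 * (((n * n - n : ℕ) : ℝ) * J.toReal) + 4 * n := by
    intro n
    have h := key n
    have hc1 : ((n * n - n : ℕ) : ℝ≥0∞) ≠ ⊤ := ENNReal.natCast_ne_top _
    have hc2 : ((n : ℕ) : ℝ≥0∞) ≠ ⊤ := ENNReal.natCast_ne_top _
    have hfin1 : 2 * (((n * n - n : ℕ) : ℝ≥0∞) * J) ≠ ⊤ :=
      ENNReal.mul_ne_top (by norm_num) (ENNReal.mul_ne_top hc1 hJfin)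
    have hfin2 : (4 : ℝ≥0∞) * n ≠ ⊤ := ENNReal.mul_ne_top (by norm_num) hc2
    have hfin : (2 * (((n * n - n : ℕ) : ℝ≥0∞) * J) + 4 * n) ≠ ⊤ :=
      ENNReal.add_ne_top.mpr ⟨hfin1, hfin2⟩
    have h2 := ENNReal.toReal_mono hfin h
    rw [ENNReal.toReal_mul, ENNReal.toReal_add hfin1 hfin2, ENNReal.toReal_mul,
      ENNReal.toReal_mul, ENNReal.toReal_mul] at h2
    simp only [ENNReal.toReal_ofNat] at h2
    exact_mod_cast h2
  -- limit
  have hreal : I.toReal ≤ 2 * J.toReal := by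
    have step : ∀ ε : ℝ, 0 < ε → I.toReal ≤ 2 * J.toReal + ε := by
      intro ε hε
      obtain ⟨m, hm⟩ := exists_nat_gt (4 / ε)
      set n := m + 2 with hn
      have h := keyR n
      have h2n : 2 ≤ n := by omega
      have h1n : 1 ≤ n := by omega
      have hle : n ≤ n * n := Nat.le_mul_of_pos_left n (by omega)
      have hnnR : ((n * n - n : ℕ) : ℝ) = (n : ℝ) * ((n : ℝ) - 1) := by
        rw [Nat.cast_sub hle]
        push_cast
        ring
      have hnpos : (0 : ℝ) < (n : ℝ) := by positivity
      have hn1pos : (0 : ℝ) < (n : ℝ) - 1 := by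
        have : (2 : ℝ) ≤ (n : ℝ) := by exact_mod_cast h2n
        linarith
      have hNpos : (0 : ℝ) < (n : ℝ) * ((n : ℝ) - 1) := by positivity
      rw [hnnR] at h
      have h3 : I.toReal ≤ (2 * (((n:ℝ) * ((n:ℝ)-1)) * J.toReal) + 4 * (n:ℝ))
          / ((n:ℝ) * ((n:ℝ)-1)) := by
        rw [le_div_iff₀ hNpos]
        nlinarith [h]
      have h4 : (2 * (((n:ℝ) * ((n:ℝ)-1)) * J.toReal) + 4 * (n:ℝ))
          / ((n:ℝ) * ((n:ℝ)-1)) = 2 * J.toReal + 4 / ((n:ℝ) - 1) := by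
        field_simp
      rw [h4] at h3
      refine h3.trans ?_
      have h5 : 4 / ((n : ℝ) - 1) ≤ ε := by
        rw [div_le_iff₀ hn1pos]
        have hA : 4 / ε < (m : ℝ) := hm
        have hB : (m : ℝ) ≤ (n : ℝ) - 1 := by
          have hmn : (m : ℝ) + 1 ≤ (n : ℝ) := by exact_mod_cast (by omega : m + 1 ≤ n)
          linarith
        have hC : 4 / ε < (n : ℝ) - 1 := lt_of_lt_of_le hA hB
        have := (div_lt_iff₀ hε).mp hC
        linarith
      linarith
    exact le_of_forall_pos_le_add step
  -- back to ENNReal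
  have h2Jfin : (2 * J) ≠ ⊤ := ENNReal.mul_ne_top (by norm_num) hJfin
  rw [← ENNReal.toReal_le_toReal hIfin h2Jfin, ENNReal.toReal_mul]
  simpa using hreal



noncomputable def F (ν : Measure ℝ) (a : ℝ) : ℝ≥0∞ := ν (Set.Icc (a - 1) (a + 1))

variable (ν : Measure ℝ) [IsProbabilityMeasure ν]

lemma F_meas : Measurable (F ν) := by
  have hT : MeasurableSet {p : ℝ × ℝ | |p.2 - p.1| ≤ 1} :=
    measurableSet_le ((continuous_snd.sub continuous_fst).abs.measurable) measurable_const
  have h := measurable_measure_prodMk_left (ν := ν) hT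
  have heqf : (fun a : ℝ => ν (Prod.mk a ⁻¹' {p : ℝ × ℝ | |p.2 - p.1| ≤ 1})) = F ν := by
    funext a
    rw [F]
    congr 1
    ext y
    simp only [Set.mem_preimage, Set.mem_setOf_eq, Set.mem_Icc, abs_le]
    constructor <;> intro h' <;> exact ⟨by linarith [h'.1], by linarith [h'.2]⟩
  rw [heqf] at h
  exact h

lemma sec_sum (x : ℝ) : Prod.mk x ⁻¹' Ssum = Set.Icc ((-x) - 1) ((-x) + 1) := by
  ext y
  simp only [Set.mem_preimage, Ssum, Set.mem_setOf_eq, Set.mem_Icc, abs_le]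
  constructor <;> intro h <;> constructor <;> linarith [h.1, h.2]

lemma sec_diff (x : ℝ) : Prod.mk x ⁻¹' Sdiff = Set.Icc (x - 1) (x + 1) := by
  ext y
  simp only [Set.mem_preimage, Sdiff, Set.mem_setOf_eq, Set.mem_Icc, abs_le]
  constructor <;> intro h <;> constructor <;> linarith [h.1, h.2]

lemma I_formula : (ν.prod ν) Ssum = ∫⁻ x, F ν (-x) ∂ν := by
  rw [Measure.prod_apply measSsum]
  apply lintegral_congr
  intro x
  rw [sec_sum, F]

lemma J_formula : (ν.prod ν) Sdiff = ∫⁻ x, F ν x ∂ν := by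
  rw [Measure.prod_apply measSdiff]
  apply lintegral_congr
  intro x
  rw [sec_diff, F]

/-- decomposition of the product of a mixture measure on a measurable set -/
lemma prod_mix_apply (a : ℝ) (t : ℝ≥0∞) {S : Set (ℝ×ℝ)} (hS : MeasurableSet S) :
    (((1-t) • ν + t • Measure.dirac a).prod ((1-t) • ν + t • Measure.dirac a)) S
    = (1-t)*(1-t) * (ν.prod ν) S
      + (1-t)*t * ν ((fun x => (x, a)) ⁻¹' S)
      + (t*(1-t) * ν (Prod.mk a ⁻¹' S)
      + t*t * (S.indicator 1 (a,a))) := by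
  classical
  set δ := Measure.dirac a with hδ
  have hsec : ∀ x : ℝ, MeasurableSet (Prod.mk x ⁻¹' S) := fun x => measurable_prodMk_left hS
  have hmix : SFinite ((1-t) • ν + t • δ) := by infer_instance
  rw [Measure.prod_apply hS]
  have happ : ∀ x : ℝ, ((1-t) • ν + t • δ) (Prod.mk x ⁻¹' S)
      = (1-t) * ν (Prod.mk x ⁻¹' S) + t * δ (Prod.mk x ⁻¹' S) := by
    intro x
    simp [Measure.add_apply, Measure.smul_apply, smul_eq_mul]
  rw [lintegral_congr happ]
  rw [lintegral_add_measure, lintegral_smul_measure, lintegral_smul_measure]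
  have hm1 : Measurable fun x : ℝ => ν (Prod.mk x ⁻¹' S) := measurable_measure_prodMk_left hS
  have hm2 : Measurable fun x : ℝ => δ (Prod.mk x ⁻¹' S) := by
    rw [hδ]; exact measurable_measure_prodMk_left hS
  rw [lintegral_add_left (hm1.const_mul _), lintegral_const_mul _ hm1, lintegral_const_mul _ hm2]
  rw [hδ, lintegral_dirac]
  -- evaluate pieces
  have e1 : ∫⁻ x, ν (Prod.mk x ⁻¹' S) ∂ν = (ν.prod ν) S := (Measure.prod_apply hS).symm
  have e2 : ∫⁻ x, Measure.dirac a (Prod.mk x ⁻¹' S) ∂ν = ν ((fun x => (x, a)) ⁻¹' S) := by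
    have : ∀ x : ℝ, Measure.dirac a (Prod.mk x ⁻¹' S)
        = ((fun x : ℝ => (x, a)) ⁻¹' S).indicator (fun _ => (1:ℝ≥0∞)) x := by
      intro x
      rw [Measure.dirac_apply' _ (hsec x)]
      simp only [Set.indicator_apply, Set.mem_preimage, Pi.one_apply]
    have hpm : Measurable fun x : ℝ => (x, a) := measurable_id.prodMk measurable_const
    rw [lintegral_congr this, lintegral_indicator (hpm hS)]
    rw [setLIntegral_one]
  have e3 : Measure.dirac a (Prod.mk a ⁻¹' S) = S.indicator 1 (a, a) := by
    rw [Measure.dirac_apply' _ (hsec a)]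
    simp only [Set.indicator_apply, Set.mem_preimage, Pi.one_apply]
  rw [e1, e2, e3]
  ring

/-- the mixture is a probability measure -/
lemma mix_prob (a : ℝ) (t : ℝ≥0∞) (ht : t ≤ 1) :
    IsProbabilityMeasure ((1-t) • ν + t • Measure.dirac a) := by
  constructor
  rw [Measure.add_apply]
  simp only [Measure.smul_apply, smul_eq_mul, measure_univ, mul_one]
  exact tsub_add_cancel_of_le ht

/-- C1: pointwise inequality from equality -/
lemma C1 (heq : (ν.prod ν) Ssum = 2 * (ν.prod ν) Sdiff) (a : ℝ) :
    F ν (-a) ≤ 2 * F ν a := by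
  classical
  -- per n inequality
  have key : ∀ n : ℕ, (1 - ((n:ℝ≥0∞)+2)⁻¹) * F ν (-a)
      ≤ 2 * (1 - ((n:ℝ≥0∞)+2)⁻¹) * F ν a + ((n:ℝ≥0∞)+2)⁻¹ := by
    intro n
    set t : ℝ≥0∞ := ((n:ℝ≥0∞)+2)⁻¹ with hts
    have htle : t ≤ 1 := by
      rw [hts]
      apply ENNReal.inv_le_one.mpr
      refine le_trans (by norm_num) (le_add_self)
    have hden0 : ((n:ℝ≥0∞)+2) ≠ 0 := by
      intro hcontra
      have h2 := (add_eq_zero.mp hcontra).2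
      norm_num at h2
    have hdentop : ((n:ℝ≥0∞)+2) ≠ ⊤ :=
      ENNReal.add_ne_top.mpr ⟨ENNReal.natCast_ne_top n, by norm_num⟩
    have ht0 : t ≠ 0 := by
      rw [hts]
      exact ENNReal.inv_ne_zero.mpr hdentop
    have httop : t ≠ ⊤ := by
      rw [hts]
      exact ENNReal.inv_ne_top.mpr hden0
    haveI := mix_prob ν a t htle
    have hns := nonstrict ((1-t) • ν + t • Measure.dirac a)
    rw [prod_mix_apply ν a t measSsum, prod_mix_apply ν a t measSdiff] at hns
    -- identify cross terms
    have c1 : ν ((fun x => (x, a)) ⁻¹' Ssum) = F ν (-a) := by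
      rw [F]
      congr 1
      ext x
      simp only [Set.mem_preimage, Ssum, Set.mem_setOf_eq, Set.mem_Icc, abs_le]
      constructor <;> intro h <;> constructor <;> linarith [h.1, h.2]
    have c2 : ν (Prod.mk a ⁻¹' Ssum) = F ν (-a) := by rw [sec_sum]; rfl
    have c3 : ν ((fun x => (x, a)) ⁻¹' Sdiff) = F ν a := by
      rw [F]
      congr 1
      ext x
      simp only [Set.mem_preimage, Sdiff, Set.mem_setOf_eq, Set.mem_Icc, abs_le]
      constructor <;> intro h <;> constructor <;> linarith [h.1, h.2]
    have c4 : ν (Prod.mk a ⁻¹' Sdiff) = F ν a := by rw [sec_diff]; rfl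
    have c5 : Sdiff.indicator (1 : ℝ×ℝ → ℝ≥0∞) (a,a) = 1 := by
      rw [Set.indicator_apply]
      simp only [Sdiff, Set.mem_setOf_eq, sub_self, abs_zero]
      rw [if_pos (by norm_num)]
      rfl
    rw [c1, c2, c3, c4, c5, heq] at hns
    set q := (1-t) with hq
    set A := (ν.prod ν) Sdiff with hA
    -- hns : q*q*(2*A) + q*t*F(-a) + (t*q*F(-a) + t*t*ind) ≤ 2*(q*q*A + q*t*F a + (t*q*F a + t*t*1))
    have hAfin : A ≠ ⊤ := (measure_lt_top _ _).ne
    have hqfin : q ≠ ⊤ := by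
      rw [hq]
      exact (tsub_le_self.trans_lt (by norm_num : (1:ℝ≥0∞) < ⊤)).ne
    have hrw1 : q*q*(2*A) + q*t*F ν (-a) + (t*q*F ν (-a) + t*t*(Ssum.indicator 1 (a,a)))
        = 2*(q*q*A) + (2*(q*t)*F ν (-a) + t*t*(Ssum.indicator 1 (a,a))) := by ring
    have hrw2 : 2*(q*q*A + q*t*F ν a + (t*q*F ν a + t*t*1))
        = 2*(q*q*A) + (2*(2*(q*t)*F ν a) + 2*(t*t)) := by ring
    rw [hrw1, hrw2] at hns
    have hfin : 2*(q*q*A) ≠ ⊤ :=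
      ENNReal.mul_ne_top (by norm_num) (ENNReal.mul_ne_top (ENNReal.mul_ne_top hqfin hqfin) hAfin)
    have hns2 := (ENNReal.add_le_add_iff_left hfin).mp hns
    -- drop indicator term on left, then cancel 2t
    have hns3 : 2*(q*t)*F ν (-a) ≤ 2*(2*(q*t)*F ν a) + 2*(t*t) :=
      le_trans (le_add_right le_rfl) hns2
    have hfact : 2*(2*(q*t)*F ν a) + 2*(t*t) = (2*t) * (2*q*F ν a + t) := by ring
    have hfact2 : 2*(q*t)*F ν (-a) = (2*t) * (q * F ν (-a)) := by ring
    rw [hfact, hfact2] at hns3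
    have h2t0 : (2*t) ≠ 0 := by
      simp [ht0]
    have h2ttop : (2*t) ≠ ⊤ := ENNReal.mul_ne_top (by norm_num) httop
    have hcancel := (ENNReal.mul_le_mul_iff_right h2t0 h2ttop).mp hns3
    -- hcancel : q * F ν (-a) ≤ 2*q*F ν a + t
    calc (1 - t) * F ν (-a) = q * F ν (-a) := by rw [hq]
      _ ≤ 2*q*F ν a + t := hcancel
      _ = 2 * (1-t) * F ν a + t := by rw [hq]
  -- now pass to the limit n → ∞
  by_contra hcon
  push_neg at hcon
  -- use toReal
  have hFfin1 : F ν (-a) ≠ ⊤ := (measure_lt_top _ _).ne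
  have hFfin2 : F ν a ≠ ⊤ := (measure_lt_top _ _).ne
  have hR : ∀ n : ℕ, (1 - ((n:ℝ)+2)⁻¹) * (F ν (-a)).toReal
      ≤ 2 * (F ν a).toReal + ((n:ℝ)+2)⁻¹ := by
    intro n
    have h := key n
    have hden0 : ((n:ℝ≥0∞)+2) ≠ 0 := by
      intro hcontra
      have h2 := (add_eq_zero.mp hcontra).2
      norm_num at h2
    have hdentop : ((n:ℝ≥0∞)+2) ≠ ⊤ :=
      ENNReal.add_ne_top.mpr ⟨ENNReal.natCast_ne_top n, by norm_num⟩
    have hinvle : ((n:ℝ≥0∞)+2)⁻¹ ≤ 1 := by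
      apply ENNReal.inv_le_one.mpr
      refine le_trans (by norm_num) (le_add_self)
    have h' : (1 - ((n:ℝ≥0∞)+2)⁻¹) * F ν (-a) ≤ 2 * F ν a + ((n:ℝ≥0∞)+2)⁻¹ := by
      refine h.trans (add_le_add_left ?_ _)
      have hstep : 2 * (1 - ((n:ℝ≥0∞)+2)⁻¹) * F ν a ≤ 2 * 1 * F ν a := by
        gcongr
        exact tsub_le_self
      simpa using hstep
    have hinvtop : ((n:ℝ≥0∞)+2)⁻¹ ≠ ⊤ := ENNReal.inv_ne_top.mpr hden0
    have hfinR : (2 * F ν a + ((n:ℝ≥0∞)+2)⁻¹) ≠ ⊤ :=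
      ENNReal.add_ne_top.mpr ⟨ENNReal.mul_ne_top (by norm_num) hFfin2, hinvtop⟩
    have hmono := ENNReal.toReal_mono hfinR h'
    rw [ENNReal.toReal_mul, ENNReal.toReal_add (ENNReal.mul_ne_top (by norm_num) hFfin2)
      hinvtop, ENNReal.toReal_mul] at hmono
    have eden : ((n:ℝ≥0∞) + 2).toReal = (n:ℝ) + 2 := by
      rw [ENNReal.toReal_add (ENNReal.natCast_ne_top n) (by norm_num)]
      norm_num
    have e2 : (((n:ℝ≥0∞)+2)⁻¹).toReal = ((n:ℝ)+2)⁻¹ := by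
      rw [ENNReal.toReal_inv, eden]
    have e1 : (1 - ((n:ℝ≥0∞)+2)⁻¹).toReal = 1 - ((n:ℝ)+2)⁻¹ := by
      rw [ENNReal.toReal_sub_of_le hinvle (by norm_num), e2]
      norm_num
    rw [e1, e2] at hmono
    simpa using hmono
  -- limit: F(-a).toReal ≤ 2 F a .toReal
  have hlim : (F ν (-a)).toReal ≤ 2 * (F ν a).toReal := by
    have hb : (F ν (-a)).toReal ≤ 1 := by
      have hle1 : F ν (-a) ≤ 1 := prob_le_one
      calc (F ν (-a)).toReal ≤ (1:ℝ≥0∞).toReal := ENNReal.toReal_mono (by norm_num) hle1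
        _ = 1 := by simp
    apply le_of_forall_pos_le_add
    intro ε hε
    obtain ⟨m, hm⟩ := exists_nat_gt (2 / ε)
    have h := hR m
    have hm2 : (0:ℝ) < (m:ℝ) + 2 := by positivity
    have htpos : (0:ℝ) ≤ ((m:ℝ)+2)⁻¹ := by positivity
    have hsmall : 2*((m:ℝ)+2)⁻¹ ≤ ε := by
      rw [← div_eq_mul_inv, div_le_iff₀ hm2]
      have h1 : 2 / ε < (m:ℝ) := hm
      have h2 := (div_lt_iff₀ hε).mp h1
      nlinarith
    have hexp : (1 - ((m:ℝ)+2)⁻¹) * (F ν (-a)).toReal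
        = (F ν (-a)).toReal - ((m:ℝ)+2)⁻¹ * (F ν (-a)).toReal := by ring
    rw [hexp] at h
    have htA : ((m:ℝ)+2)⁻¹ * (F ν (-a)).toReal ≤ ((m:ℝ)+2)⁻¹ := by
      nlinarith [hb, htpos]
    linarith
  -- contradiction with hcon
  have hconR : 2 * (F ν a).toReal < (F ν (-a)).toReal := by
    have h2fin : (2 * F ν a) ≠ ⊤ := ENNReal.mul_ne_top (by norm_num) hFfin2
    have := ENNReal.toReal_strict_mono hFfin1 hcon
    rw [ENNReal.toReal_mul] at this
    simpa using this
  linarith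


/-- C2: a.e. equality -/
lemma C2 (heq : (ν.prod ν) Ssum = 2 * (ν.prod ν) Sdiff) :
    ∀ᵐ x ∂ν, F ν (-x) = 2 * F ν x := by
  have hm1 : Measurable fun x : ℝ => F ν (-x) := (F_meas ν).comp measurable_neg
  have hm2 : Measurable fun x : ℝ => 2 * F ν x := (F_meas ν).const_mul 2
  have hle : ∀ x, F ν (-x) ≤ 2 * F ν x := C1 ν heq
  have hIeq : ∫⁻ x, F ν (-x) ∂ν = ∫⁻ x, 2 * F ν x ∂ν := by
    rw [← I_formula, lintegral_const_mul _ (F_meas ν), ← J_formula, heq]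
  have hfin : ∫⁻ x, F ν (-x) ∂ν ≠ ⊤ := by
    rw [← I_formula]; exact (measure_lt_top _ _).ne
  have hsub : ∫⁻ x, (2 * F ν x - F ν (-x)) ∂ν = 0 := by
    rw [lintegral_sub hm1 hfin (Filter.Eventually.of_forall hle), ← hIeq]
    simp
  have hae := (lintegral_eq_zero_iff (hm2.sub hm1)).mp hsub
  filter_upwards [hae] with x hx
  have hx' : 2 * F ν x - F ν (-x) = 0 := hx
  exact le_antisymm (hle x) (tsub_eq_zero_iff_le.mp hx')

theorem equality_impossible (heq : (ν.prod ν) Ssum = 2 * (ν.prod ν) Sdiff) : False := by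
  classical
  set g : ℝ → ℝ≥0∞ := fun s => ν (Set.Icc s (s+1)) with hg
  set S : ℝ≥0∞ := ⨆ s, g s with hSdef
  have hgle : ∀ s, g s ≤ S := fun s => le_iSup g s
  have hSle1 : S ≤ 1 := by
    rw [hSdef]
    exact iSup_le fun s => prob_le_one
  have hSfin : S ≠ ⊤ := (hSle1.trans_lt (by norm_num)).ne
  -- S > 0
  have hSpos : 0 < S := by
    rcases eq_or_lt_of_le (zero_le : 0 ≤ S) with hS0 | h
    · exfalso
      have hcover : (Set.univ : Set ℝ) ⊆ ⋃ k : ℤ, Set.Ico (k:ℝ) (k+1) := by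
        intro x _
        exact Set.mem_iUnion.mpr ⟨⌊x⌋, Int.floor_le x, by exact_mod_cast Int.lt_floor_add_one x⟩
      have hnull : ∀ k : ℤ, ν (Set.Ico (k:ℝ) (k+1)) = 0 := by
        intro k
        have h1 : ν (Set.Ico (k:ℝ) (k+1)) ≤ g k := measure_mono Set.Ico_subset_Icc_self
        have h2 := h1.trans (hgle k)
        rw [← hS0] at h2
        exact le_antisymm h2 zero_le
      have h0 : ν (Set.univ) = 0 :=
        measure_mono_null hcover (measure_iUnion_null hnull)
      rw [measure_univ] at h0
      norm_num at h0
    · exact h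
  -- tail bound
  have htail : ∀ ε : ℝ≥0∞, 0 < ε → ∃ R : ℝ, 0 < R ∧ ∀ s : ℝ, R ≤ |s| → g s < ε := by
    intro ε hε
    have hmono : Antitone (fun n : ℕ => (Set.Icc (-(n:ℝ)) n)ᶜ) := by
      intro m n hmn
      apply Set.compl_subset_compl.mpr
      apply Set.Icc_subset_Icc
      · simp only [neg_le_neg_iff]
        exact_mod_cast hmn
      · exact_mod_cast hmn
    have hinter : ⋂ n : ℕ, (Set.Icc (-(n:ℝ)) n)ᶜ = ∅ := by
      ext x
      simp only [Set.mem_iInter, Set.mem_compl_iff, Set.mem_Icc, Set.mem_empty_iff_false,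
        iff_false, not_forall, not_not]
      obtain ⟨n, hn⟩ := exists_nat_gt |x|
      exact ⟨n, (abs_le.mp hn.le).1, (abs_le.mp hn.le).2⟩
    have htend := tendsto_measure_iInter_atTop (μ := ν)
      (s := fun n : ℕ => (Set.Icc (-(n:ℝ)) (n:ℝ))ᶜ)
      (fun n => (measurableSet_Icc (a := -(n:ℝ)) (b := (n:ℝ))).compl.nullMeasurableSet)
      hmono ⟨0, (measure_lt_top ν _).ne⟩
    rw [hinter] at htend
    have hev := htend.eventually_lt_const (by simpa [measure_empty] using hε)
    obtain ⟨n, hn⟩ := hev.exists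
    refine ⟨(n:ℝ) + 2, by positivity, ?_⟩
    intro s hs
    have hsub : Set.Icc s (s+1) ⊆ (Set.Icc (-(n:ℝ)) n)ᶜ := by
      intro x hx
      simp only [Set.mem_compl_iff, Set.mem_Icc, not_and_or, not_le]
      rcases le_or_gt ((n:ℝ)+2) s with h | h
      · right
        have := hx.1
        linarith
      · have hsneg : s ≤ -((n:ℝ)+2) := by
          rcases le_abs.mp hs with h' | h'
          · linarith
          · linarith
        left
        have := hx.2
        linarith
    exact lt_of_le_of_lt (measure_mono hsub) hn
  -- shrinking windows
  have hshrink : ∀ (c : ℝ≥0∞) (s : ℝ),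
      (∀ δ : ℝ, 0 < δ → c ≤ ν (Set.Icc (s - δ) (s + 1 + δ))) → c ≤ g s := by
    intro c s hδ
    have hmono : Antitone (fun k : ℕ => Set.Icc (s - ((k:ℝ)+1)⁻¹) (s + 1 + ((k:ℝ)+1)⁻¹)) := by
      intro m n hmn
      have h1 : ((n:ℝ)+1)⁻¹ ≤ ((m:ℝ)+1)⁻¹ := by
        have hmn' : (m:ℝ) ≤ (n:ℝ) := by exact_mod_cast hmn
        have h0 : (0:ℝ) < (m:ℝ)+1 := by positivity
        apply inv_anti₀ h0
        linarith
      apply Set.Icc_subset_Icc <;> linarith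
    have hinter : ⋂ k : ℕ, Set.Icc (s - ((k:ℝ)+1)⁻¹) (s + 1 + ((k:ℝ)+1)⁻¹) = Set.Icc s (s+1) := by
      ext x
      simp only [Set.mem_iInter, Set.mem_Icc]
      constructor
      · intro h
        constructor
        · by_contra hc
          push_neg at hc
          obtain ⟨k, hk⟩ := exists_nat_gt (s - x)⁻¹
          have hsx : 0 < s - x := by linarith
          have hinvpos : 0 < (s - x)⁻¹ := by positivity
          have hkpos : (0:ℝ) < (k:ℝ) + 1 := by positivity
          have h2 : ((k:ℝ)+1)⁻¹ < s - x := by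
            rw [inv_lt_comm₀ hkpos hsx]
            calc (s - x)⁻¹ < (k:ℝ) := hk
              _ < (k:ℝ) + 1 := by linarith
          have := (h k).1
          linarith
        · by_contra hc
          push_neg at hc
          obtain ⟨k, hk⟩ := exists_nat_gt (x - (s+1))⁻¹
          have hsx : 0 < x - (s+1) := by linarith
          have hkpos : (0:ℝ) < (k:ℝ) + 1 := by positivity
          have h2 : ((k:ℝ)+1)⁻¹ < x - (s+1) := by
            rw [inv_lt_comm₀ hkpos hsx]
            calc (x - (s+1))⁻¹ < (k:ℝ) := hk
              _ < (k:ℝ) + 1 := by linarith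
          have := (h k).2
          linarith
      · intro h k
        have hpos : (0:ℝ) < ((k:ℝ)+1)⁻¹ := by positivity
        constructor <;> linarith [h.1, h.2]
    have htend := tendsto_measure_iInter_atTop (μ := ν)
      (fun k => (measurableSet_Icc).nullMeasurableSet) hmono ⟨0, (measure_lt_top ν _).ne⟩
    rw [hinter] at htend
    exact ge_of_tendsto htend (Filter.Eventually.of_forall (fun k => hδ _ (by positivity)))
  -- attainment of the sup
  have hattain : ∃ s : ℝ, g s = S := by
    have hq : ∀ j : ℕ, ∃ q : ℝ, S - ((j:ℝ≥0∞)+1)⁻¹ < g q := by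
      intro j
      have hden0 : ((j:ℝ≥0∞)+1) ≠ 0 := by
        intro hcontra
        have h2 := (add_eq_zero.mp hcontra).2
        norm_num at h2
      have hdentop : ((j:ℝ≥0∞)+1) ≠ ⊤ :=
        ENNReal.add_ne_top.mpr ⟨ENNReal.natCast_ne_top j, by norm_num⟩
      have hlt : S - ((j:ℝ≥0∞)+1)⁻¹ < S :=
        ENNReal.sub_lt_self hSfin hSpos.ne' (ENNReal.inv_ne_zero.mpr hdentop)
      rw [hSdef] at hlt
      obtain ⟨q, hq'⟩ := lt_iSup_iff.mp hlt
      exact ⟨q, by rw [hSdef]; exact hq'⟩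
    choose q hq using hq
    have hhalfpos : 0 < S / 2 := ENNReal.half_pos hSpos.ne'
    obtain ⟨R, hRpos, hR⟩ := htail (S/2) hhalfpos
    obtain ⟨n₀, hn₀⟩ := ENNReal.exists_inv_nat_lt hhalfpos.ne'
    -- the translated sequence is bounded
    set r : ℕ → ℝ := fun j => q (j + (n₀+1)) with hr
    have hrbig : ∀ j, S/2 < g (r j) := by
      intro j
      have h1 : ((n₀:ℝ≥0∞))⁻¹ ≤ S/2 → True := fun _ => trivial
      have hc1 : (((j + (n₀+1) : ℕ):ℝ≥0∞)+1)⁻¹ ≤ ((n₀:ℝ≥0∞))⁻¹ := by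
        apply ENNReal.inv_le_inv.mpr
        calc ((n₀:ℝ≥0∞)) ≤ ((j + (n₀+1) : ℕ):ℝ≥0∞) := Nat.cast_le.mpr (by omega)
          _ ≤ _ := le_self_add
      have hc2 : S - ((n₀:ℝ≥0∞))⁻¹ ≤ S - (((j + (n₀+1) : ℕ):ℝ≥0∞)+1)⁻¹ :=
        tsub_le_tsub_left hc1 S
      have hc3 : S/2 ≤ S - ((n₀:ℝ≥0∞))⁻¹ := by
        have := tsub_le_tsub_left hn₀.le S
        calc S/2 = S - S/2 := (ENNReal.sub_half hSfin).symm
          _ ≤ S - ((n₀:ℝ≥0∞))⁻¹ := tsub_le_tsub_left hn₀.le S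
      exact lt_of_le_of_lt (hc3.trans hc2) (hq _)
    have hrmem : ∀ j, r j ∈ Set.Icc (-R) R := by
      intro j
      by_contra hcon
      have habs : R ≤ |r j| := by
        simp only [Set.mem_Icc, not_and_or, not_le] at hcon
        rcases hcon with h | h
        · rw [abs_of_neg (by linarith : r j < 0)]
          linarith
        · rw [abs_of_pos (by linarith : 0 < r j)]
          linarith
      exact absurd (hR _ habs) (not_lt.mpr (hrbig j).le)
    obtain ⟨sstar, -, φ, hφmono, hφtend⟩ :=
      tendsto_subseq_of_bounded (Metric.isBounded_Icc (-R) R) hrmem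
    refine ⟨sstar, le_antisymm (hgle _) ?_⟩
    apply hshrink
    intro δ hδ
    apply ENNReal.le_of_forall_pos_le_add
    intro ε hε hfin'
    have hε' : ((ε:ℝ≥0∞)) ≠ 0 := by
      exact_mod_cast hε.ne'
    obtain ⟨m, hm⟩ := ENNReal.exists_inv_nat_lt hε'
    obtain ⟨N, hN⟩ := Metric.tendsto_atTop.mp hφtend δ hδ
    set k := max N m with hk
    have hdist := hN k (le_max_left _ _)
    have hrk := hrbig (φ k)
    -- window inclusion
    have hsub : Set.Icc (r (φ k)) (r (φ k) + 1) ⊆ Set.Icc (sstar - δ) (sstar + 1 + δ) := by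
      have hd : |r (φ k) - sstar| < δ := by
        have : dist ((r ∘ φ) k) sstar < δ := hdist
        rwa [Real.dist_eq] at this
      have hd' := abs_lt.mp hd
      apply Set.Icc_subset_Icc <;> linarith [hd'.1, hd'.2]
    -- S ≤ g (r φk) + small ≤ ν window + ε
    have hsmall : (((φ k + (n₀+1) : ℕ):ℝ≥0∞)+1)⁻¹ ≤ (ε:ℝ≥0∞) := by
      have h1 : ((m:ℝ≥0∞)) ≤ (((φ k + (n₀+1) : ℕ):ℝ≥0∞)+1) := by
        have hmk : m ≤ φ k + (n₀+1) := by
          calc m ≤ k := le_max_right _ _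
            _ ≤ φ k := hφmono.le_apply
            _ ≤ φ k + (n₀+1) := le_self_add
        calc ((m:ℝ≥0∞)) ≤ (((φ k + (n₀+1) : ℕ)):ℝ≥0∞) := by exact_mod_cast hmk
          _ ≤ _ := le_self_add
      calc (((φ k + (n₀+1) : ℕ):ℝ≥0∞)+1)⁻¹ ≤ ((m:ℝ≥0∞))⁻¹ := ENNReal.inv_le_inv.mpr h1
        _ ≤ (ε:ℝ≥0∞) := hm.le
    calc S ≤ (S - (((φ k + (n₀+1) : ℕ):ℝ≥0∞)+1)⁻¹) + (((φ k + (n₀+1) : ℕ):ℝ≥0∞)+1)⁻¹ :=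
          le_tsub_add
      _ ≤ g (r (φ k)) + (ε:ℝ≥0∞) := add_le_add (hq _).le hsmall
      _ ≤ ν (Set.Icc (sstar - δ) (sstar + 1 + δ)) + (ε:ℝ≥0∞) :=
          add_le_add_left (measure_mono hsub) _
  -- the set of maximizers
  set Smax : Set ℝ := {s | g s = S} with hSmax
  obtain ⟨sa, hsa⟩ := hattain
  have hSmax_ne : Smax.Nonempty := ⟨sa, hsa⟩
  obtain ⟨R₁, hR₁pos, hR₁⟩ := htail S hSpos
  have hSmax_sub : Smax ⊆ Set.Icc (-R₁) R₁ := by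
    intro s hs
    by_contra hcon
    have habs : R₁ ≤ |s| := by
      simp only [Set.mem_Icc, not_and_or, not_le] at hcon
      rcases hcon with h | h
      · rw [abs_of_neg (by linarith : s < 0)]; linarith
      · rw [abs_of_pos (by linarith : 0 < s)]; linarith
    exact absurd (hR₁ s habs) (by rw [hs]; exact lt_irrefl S)
  have hbddA : BddAbove Smax := ⟨R₁, fun s hs => (hSmax_sub hs).2⟩
  have hbddB : BddBelow Smax := ⟨-R₁, fun s hs => (hSmax_sub hs).1⟩
  set s1 := sSup Smax with hs1def
  set s0 := sInf Smax with hs0def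
  have hs1mem : s1 ∈ Smax := by
    have : S ≤ g s1 := by
      apply hshrink
      intro δ hδ
      obtain ⟨s, hsmem, hslt⟩ := exists_lt_of_lt_csSup hSmax_ne (by
        show s1 - δ < s1
        linarith)
      have hsle : s ≤ s1 := le_csSup hbddA hsmem
      have hsub : Set.Icc s (s+1) ⊆ Set.Icc (s1 - δ) (s1 + 1 + δ) :=
        Set.Icc_subset_Icc (by linarith) (by linarith)
      calc S = g s := hsmem.symm
        _ ≤ _ := measure_mono hsub
    exact le_antisymm (hgle _) this
  have hs0mem : s0 ∈ Smax := by
    have : S ≤ g s0 := by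
      apply hshrink
      intro δ hδ
      obtain ⟨s, hsmem, hslt⟩ := exists_lt_of_csInf_lt hSmax_ne (by
        show s0 < s0 + δ
        linarith)
      have hsle : s0 ≤ s := csInf_le hbddB hsmem
      have hsub : Set.Icc s (s+1) ⊆ Set.Icc (s0 - δ) (s0 + 1 + δ) :=
        Set.Icc_subset_Icc (by linarith) (by linarith)
      calc S = g s := hsmem.symm
        _ ≤ _ := measure_mono hsub
    exact le_antisymm (hgle _) this
  -- the key window lemma
  have hC2 := C2 ν heq
  have hkey : ∀ s ∈ Smax, ∀ x ∈ Set.Icc s (s+1), F ν (-x) = 2 * F ν x →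
      g (-x-1) = S ∧ g (-x) = S ∧ ν {-x} = 0 := by
    intro s hs x hx hgood
    have hxIcc := Set.mem_Icc.mp hx
    have hFxS : F ν x = S := by
      have h1 : S ≤ F ν x := by
        have hsub : Set.Icc s (s+1) ⊆ Set.Icc (x-1) (x+1) :=
          Set.Icc_subset_Icc (by linarith [hxIcc.1, hxIcc.2]) (by linarith [hxIcc.1, hxIcc.2])
        calc S = g s := hs.symm
          _ ≤ ν (Set.Icc (x-1) (x+1)) := measure_mono hsub
          _ = F ν x := rfl
      have e1 : g (-x-1) = ν (Set.Icc (-x-1) (-x)) := by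
        simp only [hg]
        congr 2
        ring
      have e2 : g (-x) = ν (Set.Icc (-x) (-x+1)) := rfl
      have hsplit : F ν (-x) ≤ g (-x-1) + g (-x) := by
        rw [F, e1, e2]
        have hsub : Set.Icc (-x-1) (-x+1) ⊆ Set.Icc (-x-1) (-x) ∪ Set.Icc (-x) (-x+1) := by
          rw [Set.Icc_union_Icc_eq_Icc (by linarith) (by linarith)]
        exact (measure_mono hsub).trans (measure_union_le _ _)
      have h2 : F ν x ≤ S := by
        have h2' : 2 * F ν x ≤ 2 * S := by
          rw [← hgood]
          refine hsplit.trans ?_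
          rw [two_mul]
          exact add_le_add (hgle _) (hgle _)
        exact (ENNReal.mul_le_mul_iff_right (by norm_num) (by norm_num)).mp h2'
      exact le_antisymm h2 h1
    have hFneg : F ν (-x) = 2 * S := by rw [hgood, hFxS]
    have e1 : g (-x-1) = ν (Set.Icc (-x-1) (-x)) := by
      simp only [hg]
      congr 2
      ring
    have e2 : g (-x) = ν (Set.Icc (-x) (-x+1)) := rfl
    have hsplit : F ν (-x) ≤ g (-x-1) + g (-x) := by
      rw [F, e1, e2]
      have hsub : Set.Icc (-x-1) (-x+1) ⊆ Set.Icc (-x-1) (-x) ∪ Set.Icc (-x) (-x+1) := by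
        rw [Set.Icc_union_Icc_eq_Icc (by linarith) (by linarith)]
      exact (measure_mono hsub).trans (measure_union_le _ _)
    have hsum : S + S ≤ g (-x-1) + g (-x) := by
      calc S + S = 2 * S := (two_mul S).symm
        _ = F ν (-x) := hFneg.symm
        _ ≤ _ := hsplit
    have hH1 : g (-x-1) = S := by
      refine le_antisymm (hgle _) ?_
      have h3 : S + S ≤ g (-x-1) + S := hsum.trans (add_le_add_right (hgle _) _)
      exact (ENNReal.add_le_add_iff_right hSfin).mp h3
    have hH2 : g (-x) = S := by
      refine le_antisymm (hgle _) ?_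
      have h3 : S + S ≤ S + g (-x) := by
        refine hsum.trans ?_
        exact add_le_add_left (hgle _) _
      exact (ENNReal.add_le_add_iff_left hSfin).mp h3
    refine ⟨hH1, hH2, ?_⟩
    -- inclusion-exclusion
    have hIE := measure_union_add_inter (μ := ν) (Set.Icc (-x-1) (-x))
      (measurableSet_Icc (a := -x) (b := -x+1))
    have hU : Set.Icc (-x-1) (-x) ∪ Set.Icc (-x) (-x+1) = Set.Icc (-x-1) (-x+1) :=
      Set.Icc_union_Icc_eq_Icc (by linarith) (by linarith)
    have hInt : Set.Icc (-x-1) (-x) ∩ Set.Icc (-x) (-x+1) = {-x} := by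
      rw [Set.Icc_inter_Icc]
      have h1 : max (-x-1) (-x) = -x := max_eq_right (by linarith)
      have h2 : min (-x) (-x+1) = -x := min_eq_left (by linarith)
      rw [h1, h2, Set.Icc_self]
    rw [hU, hInt] at hIE
    have hIE2 : 2 * S + ν {-x} = 2 * S := by
      have hL : ν (Set.Icc (-x-1) (-x+1)) = 2 * S := by
        have : ν (Set.Icc (-x-1) (-x+1)) = F ν (-x) := rfl
        rw [this, hFneg]
      rw [hL] at hIE
      rw [← e1, ← e2] at hIE
      rw [hH1, hH2] at hIE
      rw [hIE, two_mul]
    have h2Sfin : (2 : ℝ≥0∞) * S ≠ ⊤ := ENNReal.mul_ne_top (by norm_num) hSfin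
    have := hIE2
    nth_rewrite 2 [← add_zero (2*S)] at this
    exact (ENNReal.add_right_inj h2Sfin).mp this
  -- good points exist in max windows
  have hwin : ∀ s ∈ Smax, ∃ x ∈ Set.Icc s (s+1), F ν (-x) = 2 * F ν x := by
    intro s hs
    by_contra hcon
    push_neg at hcon
    have hsub : Set.Icc s (s+1) ⊆ {x | ¬ (F ν (-x) = 2 * F ν x)} := fun x hx => hcon x hx
    have h0 : ν (Set.Icc s (s+1)) = 0 := measure_mono_null hsub (ae_iff.mp hC2)
    have : g s = 0 := h0
    rw [hs] at this
    exact hSpos.ne' this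
  -- constraint on good points
  have hconstraint : ∀ s ∈ Smax, ∀ x ∈ Set.Icc s (s+1), F ν (-x) = 2 * F ν x →
      (-s1 ≤ x ∧ x ≤ -s0 - 1) := by
    intro s hs x hx hgood
    obtain ⟨h1, h2, -⟩ := hkey s hs x hx hgood
    constructor
    · have := le_csSup hbddA (show (-x) ∈ Smax from h2)
      linarith
    · have := csInf_le hbddB (show (-x-1) ∈ Smax from h1)
      linarith
  -- pinch
  obtain ⟨x1, hx1mem, hx1good⟩ := hwin s1 hs1mem
  obtain ⟨x0, hx0mem, hx0good⟩ := hwin s0 hs0mem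
  have hc1 := hconstraint s1 hs1mem x1 hx1mem hx1good
  have hc0 := hconstraint s0 hs0mem x0 hx0mem hx0good
  have hx1Icc := Set.mem_Icc.mp hx1mem
  have hx0Icc := Set.mem_Icc.mp hx0mem
  have he : s1 = -s0 - 1 := by
    have h1 : s1 ≤ -s0 - 1 := by linarith [hx1Icc.1, hc1.2]
    have h2 : -s1 ≤ s0 + 1 := by linarith [hc0.1, hx0Icc.2]
    linarith
  -- atoms
  have hatom0 : S ≤ ν {-s1} := by
    have hsub : Set.Icc s0 (s0+1) ∩ {x | F ν (-x) = 2 * F ν x} ⊆ {-s1} := by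
      rintro x ⟨hxm, hxg⟩
      have hc := hconstraint s0 hs0mem x hxm hxg
      have hxIcc := Set.mem_Icc.mp hxm
      have hx : x = -s1 := le_antisymm (by linarith [hxIcc.2, he]) hc.1
      simp [hx]
    calc S = g s0 := hs0mem.symm
      _ = ν (Set.Icc s0 (s0+1)) := rfl
      _ ≤ ν (Set.Icc s0 (s0+1) ∩ {x | F ν (-x) = 2 * F ν x})
          + ν (Set.Icc s0 (s0+1) \ {x | F ν (-x) = 2 * F ν x}) :=
        measure_le_inter_add_diff _ _ _
      _ ≤ ν {-s1} + 0 := by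
          apply add_le_add (measure_mono hsub)
          apply le_of_eq
          apply measure_mono_null _ (ae_iff.mp hC2)
          intro x hx
          exact hx.2
      _ = ν {-s1} := add_zero _
  have hatom1 : S ≤ ν {s1} := by
    have hsub : Set.Icc s1 (s1+1) ∩ {x | F ν (-x) = 2 * F ν x} ⊆ {s1} := by
      rintro x ⟨hxm, hxg⟩
      have hc := hconstraint s1 hs1mem x hxm hxg
      have hxIcc := Set.mem_Icc.mp hxm
      have hx : x = s1 := le_antisymm (by linarith [hc.2, he]) hxIcc.1
      simp [hx]
    calc S = g s1 := hs1mem.symm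
      _ = ν (Set.Icc s1 (s1+1)) := rfl
      _ ≤ ν (Set.Icc s1 (s1+1) ∩ {x | F ν (-x) = 2 * F ν x})
          + ν (Set.Icc s1 (s1+1) \ {x | F ν (-x) = 2 * F ν x}) :=
        measure_le_inter_add_diff _ _ _
      _ ≤ ν {s1} + 0 := by
          apply add_le_add (measure_mono hsub)
          apply le_of_eq
          apply measure_mono_null _ (ae_iff.mp hC2)
          intro x hx
          exact hx.2
      _ = ν {s1} := add_zero _
  -- s1 is good
  have hs1good : F ν (-s1) = 2 * F ν s1 := by
    by_contra hcon
    have h0 : ν {s1} = 0 := by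
      apply measure_mono_null _ (ae_iff.mp hC2)
      intro y hy
      simp only [Set.mem_singleton_iff] at hy
      subst hy
      exact hcon
    rw [h0] at hatom1
    exact hSpos.ne' (le_antisymm hatom1 zero_le)
  obtain ⟨-, -, hnull⟩ := hkey s1 hs1mem s1 (Set.mem_Icc.mpr ⟨le_refl _, by linarith⟩) hs1good
  rw [hnull] at hatom0
  exact hSpos.ne' (le_antisymm hatom0 zero_le)

end SWmeas

end SWproof

theorem stmt0 {Ω : Type*} [MeasurableSpace Ω] (μ : Measure Ω) [IsProbabilityMeasure μ]
    (X Y : Ω → ℝ) (hX : Measurable X) (hY : Measurable Y)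
    (hindep : IndepFun X Y μ) (hid : IdentDistrib X Y μ μ) :
    μ {ω | |X ω + Y ω| ≤ 1} < 2 * μ {ω | |X ω - Y ω| ≤ 1} := by
  classical
  set ν := μ.map X with hν
  haveI : IsProbabilityMeasure ν := Measure.isProbabilityMeasure_map hX.aemeasurable
  have hmapY : μ.map Y = ν := hid.map_eq.symm
  have hpair : μ.map (fun ω => (X ω, Y ω)) = ν.prod ν := by
    have h := (ProbabilityTheory.indepFun_iff_map_prod_eq_prod_map_map
      hX.aemeasurable hY.aemeasurable).mp hindep
    rw [h, hmapY]
  have hmeas : Measurable fun ω => (X ω, Y ω) := hX.prodMk hY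
  have hS : μ {ω | |X ω + Y ω| ≤ 1} = (ν.prod ν) SWmeas.Ssum := by
    rw [← hpair, Measure.map_apply hmeas SWmeas.measSsum]
    rfl
  have hD : μ {ω | |X ω - Y ω| ≤ 1} = (ν.prod ν) SWmeas.Sdiff := by
    rw [← hpair, Measure.map_apply hmeas SWmeas.measSdiff]
    rfl
  rw [hS, hD]
  rcases lt_or_eq_of_le (SWmeas.nonstrict ν) with h | h
  · exact h
  · exact absurd h (fun h' => SWmeas.equality_impossible ν h')
end

section
/- For all real numbers a, b with 0 < b ≤ a/2, and all i.i.d. real random variables X, Y, one has P(|X+Y| ≤ b) ≤ ⌈2b/a⌉ · P(|X−Y| ≤ a), i.e. P(|X+Y| ≤ b) ≤ P(|X−Y| ≤ a). -/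
set_option maxHeartbeats 1000000
set_option linter.unusedSectionVars false

open MeasureTheory ProbabilityTheory
open scoped ENNReal NNReal

/-- AM-GM in `ℝ≥0∞`: `2 ≤ s⁻¹ * t + t⁻¹ * s` for finite nonzero `s, t`. -/
private lemma two_le_aux {s t : ℝ≥0∞} (hs0 : s ≠ 0) (hs : s ≠ ⊤) (ht0 : t ≠ 0) (ht : t ≠ ⊤) :
    2 ≤ s⁻¹ * t + t⁻¹ * s := by
  lift s to ℝ≥0 using hs
  lift t to ℝ≥0 using ht
  have hs0' : s ≠ 0 := by exact_mod_cast hs0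
  have ht0' : t ≠ 0 := by exact_mod_cast ht0
  have key : (2 : ℝ≥0) ≤ s⁻¹ * t + t⁻¹ * s := by
    have hs'' : (0 : ℝ) < (s : ℝ) := by positivity
    have ht'' : (0 : ℝ) < (t : ℝ) := by positivity
    rw [← NNReal.coe_le_coe]
    push_cast
    have h2 : (s : ℝ)⁻¹ * t + (t : ℝ)⁻¹ * s = ((t : ℝ) ^ 2 + (s : ℝ) ^ 2) / (s * t) := by
      field_simp
    rw [h2, le_div_iff₀ (by positivity)]
    nlinarith [sq_nonneg ((s : ℝ) - t)]
  calc (2 : ℝ≥0∞) = ((2 : ℝ≥0) : ℝ≥0∞) := by norm_cast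
  _ ≤ ((s⁻¹ * t + t⁻¹ * s : ℝ≥0) : ℝ≥0∞) := by exact_mod_cast key
  _ = (s : ℝ≥0∞)⁻¹ * t + (t : ℝ≥0∞)⁻¹ * s := by
      push_cast [ENNReal.coe_inv hs0', ENNReal.coe_inv ht0']
      ring

private lemma half_mul_half {u : ℝ≥0∞} (hu : u ≠ ⊤) :
    u ^ (1 / 2 : ℝ) * u ^ (1 / 2 : ℝ) = u := by
  rcases eq_or_ne u 0 with h | h
  · rw [h, ENNReal.zero_rpow_of_pos (by norm_num), mul_zero]
  · rw [← ENNReal.rpow_add _ _ h hu]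
    norm_num

private lemma sq_half (u : ℝ≥0∞) : (u ^ (1 / 2 : ℝ)) ^ (2 : ℝ) = u := by
  rw [← ENNReal.rpow_mul]
  norm_num

private lemma measT_add (c : ℝ) : MeasurableSet {z : ℝ × ℝ | |z.1 + z.2| ≤ c} :=
  (isClosed_le ((continuous_fst.add continuous_snd).abs) continuous_const).measurableSet

private lemma measT_sub (c : ℝ) : MeasurableSet {z : ℝ × ℝ | |z.1 - z.2| ≤ c} :=
  (isClosed_le ((continuous_fst.sub continuous_snd).abs) continuous_const).measurableSet

private lemma measA (x c : ℝ) : MeasurableSet {v : ℝ | |x + v| ≤ c} :=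
  (isClosed_le ((continuous_const.add continuous_id).abs) continuous_const).measurableSet

/-! Basic objects -/

private noncomputable def dd (ν : Measure ℝ) (b : ℝ) (x : ℝ) : ℝ≥0∞ := ν {v : ℝ | |x + v| ≤ b}

private noncomputable def rr (ν : Measure ℝ) (b : ℝ) (x : ℝ) : ℝ≥0∞ := dd ν b x ^ (1 / 2 : ℝ)

private noncomputable def gg (ν : Measure ℝ) (b : ℝ) (x : ℝ) : ℝ≥0∞ :=
  if dd ν b x = 0 then 0 else dd ν b x ^ (-(1 / 2) : ℝ)

private noncomputable def kk (b : ℝ) : ℝ × ℝ → ℝ≥0∞ := Set.indicator {z : ℝ × ℝ | |z.1 + z.2| ≤ b} 1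

section aux

variable (ν : Measure ℝ) [IsProbabilityMeasure ν] (b : ℝ)

private lemma meas_dd : Measurable (dd ν b) :=
  measurable_measure_prodMk_left (measT_add b)

private lemma dd_ne_top (x : ℝ) : dd ν b x ≠ ⊤ := (measure_lt_top ν _).ne

private lemma meas_rr : Measurable (rr ν b) := (meas_dd ν b).pow_const _

private lemma meas_gg : Measurable (gg ν b) :=
  Measurable.ite ((meas_dd ν b) (measurableSet_singleton 0)) measurable_const
    ((meas_dd ν b).pow_const _)

private lemma meas_kk : Measurable (kk b) := measurable_const.indicator (measT_add b)

private lemma rr_ne_top (x : ℝ) : rr ν b x ≠ ⊤ :=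
  ENNReal.rpow_ne_top_of_nonneg (by norm_num) (dd_ne_top ν b x)

private lemma rr_ne_zero {x : ℝ} (hx : dd ν b x ≠ 0) : rr ν b x ≠ 0 := by
  simp only [rr, ne_eq, ENNReal.rpow_eq_zero_iff, not_or]
  exact ⟨fun h => hx h.1, fun h => (dd_ne_top ν b x) h.1⟩

private lemma gg_eq {x : ℝ} (hx : dd ν b x ≠ 0) : gg ν b x = (rr ν b x)⁻¹ := by
  simp only [gg, rr, if_neg hx]
  rw [← ENNReal.rpow_neg]

private lemma rr_mul_rr (x : ℝ) : rr ν b x * rr ν b x = dd ν b x :=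
  half_mul_half (dd_ne_top ν b x)

private lemma kk_swap (z : ℝ × ℝ) : kk b (Prod.swap z) = kk b z := by
  have h : Prod.swap z ∈ {z : ℝ × ℝ | |z.1 + z.2| ≤ b} ↔ z ∈ {z : ℝ × ℝ | |z.1 + z.2| ≤ b} := by
    simp only [Set.mem_setOf_eq, Prod.fst_swap, Prod.snd_swap, add_comm]
  simp only [kk, Set.indicator_apply, h, Pi.one_apply]

private lemma kk_mul_kk (x y v : ℝ) :
    kk b (x, v) * kk b (y, v) =
      Set.indicator ({v : ℝ | |x + v| ≤ b} ∩ {v : ℝ | |y + v| ≤ b}) 1 v := by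
  by_cases h1 : |x + v| ≤ b <;> by_cases h2 : |y + v| ≤ b <;>
    simp [kk, Set.indicator_apply, h1, h2]

private lemma lint_kk_mul_kk (x y : ℝ) :
    ∫⁻ v, kk b (x, v) * kk b (y, v) ∂ν = ν ({v : ℝ | |x + v| ≤ b} ∩ {v : ℝ | |y + v| ≤ b}) := by
  simp_rw [kk_mul_kk]
  exact lintegral_indicator_one ((measA x b).inter (measA y b))

end aux

/-- The key pointwise bound: for each pair `(x, y)`,
`∫⁻ v, (k(x,v) g(x)) (k(y,v) g(y)) dν ≤ 1_{|x-y| ≤ a}`. -/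
private lemma inner_bound (ν : Measure ℝ) [IsProbabilityMeasure ν] {a b : ℝ}
    (h2b : 2 * b ≤ a) (x y : ℝ) :
    ∫⁻ v, (kk b (x, v) * gg ν b x) * (kk b (y, v) * gg ν b y) ∂ν ≤
      Set.indicator {z : ℝ × ℝ | |z.1 - z.2| ≤ a} 1 (x, y) := by
  have hrw : ∀ v, (kk b (x, v) * gg ν b x) * (kk b (y, v) * gg ν b y) =
      (kk b (x, v) * kk b (y, v)) * (gg ν b x * gg ν b y) := fun v =>
    mul_mul_mul_comm _ _ _ _
  simp_rw [hrw]
  have hmeas : Measurable fun v => kk b (x, v) * kk b (y, v) :=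
    ((meas_kk b).comp (measurable_const.prodMk measurable_id)).mul
      ((meas_kk b).comp (measurable_const.prodMk measurable_id))
  rw [lintegral_mul_const _ hmeas, lint_kk_mul_kk]
  set c : ℝ≥0∞ := ν ({v : ℝ | |x + v| ≤ b} ∩ {v : ℝ | |y + v| ≤ b}) with hc_def
  rcases eq_or_ne c 0 with hc | hc
  · rw [hc, zero_mul]
    exact zero_le
  · -- there is a common point, so |x - y| ≤ a
    obtain ⟨v₀, hv₀⟩ := nonempty_of_measure_ne_zero hc
    have hxy : |x - y| ≤ a := by
      have h1 : |x + v₀| ≤ b := hv₀.1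
      have h2 : |y + v₀| ≤ b := hv₀.2
      have : x - y = (x + v₀) - (y + v₀) := by ring
      rw [this]
      calc |(x + v₀) - (y + v₀)| ≤ |x + v₀| + |y + v₀| := abs_sub _ _
      _ ≤ 2 * b := by linarith
      _ ≤ a := h2b
    have hmem : (x, y) ∈ {z : ℝ × ℝ | |z.1 - z.2| ≤ a} := hxy
    have hind : Set.indicator {z : ℝ × ℝ | |z.1 - z.2| ≤ a} (1 : ℝ × ℝ → ℝ≥0∞) (x, y) = 1 :=
      Set.indicator_of_mem hmem _
    rw [hind]
    -- now show c * (g x * g y) ≤ 1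
    have hcx : c ≤ dd ν b x := measure_mono Set.inter_subset_left
    have hcy : c ≤ dd ν b y := measure_mono Set.inter_subset_right
    have hdx : dd ν b x ≠ 0 := fun h => hc (le_antisymm (h ▸ hcx) zero_le)
    have hdy : dd ν b y ≠ 0 := fun h => hc (le_antisymm (h ▸ hcy) zero_le)
    have hc_top : c ≠ ⊤ := (measure_lt_top ν _).ne
    have hhalf : c = c ^ (1 / 2 : ℝ) * c ^ (1 / 2 : ℝ) := (half_mul_half hc_top).symm
    rw [gg_eq ν b hdx, gg_eq ν b hdy, hhalf]
    have hrx : c ^ (1 / 2 : ℝ) ≤ rr ν b x := ENNReal.rpow_le_rpow hcx (by norm_num)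
    have hry : c ^ (1 / 2 : ℝ) ≤ rr ν b y := ENNReal.rpow_le_rpow hcy (by norm_num)
    calc c ^ (1 / 2 : ℝ) * c ^ (1 / 2 : ℝ) * ((rr ν b x)⁻¹ * (rr ν b y)⁻¹)
        = (c ^ (1 / 2 : ℝ) * (rr ν b x)⁻¹) * (c ^ (1 / 2 : ℝ) * (rr ν b y)⁻¹) :=
          mul_mul_mul_comm _ _ _ _
    _ ≤ (rr ν b x * (rr ν b x)⁻¹) * (rr ν b y * (rr ν b y)⁻¹) :=
          mul_le_mul' (mul_le_mul_left hrx _) (mul_le_mul_left hry _)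
    _ = 1 := by
          rw [ENNReal.mul_inv_cancel (rr_ne_zero ν b hdx) (rr_ne_top ν b x),
            ENNReal.mul_inv_cancel (rr_ne_zero ν b hdy) (rr_ne_top ν b y), one_mul]

/-- The core inequality for a probability measure `ν` on `ℝ`. -/
private theorem core_ineq (ν : Measure ℝ) [IsProbabilityMeasure ν] {a b : ℝ}
    (h2b : 2 * b ≤ a) :
    (ν.prod ν) {z : ℝ × ℝ | |z.1 + z.2| ≤ b} ≤ (ν.prod ν) {z : ℝ × ℝ | |z.1 - z.2| ≤ a} := by
  have hp_int : (ν.prod ν) {z : ℝ × ℝ | |z.1 + z.2| ≤ b} = ∫⁻ x, dd ν b x ∂ν := by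
    rw [Measure.prod_apply (measT_add b)]
    rfl
  have hp_kk : ∫⁻ z, kk b z ∂ν.prod ν = (ν.prod ν) {z : ℝ × ℝ | |z.1 + z.2| ≤ b} :=
    lintegral_indicator_one (measT_add b)
  set p : ℝ≥0∞ := (ν.prod ν) {z : ℝ × ℝ | |z.1 + z.2| ≤ b} with hp_def
  set q : ℝ≥0∞ := (ν.prod ν) {z : ℝ × ℝ | |z.1 - z.2| ≤ a} with hq_def
  have hp_top : p ≠ ⊤ := (measure_lt_top _ _).ne
  have hq_top : q ≠ ⊤ := (measure_lt_top _ _).ne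
  -- the two weighted kernels
  have hF : Measurable fun z : ℝ × ℝ => kk b z * (gg ν b z.1 * rr ν b z.2) :=
    (meas_kk b).mul (((meas_gg ν b).comp measurable_fst).mul ((meas_rr ν b).comp measurable_snd))
  have hG : Measurable fun z : ℝ × ℝ => kk b z * (gg ν b z.2 * rr ν b z.1) :=
    (meas_kk b).mul (((meas_gg ν b).comp measurable_snd).mul ((meas_rr ν b).comp measurable_fst))
  have hFG : ∫⁻ z, kk b z * (gg ν b z.2 * rr ν b z.1) ∂ν.prod ν
      = ∫⁻ z, kk b z * (gg ν b z.1 * rr ν b z.2) ∂ν.prod ν := by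
    calc ∫⁻ z, kk b z * (gg ν b z.2 * rr ν b z.1) ∂ν.prod ν
        = ∫⁻ z, kk b (Prod.swap z) * (gg ν b (Prod.swap z).1 * rr ν b (Prod.swap z).2)
            ∂ν.prod ν := by
          apply lintegral_congr
          intro z
          rw [kk_swap]
          rfl
    _ = ∫⁻ z, kk b z * (gg ν b z.1 * rr ν b z.2) ∂(ν.prod ν).map Prod.swap :=
          (lintegral_map hF measurable_swap).symm
    _ = ∫⁻ z, kk b z * (gg ν b z.1 * rr ν b z.2) ∂ν.prod ν := by rw [Measure.prod_swap]
  -- null sets where d vanishes but the kernel does not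
  have hN1 : (ν.prod ν) ({z : ℝ × ℝ | |z.1 + z.2| ≤ b} ∩ {z : ℝ × ℝ | dd ν b z.1 = 0}) = 0 := by
    have hm : MeasurableSet ({z : ℝ × ℝ | |z.1 + z.2| ≤ b} ∩ {z : ℝ × ℝ | dd ν b z.1 = 0}) :=
      (measT_add b).inter (((meas_dd ν b).comp measurable_fst) (measurableSet_singleton 0))
    rw [Measure.prod_apply hm]
    have hnull : ∀ x : ℝ,
        ν (Prod.mk x ⁻¹' ({z : ℝ × ℝ | |z.1 + z.2| ≤ b} ∩ {z : ℝ × ℝ | dd ν b z.1 = 0})) = 0 := by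
      intro x
      by_cases hx : dd ν b x = 0
      · refine le_antisymm ?_ zero_le
        refine le_trans (measure_mono (fun v hv => hv.1)) ?_
        exact le_of_eq hx
      · have : Prod.mk x ⁻¹' ({z : ℝ × ℝ | |z.1 + z.2| ≤ b} ∩ {z : ℝ × ℝ | dd ν b z.1 = 0})
            = ∅ := by
          ext v
          simp only [Set.mem_preimage, Set.mem_inter_iff, Set.mem_setOf_eq,
            Set.mem_empty_iff_false, iff_false, not_and]
          exact fun _ => hx
        rw [this, measure_empty]
    simp only [hnull, lintegral_zero]
  have hN2 : (ν.prod ν) ({z : ℝ × ℝ | |z.1 + z.2| ≤ b} ∩ {z : ℝ × ℝ | dd ν b z.2 = 0}) = 0 := by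
    have hm1 : MeasurableSet ({z : ℝ × ℝ | |z.1 + z.2| ≤ b} ∩ {z : ℝ × ℝ | dd ν b z.1 = 0}) :=
      (measT_add b).inter (((meas_dd ν b).comp measurable_fst) (measurableSet_singleton 0))
    have hset : {z : ℝ × ℝ | |z.1 + z.2| ≤ b} ∩ {z : ℝ × ℝ | dd ν b z.2 = 0} =
        Prod.swap ⁻¹' ({z : ℝ × ℝ | |z.1 + z.2| ≤ b} ∩ {z : ℝ × ℝ | dd ν b z.1 = 0}) := by
      ext z
      simp only [Set.mem_inter_iff, Set.mem_preimage, Set.mem_setOf_eq, Prod.fst_swap,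
        Prod.snd_swap]
      rw [add_comm]
    rw [hset, ← Measure.map_apply measurable_swap hm1, Measure.prod_swap, hN1]
  -- Step 1 : p ≤ ∫ F
  have hae : ∀ᵐ z ∂ν.prod ν, 2 * kk b z ≤
      kk b z * (gg ν b z.1 * rr ν b z.2) + kk b z * (gg ν b z.2 * rr ν b z.1) := by
    have hN : (ν.prod ν) (({z : ℝ × ℝ | |z.1 + z.2| ≤ b} ∩ {z : ℝ × ℝ | dd ν b z.1 = 0}) ∪
        ({z : ℝ × ℝ | |z.1 + z.2| ≤ b} ∩ {z : ℝ × ℝ | dd ν b z.2 = 0})) = 0 :=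
      le_antisymm (le_trans (measure_union_le _ _) (by rw [hN1, hN2, add_zero])) zero_le
    filter_upwards [(measure_eq_zero_iff_ae_notMem).mp hN] with z hz
    by_cases hzT : z ∈ {z : ℝ × ℝ | |z.1 + z.2| ≤ b}
    · have hz1 : dd ν b z.1 ≠ 0 := fun h => hz (Or.inl ⟨hzT, h⟩)
      have hz2 : dd ν b z.2 ≠ 0 := fun h => hz (Or.inr ⟨hzT, h⟩)
      have hkk1 : kk b z = 1 := Set.indicator_of_mem hzT _
      rw [hkk1, mul_one, one_mul, one_mul, gg_eq ν b hz1, gg_eq ν b hz2]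
      exact two_le_aux (rr_ne_zero ν b hz1) (rr_ne_top ν b z.1)
        (rr_ne_zero ν b hz2) (rr_ne_top ν b z.2)
    · have hkk0 : kk b z = 0 := Set.indicator_of_notMem hzT _
      rw [hkk0]
      simp
  have hstep1 : p ≤ ∫⁻ z, kk b z * (gg ν b z.1 * rr ν b z.2) ∂ν.prod ν := by
    have h2p : ∫⁻ z, 2 * kk b z ∂ν.prod ν = 2 * p := by
      rw [lintegral_const_mul 2 (meas_kk b), hp_kk]
    have hle := lintegral_mono_ae hae
    rw [h2p, lintegral_add_left hF, hFG, ← two_mul] at hle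
    exact (ENNReal.mul_le_mul_iff_right (by norm_num) (by norm_num)).mp hle
  -- Step 2 : ∫ F = ∫ S * r
  have hSg : Measurable fun z : ℝ × ℝ => kk b z * gg ν b z.1 :=
    (meas_kk b).mul ((meas_gg ν b).comp measurable_fst)
  have hS : Measurable fun v => ∫⁻ x, kk b (x, v) * gg ν b x ∂ν :=
    Measurable.lintegral_prod_left (f := fun x v => kk b (x, v) * gg ν b x) hSg
  have hstep2 : ∫⁻ z, kk b z * (gg ν b z.1 * rr ν b z.2) ∂ν.prod ν
      = ∫⁻ v, (∫⁻ x, kk b (x, v) * gg ν b x ∂ν) * rr ν b v ∂ν := by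
    rw [lintegral_prod_symm _ hF.aemeasurable]
    apply lintegral_congr
    intro v
    have hmeasv : Measurable fun x => kk b (x, v) * gg ν b x :=
      ((meas_kk b).comp (measurable_id.prodMk measurable_const)).mul (meas_gg ν b)
    rw [← lintegral_mul_const _ hmeasv]
    apply lintegral_congr
    intro x
    exact (mul_assoc _ _ _).symm
  -- Step 3 : Hölder
  have hpq : Real.HolderConjugate 2 2 := Real.HolderConjugate.two_two
  have hholder : ∫⁻ v, (∫⁻ x, kk b (x, v) * gg ν b x ∂ν) * rr ν b v ∂ν ≤
      (∫⁻ v, (∫⁻ x, kk b (x, v) * gg ν b x ∂ν) ^ (2 : ℝ) ∂ν) ^ (1 / 2 : ℝ) *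
        (∫⁻ v, rr ν b v ^ (2 : ℝ) ∂ν) ^ (1 / 2 : ℝ) :=
    ENNReal.lintegral_mul_le_Lp_mul_Lq ν hpq hS.aemeasurable (meas_rr ν b).aemeasurable
  have hr2 : ∫⁻ v, rr ν b v ^ (2 : ℝ) ∂ν = p := by
    rw [hp_int]
    apply lintegral_congr
    intro v
    exact sq_half _
  -- Step 4 : ∫ S² ≤ q
  have hS2 : ∫⁻ v, (∫⁻ x, kk b (x, v) * gg ν b x ∂ν) ^ (2 : ℝ) ∂ν ≤ q := by
    have hsq : ∀ v : ℝ, (∫⁻ x, kk b (x, v) * gg ν b x ∂ν) ^ (2 : ℝ) =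
        ∫⁻ w : ℝ × ℝ, (kk b (w.1, v) * gg ν b w.1) * (kk b (w.2, v) * gg ν b w.2) ∂ν.prod ν := by
      intro v
      have hmeasv : AEMeasurable (fun x => kk b (x, v) * gg ν b x) ν :=
        (((meas_kk b).comp (measurable_id.prodMk measurable_const)).mul (meas_gg ν b)).aemeasurable
      rw [lintegral_prod_mul hmeasv hmeasv]
      rw [show (2 : ℝ) = ((2 : ℕ) : ℝ) by norm_num, ENNReal.rpow_natCast, pow_two]
    simp_rw [hsq]
    -- swap the integrals
    have hmeas_big : AEMeasurable
        (Function.uncurry fun (v : ℝ) (w : ℝ × ℝ) =>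
          (kk b (w.1, v) * gg ν b w.1) * (kk b (w.2, v) * gg ν b w.2)) (ν.prod (ν.prod ν)) := by
      have m1 : Measurable fun p : ℝ × (ℝ × ℝ) => kk b (p.2.1, p.1) :=
        (meas_kk b).comp ((measurable_fst.comp measurable_snd).prodMk measurable_fst)
      have m2 : Measurable fun p : ℝ × (ℝ × ℝ) => gg ν b p.2.1 :=
        (meas_gg ν b).comp (measurable_fst.comp measurable_snd)
      have m3 : Measurable fun p : ℝ × (ℝ × ℝ) => kk b (p.2.2, p.1) :=
        (meas_kk b).comp ((measurable_snd.comp measurable_snd).prodMk measurable_fst)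
      have m4 : Measurable fun p : ℝ × (ℝ × ℝ) => gg ν b p.2.2 :=
        (meas_gg ν b).comp (measurable_snd.comp measurable_snd)
      exact ((m1.mul m2).mul (m3.mul m4)).aemeasurable
    rw [lintegral_lintegral_swap hmeas_big]
    have hq_int : ∫⁻ w : ℝ × ℝ, Set.indicator {z : ℝ × ℝ | |z.1 - z.2| ≤ a} 1 w ∂ν.prod ν = q :=
      lintegral_indicator_one (measT_sub a)
    rw [← hq_int]
    apply lintegral_mono
    intro w
    exact inner_bound ν h2b w.1 w.2
  -- Combine
  have hfinal : p ≤ q ^ (1 / 2 : ℝ) * p ^ (1 / 2 : ℝ) := by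
    calc p ≤ ∫⁻ z, kk b z * (gg ν b z.1 * rr ν b z.2) ∂ν.prod ν := hstep1
    _ = ∫⁻ v, (∫⁻ x, kk b (x, v) * gg ν b x ∂ν) * rr ν b v ∂ν := hstep2
    _ ≤ (∫⁻ v, (∫⁻ x, kk b (x, v) * gg ν b x ∂ν) ^ (2 : ℝ) ∂ν) ^ (1 / 2 : ℝ) *
        (∫⁻ v, rr ν b v ^ (2 : ℝ) ∂ν) ^ (1 / 2 : ℝ) := hholder
    _ ≤ q ^ (1 / 2 : ℝ) * p ^ (1 / 2 : ℝ) := by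
        rw [hr2]
        exact mul_le_mul_left (ENNReal.rpow_le_rpow hS2 (by norm_num)) _
  rcases eq_or_ne p 0 with hp0 | hp0
  · rw [hp0]
    exact zero_le
  · have hph : p ^ (1 / 2 : ℝ) ≤ q ^ (1 / 2 : ℝ) := by
      have hne : p ^ (1 / 2 : ℝ) ≠ 0 := by
        simp only [ne_eq, ENNReal.rpow_eq_zero_iff, not_or, not_and]
        exact ⟨fun h => absurd h hp0, fun h => absurd h hp_top⟩
      have hnt : p ^ (1 / 2 : ℝ) ≠ ⊤ := ENNReal.rpow_ne_top_of_nonneg (by norm_num) hp_top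
      refine (ENNReal.mul_le_mul_iff_left hne hnt).mp ?_
      rw [half_mul_half hp_top]
      exact hfinal
    calc p = p ^ (1 / 2 : ℝ) * p ^ (1 / 2 : ℝ) := (half_mul_half hp_top).symm
    _ ≤ q ^ (1 / 2 : ℝ) * q ^ (1 / 2 : ℝ) := mul_le_mul' hph hph
    _ = q := half_mul_half hq_top

theorem stmt2 {Ω : Type*} [MeasurableSpace Ω] (μ : Measure Ω) [IsProbabilityMeasure μ]
    (a b : ℝ) (hb : 0 < b) (hba : b ≤ a / 2)
    (X Y : Ω → ℝ) (hX : Measurable X) (hY : Measurable Y)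
    (hindep : IndepFun X Y μ) (hid : IdentDistrib X Y μ μ) :
    μ {ω | |X ω + Y ω| ≤ b} ≤ (⌈2 * b / a⌉₊ : ℝ≥0∞) * μ {ω | |X ω - Y ω| ≤ a} ∧
      μ {ω | |X ω + Y ω| ≤ b} ≤ μ {ω | |X ω - Y ω| ≤ a} := by
  have ha : 0 < a := by linarith
  set ν : Measure ℝ := μ.map X with hν_def
  haveI : IsProbabilityMeasure ν := Measure.isProbabilityMeasure_map hX.aemeasurable
  have hmap : μ.map (fun ω => (X ω, Y ω)) = ν.prod ν := by
    have h := (indepFun_iff_map_prod_eq_prod_map_map hX.aemeasurable hY.aemeasurable).mp hindep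
    rw [h, ← hid.map_eq]
  have hb_eq : μ {ω | |X ω + Y ω| ≤ b} = (ν.prod ν) {z : ℝ × ℝ | |z.1 + z.2| ≤ b} := by
    rw [← hmap, Measure.map_apply (hX.prodMk hY) (measT_add b)]
    rfl
  have ha_eq : μ {ω | |X ω - Y ω| ≤ a} = (ν.prod ν) {z : ℝ × ℝ | |z.1 - z.2| ≤ a} := by
    rw [← hmap, Measure.map_apply (hX.prodMk hY) (measT_sub a)]
    rfl
  have hcore : μ {ω | |X ω + Y ω| ≤ b} ≤ μ {ω | |X ω - Y ω| ≤ a} := by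
    rw [hb_eq, ha_eq]
    exact core_ineq ν (by linarith)
  have hceil : (⌈2 * b / a⌉₊ : ℕ) = 1 := by
    refine le_antisymm ?_ (Nat.one_le_ceil_iff.mpr (by positivity))
    rw [Nat.ceil_le]
    push_cast
    rw [div_le_one ha]
    linarith
  constructor
  · rw [hceil]
    simpa using hcore
  · exact hcore
end

section
/- Let (Ω, B) be a measurable space and f : Ω × Ω → ℝ a bounded symmetric jointly measurable function. Then the following are equivalent: (i) for every probability measure μ on B, ∬ f(x,y) dμ(x) dμ(y) > 0; (ii) for every probability measure μ on B, μ({x ∈ Ω : ∫ f(x,y) dμ(y) > 0}) > 0. -/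
open MeasureTheory ProbabilityTheory

section Stmt4Aux

variable {Ω : Type*} [MeasurableSpace Ω]

private lemma stmt4_measF (f : Ω × Ω → ℝ) (hf : Measurable f) (ν : Measure Ω) [SFinite ν] :
    Measurable fun x => ∫ y, f (x, y) ∂ν :=
  hf.stronglyMeasurable.integral_prod_right'.measurable

private lemma stmt4_intg {C : ℝ} {g : Ω → ℝ} (hg : Measurable g) (hb : ∀ x, |g x| ≤ C)
    (ν : Measure Ω) [IsFiniteMeasure ν] : Integrable g ν :=
  (integrable_const C).mono' hg.aestronglyMeasurable (ae_of_all _ fun x => by simpa using hb x)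

private lemma stmt4_boundF {C : ℝ} {g : Ω → ℝ} (hb : ∀ x, |g x| ≤ C)
    (ν : Measure Ω) [IsProbabilityMeasure ν] : |∫ x, g x ∂ν| ≤ C := by
  have h := norm_integral_le_of_norm_le_const (μ := ν) (f := g) (C := C)
    (ae_of_all _ fun x => by simpa using hb x)
  simpa [measure_univ] using h

private lemma stmt4_mix_prob {t : ℝ} (ht0 : 0 ≤ t) (ht1 : t ≤ 1)
    (ν : Measure Ω) [IsProbabilityMeasure ν] (x₀ : Ω) :
    IsProbabilityMeasure (ENNReal.ofReal (1-t) • ν + ENNReal.ofReal t • Measure.dirac x₀) := by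
  constructor
  rw [Measure.add_apply, Measure.smul_apply, Measure.smul_apply, measure_univ, measure_univ,
    smul_eq_mul, smul_eq_mul, mul_one, mul_one, ← ENNReal.ofReal_add (by linarith) ht0]
  norm_num

private lemma stmt4_mix_apply {t : ℝ} (ht0 : 0 < t) (ht1 : t < 1)
    (ν : Measure Ω) [IsProbabilityMeasure ν] (x₀ : Ω)
    {C : ℝ} {g : Ω → ℝ} (hg : Measurable g) (hb : ∀ x, |g x| ≤ C) :
    ∫ x, g x ∂(ENNReal.ofReal (1-t) • ν + ENNReal.ofReal t • Measure.dirac x₀)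
      = (1-t) * ∫ x, g x ∂ν + t * g x₀ := by
  have h1 : Integrable g (ENNReal.ofReal (1-t) • ν) := by
    rw [integrable_smul_measure (by simp [ENNReal.ofReal_eq_zero]; linarith) ENNReal.ofReal_ne_top]
    exact stmt4_intg hg hb ν
  have h2 : Integrable g (ENNReal.ofReal t • Measure.dirac x₀) := by
    rw [integrable_smul_measure (by simp [ENNReal.ofReal_eq_zero]; linarith) ENNReal.ofReal_ne_top]
    exact stmt4_intg hg hb _
  rw [integral_add_measure h1 h2, integral_smul_measure, integral_smul_measure,
    integral_dirac' g x₀ hg.stronglyMeasurable,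
    ENNReal.toReal_ofReal (by linarith), ENNReal.toReal_ofReal ht0.le, smul_eq_mul, smul_eq_mul]

private lemma stmt4_mix_I (f : Ω × Ω → ℝ) (hf : Measurable f) {C : ℝ} (hC : ∀ p, |f p| ≤ C)
    (hsymm : ∀ x y, f (x, y) = f (y, x)) {t : ℝ} (ht0 : 0 < t) (ht1 : t < 1)
    (ν : Measure Ω) [IsProbabilityMeasure ν] (x₀ : Ω) :
    (∫ x, ∫ y, f (x, y) ∂(ENNReal.ofReal (1-t) • ν + ENNReal.ofReal t • Measure.dirac x₀)
        ∂(ENNReal.ofReal (1-t) • ν + ENNReal.ofReal t • Measure.dirac x₀))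
      = (1-t)^2 * (∫ x, ∫ y, f (x, y) ∂ν ∂ν)
        + 2*t*(1-t) * (∫ y, f (x₀, y) ∂ν) + t^2 * f (x₀, x₀) := by
  set ρ := ENNReal.ofReal (1-t) • ν + ENNReal.ofReal t • Measure.dirac x₀ with hρ
  haveI : IsProbabilityMeasure ρ := stmt4_mix_prob ht0.le ht1.le ν x₀
  have hxmeas : ∀ x : Ω, Measurable fun y => f (x, y) :=
    fun x => hf.comp measurable_prodMk_left
  have hxbd : ∀ x y : Ω, |f (x, y)| ≤ C := fun x y => hC (x, y)
  have hinner : ∀ x : Ω, ∫ y, f (x, y) ∂ρ = (1-t) * (∫ y, f (x, y) ∂ν) + t * f (x, x₀) :=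
    fun x => stmt4_mix_apply ht0 ht1 ν x₀ (hxmeas x) (hxbd x)
  have hFρmeas : Measurable fun x => ∫ y, f (x, y) ∂ρ := stmt4_measF f hf ρ
  have hFρbd : ∀ x, |∫ y, f (x, y) ∂ρ| ≤ C := fun x => stmt4_boundF (hxbd x) ρ
  have hFνmeas : Measurable fun x => ∫ y, f (x, y) ∂ν := stmt4_measF f hf ν
  have hFνbd : ∀ x, |∫ y, f (x, y) ∂ν| ≤ C := fun x => stmt4_boundF (hxbd x) ν
  rw [stmt4_mix_apply ht0 ht1 ν x₀ hFρmeas hFρbd]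
  have hsplit : (fun x => ∫ y, f (x, y) ∂ρ)
      = fun x => (1-t) * (∫ y, f (x, y) ∂ν) + t * f (x, x₀) := funext hinner
  have hcol : ∀ x, f (x, x₀) = f (x₀, x) := fun x => hsymm x x₀
  have hcolmeas : Measurable fun x : Ω => f (x, x₀) :=
    hf.comp (measurable_id.prodMk measurable_const)
  have h3 : ∫ x, (∫ y, f (x, y) ∂ρ) ∂ν
      = (1-t) * (∫ x, ∫ y, f (x, y) ∂ν ∂ν) + t * (∫ y, f (x₀, y) ∂ν) := by
    rw [hsplit]
    rw [integral_add (((stmt4_intg hFνmeas hFνbd ν)).const_mul _)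
      ((stmt4_intg hcolmeas (fun x => hC (x, x₀)) ν).const_mul _),
      integral_const_mul, integral_const_mul]
    congr 1
    congr 1
    simp_rw [hcol]
  rw [h3, hinner x₀]
  ring

private lemma stmt4_arith {C η t ε : ℝ} (hη0 : 0 < η) (hηC : η ≤ C)
    (ht0 : 0 < t) (ht32 : t ≤ 1/32) (hε0 : 0 < ε)
    (h32t : 32*C^2*t = η^2) (h32e : 32*C*ε = t*η^2) :
    8*C*(t^2*(C+η) + (1-t^2)*ε) ≤ η^2*(2*t*(1-t)) := by
  have hCpos : 0 < C := lt_of_lt_of_le hη0 hηC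
  have a1 : 8*C*(t^2*(C+η)) ≤ 16*C^2*t^2 := by
    nlinarith [mul_nonneg (mul_nonneg (by linarith : (0:ℝ) ≤ 8*C) (sq_nonneg t))
      (sub_nonneg.2 hηC)]
  have a2 : 8*C*((1-t^2)*ε) ≤ 8*C*ε := by
    nlinarith [mul_nonneg (mul_nonneg (by linarith : (0:ℝ) ≤ 8*C) hε0.le) (sq_nonneg t)]
  have e : t*η^2 = 32*C^2*t^2 := by rw [← h32t]; ring
  have a3 : 8*C*ε = 8*C^2*t^2 := by
    have h := h32e.trans e
    linarith
  have rhs_eq : η^2*(2*t*(1-t)) = 64*C^2*t^2*(1-t) := by rw [← h32t]; ring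
  have a4 : 16*C^2*t^2 + 8*C^2*t^2 ≤ 64*C^2*t^2*(1-t) := by
    nlinarith [mul_nonneg (mul_nonneg (sq_nonneg C) (sq_nonneg t))
      (by linarith : (0:ℝ) ≤ 40 - 64*t)]
  rw [rhs_eq]
  linarith

set_option maxHeartbeats 1000000 in
private lemma stmt4_nonneg (f : Ω × Ω → ℝ) (hf : Measurable f) {C : ℝ} (hC0 : 0 ≤ C)
    (hC : ∀ p, |f p| ≤ C) (hsymm : ∀ x y, f (x, y) = f (y, x))
    (h2 : ∀ ν : Measure Ω, IsProbabilityMeasure ν → 0 < ν {x | 0 < ∫ y, f (x, y) ∂ν})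
    (μ : Measure Ω) (hμ : IsProbabilityMeasure μ) :
    0 ≤ ∫ x, ∫ y, f (x, y) ∂μ ∂μ := by
  by_contra hneg
  push_neg at hneg
  set S : Set ℝ :=
    {r | ∃ ν : Measure Ω, IsProbabilityMeasure ν ∧ (∫ x, ∫ y, f (x, y) ∂ν ∂ν) = r} with hS
  have hmem : ∀ (ν : Measure Ω), IsProbabilityMeasure ν →
      (∫ x, ∫ y, f (x, y) ∂ν ∂ν) ∈ S := fun ν hν => ⟨ν, hν, rfl⟩
  have hSne : S.Nonempty := ⟨_, hmem μ hμ⟩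
  have hlow : ∀ r ∈ S, -C ≤ r := by
    rintro r ⟨ν, hν, rfl⟩
    haveI := hν
    have hFbd : ∀ x, |∫ y, f (x, y) ∂ν| ≤ C := fun x => stmt4_boundF (fun y => hC (x, y)) ν
    exact (abs_le.1 (stmt4_boundF hFbd ν)).1
  have hSbd : BddBelow S := ⟨-C, hlow⟩
  set m := sInf S with hm
  have hmle : m ≤ ∫ x, ∫ y, f (x, y) ∂μ ∂μ := csInf_le hSbd (hmem μ hμ)
  have hm0 : m < 0 := lt_of_le_of_lt hmle hneg
  have hmC : -C ≤ m := le_csInf hSne hlow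
  clear_value m
  set η := -m with hη
  have hη0 : 0 < η := by rw [hη]; linarith
  have hηC : η ≤ C := by rw [hη]; linarith
  have hCpos : 0 < C := lt_of_lt_of_le hη0 hηC
  clear_value η
  set t := η^2/(32*C^2) with htdef
  set ε := t*η^2/(32*C) with hεdef
  have ht0 : 0 < t := by rw [htdef]; positivity
  have h32t : 32*C^2*t = η^2 := by rw [htdef]; field_simp
  have h32e : 32*C*ε = t*η^2 := by rw [hεdef]; field_simp
  have ht32 : t ≤ 1/32 := by
    have hsq : η^2 ≤ C^2 := by nlinarith
    by_contra hcon
    push_neg at hcon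
    nlinarith [mul_lt_mul_of_pos_left hcon (show (0:ℝ) < 32*C^2 by positivity)]
  have ht1 : t < 1 := by linarith
  have hε0 : 0 < ε := by rw [hεdef]; positivity
  have h2t : 0 < 2*t*(1-t) := by nlinarith
  clear_value t ε
  obtain ⟨r, hrS, hrlt⟩ := exists_lt_of_csInf_lt hSne (show sInf S < m + ε by rw [← hm]; linarith)
  obtain ⟨ν, hν, rfl⟩ := hrS
  haveI := hν
  have hFmeas : Measurable fun x => ∫ y, f (x, y) ∂ν := stmt4_measF f hf ν
  have hFbd : ∀ x, |∫ y, f (x, y) ∂ν| ≤ C := fun x => stmt4_boundF (fun y => hC (x, y)) ν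
  set F := fun x => ∫ y, f (x, y) ∂ν with hF
  set I := ∫ x, F x ∂ν with hI
  set B := (m - (1-t)^2*(m+ε) - t^2*C)/(2*t*(1-t)) with hB
  clear_value B
  have hpt : ∀ x₀, B ≤ F x₀ := by
    intro x₀
    haveI hρp := stmt4_mix_prob ht0.le ht1.le ν x₀
    have hge : m ≤ (1-t)^2 * I + 2*t*(1-t) * F x₀ + t^2 * f (x₀, x₀) := by
      have h := csInf_le hSbd (hmem _ hρp)
      rw [stmt4_mix_I f hf hC hsymm ht0 ht1 ν x₀, ← hm] at h
      exact h
    have e1 : 0 ≤ (1-t)^2 * ((m+ε) - I) := mul_nonneg (sq_nonneg _) (by linarith)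
    have e2 : 0 ≤ t^2 * (C - f (x₀, x₀)) :=
      mul_nonneg (sq_nonneg _) (by linarith [(abs_le.1 (hC (x₀, x₀))).2])
    rw [hB, div_le_iff₀ h2t]
    nlinarith [hge, e1, e2]
  have hBm : B ≤ m := by
    rw [hB, div_le_iff₀ h2t]
    have e3 : 0 ≤ t^2 * C := mul_nonneg (sq_nonneg _) hC0
    have e4 : 0 ≤ (1-t)^2 * ε := mul_nonneg (sq_nonneg _) hε0.le
    have e5 : m * t^2 ≤ 0 := mul_nonpos_of_nonpos_of_nonneg hm0.le (sq_nonneg t)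
    nlinarith [e3, e4, e5]
  have hdenom : η/2 ≤ m/2 - B := by rw [hη]; linarith
  have hgnn : 0 ≤ᵐ[ν] fun x => F x - B := ae_of_all _ fun x => sub_nonneg.2 (hpt x)
  have hFint : Integrable F ν := stmt4_intg hFmeas hFbd ν
  have hgint : Integrable (fun x => F x - B) ν := hFint.sub (integrable_const B)
  have hmark := mul_meas_ge_le_integral_of_nonneg hgnn hgint (m/2 - B)
  have hIsub : ∫ x, (F x - B) ∂ν = I - B := by
    rw [integral_sub hFint (integrable_const B), integral_const]
    simp [measure_univ, hI]
  rw [hIsub] at hmark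
  set G := {x | F x ≤ m/2} with hG
  have hGmeas : MeasurableSet G := measurableSet_le hFmeas measurable_const
  set θ := (ν Gᶜ).toReal with hθ
  clear_value θ
  have hθ0 : 0 ≤ θ := by rw [hθ]; exact ENNReal.toReal_nonneg
  have hGc : ν Gᶜ ≤ ν {x | m/2 - B ≤ F x - B} := by
    apply measure_mono
    intro x hx
    have hx' : m/2 < F x := by simpa [hG, not_le] using hx
    simp only [Set.mem_setOf_eq]
    linarith
  have hθub : (m/2 - B) * θ ≤ I - B := by
    refine le_trans ?_ hmark
    refine mul_le_mul_of_nonneg_left ?_ (by linarith)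
    rw [hθ]
    exact ENNReal.toReal_mono (measure_ne_top _ _) hGc
  have hne1 : t ≠ 0 := ne_of_gt ht0
  have hne2 : (1:ℝ) - t ≠ 0 := by linarith
  have hkey : (m + ε - B) * (2*t*(1-t)) = t^2*(C+η) + (1-t^2)*ε := by
    rw [hB, hη]
    field_simp
    ring
  have hnum3 : 8*C*(m + ε - B) ≤ η^2 := by
    have hq := stmt4_arith hη0 hηC ht0 ht32 hε0 h32t h32e
    rw [← hkey] at hq
    have h8C : (0:ℝ) < 8*C := by positivity
    nlinarith [hq, h2t, mul_pos h8C h2t]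
  have hθ2 : 4*C*η*θ ≤ η^2 := by
    have c1 : 8*C*((η/2) * θ) ≤ 8*C*(m + ε - B) := by
      have c0 : (η/2) * θ ≤ m + ε - B := by
        calc (η/2) * θ ≤ (m/2 - B) * θ := mul_le_mul_of_nonneg_right hdenom hθ0
          _ ≤ I - B := hθub
          _ ≤ m + ε - B := by linarith
      nlinarith [mul_nonneg (show (0:ℝ) ≤ 8*C by linarith) (sub_nonneg.2 c0)]
    nlinarith [c1, hnum3]
  have hθ3 : C * θ ≤ η/4 := by
    by_contra hcon
    push_neg at hcon
    have := mul_lt_mul_of_pos_left hcon hη0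
    nlinarith [hθ2]
  have hθ4 : θ ≤ 1/4 := by
    by_contra hcon
    push_neg at hcon
    have := mul_lt_mul_of_pos_left hcon hCpos
    nlinarith [hθ3, hηC]
  have hνG0 : ν G ≠ 0 := by
    intro h0
    have h1 : ν Gᶜ = 1 := by
      rw [measure_compl hGmeas (measure_ne_top _ _), h0, measure_univ]
      simp
    rw [hθ, h1] at hθ4
    norm_num at hθ4
  have hνGtop : ν G ≠ ⊤ := measure_ne_top _ _
  set ν' := (ν G)⁻¹ • ν.restrict G with hν'
  haveI hν'p : IsProbabilityMeasure ν' := by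
    constructor
    rw [hν', Measure.smul_apply, Measure.restrict_apply_univ, smul_eq_mul]
    exact ENNReal.inv_mul_cancel hνG0 hνGtop
  have hcGint : ∀ x, Integrable (fun y => f (x, y)) ν :=
    fun x => stmt4_intg (hf.comp measurable_prodMk_left) (fun y => hC (x, y)) ν
  have hkey2 : ∀ x ∈ G, (∫ y, f (x, y) ∂ν') ≤ 0 := by
    intro x hx
    rw [hν', integral_smul_measure, smul_eq_mul]
    apply mul_nonpos_of_nonneg_of_nonpos ENNReal.toReal_nonneg
    have hsplitc : (∫ y in G, f (x, y) ∂ν) + (∫ y in Gᶜ, f (x, y) ∂ν) = F x :=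
      integral_add_compl hGmeas (hcGint x)
    have habs : |∫ y in Gᶜ, f (x, y) ∂ν| ≤ C * θ := by
      have h := norm_integral_le_of_norm_le_const (μ := ν.restrict Gᶜ)
        (f := fun y => f (x, y)) (C := C) (ae_of_all _ fun y => by simpa using hC (x, y))
      simpa [Measure.restrict_apply_univ, hθ, measureReal_def] using h
    have hxF : F x ≤ m/2 := hx
    have hc1 := (abs_le.1 habs).1
    have hmη : m = -η := by rw [hη]; ring
    linarith [hθ3]
  have hTpos := h2 ν' hν'p
  have hTmeas : MeasurableSet {x | 0 < ∫ y, f (x, y) ∂ν'} :=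
    measurableSet_lt measurable_const (stmt4_measF f hf ν')
  have hTG : {x | 0 < ∫ y, f (x, y) ∂ν'} ∩ G = ∅ := by
    rw [Set.eq_empty_iff_forall_notMem]
    rintro x ⟨hxT, hxG⟩
    exact absurd hxT (not_lt.2 (hkey2 x hxG))
  have hT0 : ν' {x | 0 < ∫ y, f (x, y) ∂ν'} = 0 := by
    rw [hν', Measure.smul_apply, Measure.restrict_apply hTmeas, hTG]
    simp
  rw [hT0] at hTpos
  exact lt_irrefl 0 hTpos

end Stmt4Aux

theorem stmt4 {Ω : Type*} [MeasurableSpace Ω] (f : Ω × Ω → ℝ)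
    (hf : Measurable f) (hbdd : ∃ C : ℝ, ∀ p, |f p| ≤ C)
    (hsymm : ∀ x y, f (x, y) = f (y, x)) :
    (∀ μ : Measure Ω, IsProbabilityMeasure μ →
        0 < ∫ x, ∫ y, f (x, y) ∂μ ∂μ) ↔
      (∀ μ : Measure Ω, IsProbabilityMeasure μ →
        0 < μ {x | 0 < ∫ y, f (x, y) ∂μ}) := by
  obtain ⟨C₀, hC₀⟩ := hbdd
  have hC : ∀ p, |f p| ≤ |C₀| := fun p => (hC₀ p).trans (le_abs_self C₀)
  set C := |C₀| with hCdef
  have hC0 : 0 ≤ C := abs_nonneg C₀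
  constructor
  · intro h1 μ hμ
    by_contra hcon
    push_neg at hcon
    have hz : μ {x | 0 < ∫ y, f (x, y) ∂μ} = 0 := le_antisymm hcon (by simp)
    have hae : ∀ᵐ x ∂μ, (∫ y, f (x, y) ∂μ) ≤ 0 := by
      rw [ae_iff]
      simpa [not_le] using hz
    exact absurd (h1 μ hμ) (not_lt.2 (integral_nonpos_of_ae hae))
  · intro h2 μ hμ
    have hA := stmt4_nonneg f hf hC0 hC hsymm h2
    by_contra hcon
    push_neg at hcon
    have hI0 : ∫ x, ∫ y, f (x, y) ∂μ ∂μ = 0 := le_antisymm hcon (hA μ hμ)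
    have hFmeas : Measurable fun x => ∫ y, f (x, y) ∂μ := stmt4_measF f hf μ
    have hFbd : ∀ x, |∫ y, f (x, y) ∂μ| ≤ C := fun x => stmt4_boundF (fun y => hC (x, y)) μ
    have hpt : ∀ x, 0 ≤ ∫ y, f (x, y) ∂μ := by
      intro x
      by_contra hx
      push_neg at hx
      set a := -(∫ y, f (x, y) ∂μ) with ha
      clear_value a
      have ha0 : 0 < a := by rw [ha]; linarith
      set t := a/(C + 2*a) with htd
      have ht0 : 0 < t := by rw [htd]; positivity
      have ht1 : t < 1 := by
        rw [htd, div_lt_one (by linarith)]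
        linarith
      have htC : t*(C + 2*a) = a := by
        rw [htd]
        field_simp
      clear_value t
      haveI hρp := stmt4_mix_prob ht0.le ht1.le μ x
      have hge := hA _ hρp
      rw [stmt4_mix_I f hf hC hsymm ht0 ht1 μ x] at hge
      have hfxx := (abs_le.1 (hC (x, x))).2
      have hFx : (∫ y, f (x, y) ∂μ) = -a := by rw [ha]; ring
      rw [hI0, hFx] at hge
      have htC2 : t^2*C = t*a - 2*t^2*a := by linear_combination t * htC
      nlinarith [hge, mul_pos ht0 ha0, mul_nonneg (sq_nonneg t) (sub_nonneg.2 hfxx)]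
    have hFint : Integrable (fun x => ∫ y, f (x, y) ∂μ) μ := stmt4_intg hFmeas hFbd μ
    have hzero := (integral_eq_zero_iff_of_nonneg hpt hFint).mp hI0
    have hnull : μ {x | 0 < ∫ y, f (x, y) ∂μ} = 0 := by
      have hz2 := ae_iff.mp hzero
      refine measure_mono_null ?_ hz2
      intro x hx
      simp only [Set.mem_setOf_eq] at hx ⊢
      simpa using ne_of_gt hx
    have := h2 μ hμ
    rw [hnull] at this
    exact lt_irrefl 0 this
end

section
/- Let ‖·‖₁ and ‖·‖₂ be two norms on ℝ^d with closed balls B₁(r), B₂(r) centered at the origin, and let X, Y be i.i.d. ℝ^d-valued random variables. For any a, b > 0, P(‖X + Y‖₂ ≤ b) ≤ N(B₂(b), B₁(a), 1/2) · P(‖X − Y‖₁ ≤ a), where N(F, K, 1/2) = inf{|A| : F ⊆ A + (1/2)K}. -/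
open MeasureTheory ProbabilityTheory
open scoped ENNReal Pointwise

/-- The `ρ`-covering number of `F` by `K`: the least cardinality of a set `A` with
`F ⊆ A + ρ • K` (and `⊤` if no finite set works). -/
noncomputable def coverNum {E : Type*} [AddCommGroup E] [Module ℝ E]
    (F K : Set E) (ρ : ℝ) : ℕ∞ :=
  sInf {n : ℕ∞ | ∃ A : Finset E, (A.card : ℕ∞) = n ∧ F ⊆ (A : Set E) + ρ • K}

/-- `IsNorm n` asserts that `n : ℝ^d → ℝ` is a norm. -/
def IsNorm {d : ℕ} (n : (Fin d → ℝ) → ℝ) : Prop :=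
  (∀ x, n x = 0 ↔ x = 0) ∧ (∀ (c : ℝ) x, n (c • x) = |c| * n x) ∧
    ∀ x y, n (x + y) ≤ n x + n y

section Helpers

variable {d : ℕ} {n : (Fin d → ℝ) → ℝ}

lemma IsNorm.zero (h : IsNorm n) : n 0 = 0 := (h.1 0).mpr rfl

lemma IsNorm.neg_eq (h : IsNorm n) (x : Fin d → ℝ) : n (-x) = n x := by
  simpa using h.2.1 (-1) x

lemma IsNorm.nonneg (h : IsNorm n) (x : Fin d → ℝ) : 0 ≤ n x := by
  have htri := h.2.2 x (-x)
  rw [add_neg_cancel, h.zero, h.neg_eq] at htri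
  linarith

lemma IsNorm.sub_triangle (h : IsNorm n) (u w : Fin d → ℝ) : n (u - w) ≤ n u + n w := by
  have := h.2.2 u (-w)
  rw [h.neg_eq] at this
  rwa [sub_eq_add_neg]

lemma IsNorm.continuous (h : IsNorm n) : Continuous n := by
  classical
  set C : ℝ := ∑ i : Fin d, n (fun j => if i = j then 1 else 0) with hC
  have hC0 : 0 ≤ C := Finset.sum_nonneg fun i _ => h.nonneg _
  have hsum : ∀ (s : Finset (Fin d)) (f : Fin d → (Fin d → ℝ)),
      n (∑ i ∈ s, f i) ≤ ∑ i ∈ s, n (f i) := by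
    intro s
    induction s using Finset.cons_induction with
    | empty => intro f; simp [h.zero]
    | cons a s ha ih =>
        intro f
        rw [Finset.sum_cons, Finset.sum_cons]
        exact le_trans (h.2.2 _ _) (add_le_add_right (ih f) _)
  have hbound : ∀ x : Fin d → ℝ, n x ≤ C * ‖x‖ := by
    intro x
    have hx : x = ∑ i : Fin d, x i • (fun j => if i = j then (1:ℝ) else 0) :=
      pi_eq_sum_univ x
    have step1 : n x ≤ ∑ i : Fin d, n (x i • (fun j => if i = j then (1:ℝ) else 0)) := by
      nth_rewrite 1 [hx]
      exact hsum _ _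
    have step2 : ∀ i : Fin d, n (x i • (fun j => if i = j then (1:ℝ) else 0))
        ≤ ‖x‖ * n (fun j => if i = j then (1:ℝ) else 0) := by
      intro i
      rw [h.2.1]
      exact mul_le_mul_of_nonneg_right
        (by simpa [Real.norm_eq_abs] using norm_le_pi_norm x i) (h.nonneg _)
    calc n x ≤ ∑ i : Fin d, n (x i • (fun j => if i = j then (1:ℝ) else 0)) := step1
      _ ≤ ∑ i : Fin d, ‖x‖ * n (fun j => if i = j then (1:ℝ) else 0) :=
          Finset.sum_le_sum fun i _ => step2 i
      _ = C * ‖x‖ := by rw [← Finset.mul_sum, mul_comm]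
  have hlip : LipschitzWith (Real.toNNReal C) n := by
    apply LipschitzWith.of_dist_le_mul
    intro x y
    rw [Real.dist_eq, dist_eq_norm]
    have h1 : n x - n y ≤ n (x - y) := by
      have := h.2.2 (x - y) y
      rw [sub_add_cancel] at this; linarith
    have h2 : n y - n x ≤ n (x - y) := by
      have := h.2.2 (y - x) x
      rw [sub_add_cancel] at this
      have hneg : n (y - x) = n (x - y) := by
        rw [show y - x = -(x - y) by abel, h.neg_eq]
      linarith
    have habs : |n x - n y| ≤ n (x - y) := abs_le.mpr ⟨by linarith, h1⟩
    refine habs.trans ((hbound _).trans ?_)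
    rw [Real.coe_toNNReal C hC0]
  exact hlip.continuous

lemma ennreal_amgm {u v : ℝ≥0∞} (hu0 : u ≠ 0) (hut : u ≠ ⊤) (hv0 : v ≠ 0) (hvt : v ≠ ⊤) :
    (2 : ℝ≥0∞) ≤ u / v + v / u := by
  have hdiv1 : u / v ≠ ⊤ := (ENNReal.div_lt_top hut hv0).ne
  have hdiv2 : v / u ≠ ⊤ := (ENNReal.div_lt_top hvt hu0).ne
  rw [← ENNReal.ofReal_toReal (ENNReal.add_ne_top.mpr ⟨hdiv1, hdiv2⟩),
    show (2 : ℝ≥0∞) = ENNReal.ofReal 2 by norm_num]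
  apply ENNReal.ofReal_le_ofReal
  rw [ENNReal.toReal_add hdiv1 hdiv2, ENNReal.toReal_div, ENNReal.toReal_div]
  have hx : 0 < u.toReal := ENNReal.toReal_pos hu0 hut
  have hy : 0 < v.toReal := ENNReal.toReal_pos hv0 hvt
  rw [div_add_div _ _ hy.ne' hx.ne', le_div_iff₀ (by positivity)]
  nlinarith [sq_nonneg (u.toReal - v.toReal)]

/-- Key anticoncentration lemma: for `ν ⊗ ν` (i.i.d.), if `S - S ⊆ D` then
`P(X + Y ∈ S) ≤ P(X - Y ∈ D)`. -/
lemma keyA {α : Type*} [MeasurableSpace α] [AddCommGroup α]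
    (hadd : Measurable fun p : α × α => p.1 + p.2)
    (hsub : Measurable fun p : α × α => p.1 - p.2)
    (ν : Measure α) [IsProbabilityMeasure ν]
    {S D : Set α} (hS : MeasurableSet S) (hD : MeasurableSet D)
    (hSD : ∀ s ∈ S, ∀ t ∈ S, s - t ∈ D) :
    (ν.prod ν) {p : α × α | p.1 + p.2 ∈ S} ≤ (ν.prod ν) {p : α × α | p.1 - p.2 ∈ D} := by
  have hA : MeasurableSet {p : α × α | p.1 + p.2 ∈ S} := hadd hS
  have hB : MeasurableSet {p : α × α | p.1 - p.2 ∈ D} := hsub hD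
  set G : α → ℝ≥0∞ := fun x => ν {z | x + z ∈ S} with hGdef
  set H : α → ℝ≥0∞ := fun x => ν {y | x - y ∈ D} with hHdef
  have hGmeas : Measurable G := measurable_measure_prodMk_left hA
  have hHmeas : Measurable H := measurable_measure_prodMk_left hB
  have hSlice : ∀ x : α, MeasurableSet {z | x + z ∈ S} := by
    intro x
    exact (hadd.comp (measurable_const.prodMk measurable_id)) hS
  have hSliceL : ∀ z : α, MeasurableSet {x | x + z ∈ S} := by
    intro z
    exact (hadd.comp (measurable_id.prodMk measurable_const)) hS
  have hG1 : ∀ x, G x ≤ 1 := fun x => prob_le_one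
  have hkey : ∀ x z, x + z ∈ S → G z ≤ H x := by
    intro x z hxz
    refine measure_mono fun w hw => ?_
    have h1 := hSD _ hxz _ hw
    have e : (x + z) - (z + w) = x - w := by abel
    rwa [e] at h1
  have hkey2 : ∀ x z, x + z ∈ S → G x ≤ H z := fun x z hxz => hkey z x (by rwa [add_comm])
  set P : Set α := {x | 0 < G x} with hPdef
  have hPmeas : MeasurableSet P := measurableSet_lt measurable_const hGmeas
  set νP := ν.restrict P with hνP
  set k : α → α → ℝ≥0∞ := fun x z => Set.indicator S (fun _ => 1) (x + z) with hkdef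
  have hkunc : Measurable (Function.uncurry k) :=
    (measurable_const.indicator hS).comp hadd
  have hkx : ∀ x, (fun z => k x z) = Set.indicator {z | x + z ∈ S} (fun _ => (1 : ℝ≥0∞)) := by
    intro x; funext z
    by_cases hs : x + z ∈ S <;> simp [hkdef, Set.indicator_apply, Set.mem_setOf_eq, hs]
  have hkz : ∀ z, (fun x => k x z) = Set.indicator {x | x + z ∈ S} (fun _ => (1 : ℝ≥0∞)) := by
    intro z; funext x
    by_cases hs : x + z ∈ S <;> simp [hkdef, Set.indicator_apply, Set.mem_setOf_eq, hs]
  have hint_full : ∀ x, ∫⁻ z, k x z ∂ν = G x := by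
    intro x
    rw [hkx x, lintegral_indicator_const (hSlice x), one_mul]
  have hint_fullL : ∀ z, ∫⁻ x, k x z ∂ν = G z := by
    intro z
    have hset : {x | x + z ∈ S} = {w | z + w ∈ S} := by ext x; simp [add_comm]
    calc ∫⁻ x, k x z ∂ν = ν {x | x + z ∈ S} := by
          rw [show (fun x => k x z) = Set.indicator {x | x + z ∈ S} (fun _ => (1:ℝ≥0∞)) from hkz z,
            lintegral_indicator_const (hSliceL z), one_mul]
      _ = G z := by rw [hset]
  have hint_P_le : ∀ x, ∫⁻ z, k x z ∂νP ≤ G x := fun x =>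
    le_trans (lintegral_mono' Measure.restrict_le_self le_rfl) (hint_full x).le
  have hint_PL_le : ∀ z, ∫⁻ x, k x z ∂νP ≤ G z := fun z =>
    le_trans (lintegral_mono' Measure.restrict_le_self le_rfl) (hint_fullL z).le
  have hp : (ν.prod ν) {p : α × α | p.1 + p.2 ∈ S} = ∫⁻ x, G x ∂ν := by
    rw [Measure.prod_apply hA]; rfl
  have hq : (ν.prod ν) {p : α × α | p.1 - p.2 ∈ D} = ∫⁻ x, H x ∂ν := by
    rw [Measure.prod_apply hB]; rfl
  -- the "bad" set where the second coordinate has G = 0 is null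
  set W : Set (α × α) := {p : α × α | p.1 + p.2 ∈ S} ∩ {p : α × α | p.2 ∈ Pᶜ} with hWdef
  have hWmeas : MeasurableSet W := hA.inter (measurable_snd hPmeas.compl)
  have hW0 : (ν.prod ν) W = 0 := by
    rw [Measure.prod_apply_symm hWmeas]
    have hzero : ∀ z, ν ((fun x => (x, z)) ⁻¹' W) = 0 := by
      intro z
      by_cases hz : z ∈ P
      · have hempty : ((fun x => (x, z)) ⁻¹' W) = ∅ :=
          Set.eq_empty_iff_forall_notMem.mpr fun x hx => hx.2 hz
        rw [hempty, measure_empty]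
      · have hGz : G z = 0 := by
          have := hz
          simp only [hPdef, Set.mem_setOf_eq, not_lt, nonpos_iff_eq_zero] at this
          exact this
        have hsub2 : ((fun x => (x, z)) ⁻¹' W) ⊆ {w | z + w ∈ S} := by
          intro x hx
          have hx1 : x + z ∈ S := hx.1
          simpa [add_comm] using hx1
        exact le_antisymm ((measure_mono hsub2).trans hGz.le) (by simp)
    simp [hzero]
  set e : α → ℝ≥0∞ := fun x => ∫⁻ z in Pᶜ, k x z ∂ν with hedef
  have he_eq : ∀ x, e x = ν ((Prod.mk x) ⁻¹' W) := by
    intro x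
    rw [hedef]
    simp only
    rw [hkx x, lintegral_indicator_const (hSlice x), one_mul,
      Measure.restrict_apply (hSlice x)]
    congr 1
    try ext z
    try simp [hWdef, Set.mem_setOf_eq]
  have he_int : ∫⁻ x, e x ∂ν = 0 := by
    calc ∫⁻ x, e x ∂ν = ∫⁻ x, ν ((Prod.mk x) ⁻¹' W) ∂ν := by
          refine lintegral_congr fun x => he_eq x
      _ = (ν.prod ν) W := (Measure.prod_apply hWmeas).symm
      _ = 0 := hW0
  -- Step A : p ≤ double integral over P × P
  have hPc : ∫⁻ x in Pᶜ, G x ∂ν = 0 := by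
    have hz : ∀ x ∈ Pᶜ, G x = 0 := by
      intro x hx
      simp only [hPdef, Set.mem_compl_iff, Set.mem_setOf_eq, not_lt, nonpos_iff_eq_zero] at hx
      exact hx
    calc ∫⁻ x in Pᶜ, G x ∂ν = ∫⁻ _ in Pᶜ, 0 ∂ν := by
          refine setLIntegral_congr_fun hPmeas.compl hz
      _ = 0 := by simp
  have hmeas_inner : Measurable fun x => ∫⁻ z, k x z ∂νP :=
    Measurable.lintegral_prod_right hkunc
  have stepA : ∫⁻ x, G x ∂ν ≤ ∫⁻ x, (∫⁻ z, k x z ∂νP) ∂νP := by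
    have h1 : ∫⁻ x, G x ∂ν = ∫⁻ x in P, G x ∂ν := by
      rw [← lintegral_add_compl G hPmeas, hPc, add_zero]
    have h2 : ∀ x, G x ≤ (∫⁻ z, k x z ∂νP) + e x := by
      intro x
      rw [← hint_full x, ← lintegral_add_compl (k x) hPmeas]
    rw [h1]
    calc ∫⁻ x in P, G x ∂ν ≤ ∫⁻ x in P, ((∫⁻ z, k x z ∂νP) + e x) ∂ν :=
          lintegral_mono h2
      _ = ∫⁻ x in P, (∫⁻ z, k x z ∂νP) ∂ν + ∫⁻ x in P, e x ∂ν :=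
          lintegral_add_left hmeas_inner _
      _ ≤ ∫⁻ x in P, (∫⁻ z, k x z ∂νP) ∂ν + ∫⁻ x, e x ∂ν := by
          gcongr
          exact Measure.restrict_le_self
      _ = ∫⁻ x, (∫⁻ z, k x z ∂νP) ∂νP := by rw [he_int, add_zero]
  -- Step B : AM-GM
  have hGfin : ∀ x, G x ≠ ⊤ := fun x => ((hG1 x).trans_lt ENNReal.one_lt_top).ne
  have hpoint : ∀ x ∈ P, ∀ z ∈ P,
      2 * k x z ≤ k x z * (H x / G x) + k x z * (H z / G z) := by
    intro x hx z hz
    by_cases hs : x + z ∈ S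
    · have hk1 : k x z = 1 := by simp [hkdef, Set.indicator_of_mem hs]
      rw [hk1, mul_one, one_mul, one_mul]
      have hGx0 : G x ≠ 0 := (show 0 < G x from hx).ne'
      have hGz0 : G z ≠ 0 := (show 0 < G z from hz).ne'
      refine le_trans (ennreal_amgm hGz0 (hGfin z) hGx0 (hGfin x)) ?_
      exact add_le_add (ENNReal.div_le_div_right (hkey x z hs) _)
        (ENNReal.div_le_div_right (hkey2 x z hs) _)
    · have hk0 : k x z = 0 := by simp [hkdef, Set.indicator_of_notMem hs]
      simp [hk0]
  -- J1
  have J1 : ∫⁻ x, (∫⁻ z, k x z * (H x / G x) ∂νP) ∂νP ≤ ∫⁻ x, H x ∂ν := by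
    have step : ∀ x ∈ P, ∫⁻ z, k x z * (H x / G x) ∂νP ≤ H x := by
      intro x hx
      have hGx0 : G x ≠ 0 := (show 0 < G x from hx).ne'
      rw [lintegral_mul_const _ (hkunc.of_uncurry_left)]
      calc (∫⁻ z, k x z ∂νP) * (H x / G x) ≤ G x * (H x / G x) :=
            mul_le_mul_left (hint_P_le x) _
        _ = H x * ((G x)⁻¹ * G x) := by rw [div_eq_mul_inv]; ring
        _ = H x := by rw [ENNReal.inv_mul_cancel hGx0 (hGfin x), mul_one]
    calc ∫⁻ x, (∫⁻ z, k x z * (H x / G x) ∂νP) ∂νP ≤ ∫⁻ x, H x ∂νP := by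
          refine lintegral_mono_ae ?_
          exact (ae_restrict_iff' hPmeas).mpr (ae_of_all _ step)
      _ ≤ ∫⁻ x, H x ∂ν := lintegral_mono' Measure.restrict_le_self le_rfl
  -- J2 (by symmetry, after swapping)
  have J2 : ∫⁻ x, (∫⁻ z, k x z * (H z / G z) ∂νP) ∂νP ≤ ∫⁻ x, H x ∂ν := by
    have hmeasHG : Measurable fun p : α × α => H p.2 / G p.2 :=
      (hHmeas.comp measurable_snd).div (hGmeas.comp measurable_snd)
    have hswap : ∫⁻ x, (∫⁻ z, k x z * (H z / G z) ∂νP) ∂νP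
        = ∫⁻ z, (∫⁻ x, k x z * (H z / G z) ∂νP) ∂νP := by
      exact lintegral_lintegral_swap (μ := νP) (ν := νP)
        (f := fun x z => k x z * (H z / G z)) (hkunc.mul hmeasHG).aemeasurable
    rw [hswap]
    have step : ∀ z ∈ P, ∫⁻ x, k x z * (H z / G z) ∂νP ≤ H z := by
      intro z hz
      have hGz0 : G z ≠ 0 := (show 0 < G z from hz).ne'
      rw [lintegral_mul_const _ (hkunc.of_uncurry_right)]
      calc (∫⁻ x, k x z ∂νP) * (H z / G z) ≤ G z * (H z / G z) :=
            mul_le_mul_left (hint_PL_le z) _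
        _ = H z * ((G z)⁻¹ * G z) := by rw [div_eq_mul_inv]; ring
        _ = H z := by rw [ENNReal.inv_mul_cancel hGz0 (hGfin z), mul_one]
    calc ∫⁻ z, (∫⁻ x, k x z * (H z / G z) ∂νP) ∂νP ≤ ∫⁻ z, H z ∂νP := by
          refine lintegral_mono_ae ?_
          exact (ae_restrict_iff' hPmeas).mpr (ae_of_all _ step)
      _ ≤ ∫⁻ x, H x ∂ν := lintegral_mono' Measure.restrict_le_self le_rfl
  -- combine
  have hmeas1 : Measurable (Function.uncurry fun x z => k x z * (H x / G x)) :=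
    hkunc.mul ((hHmeas.comp measurable_fst).div (hGmeas.comp measurable_fst))
  have hmeas1' : Measurable fun x => ∫⁻ z, k x z * (H x / G x) ∂νP :=
    Measurable.lintegral_prod_right hmeas1
  have hBB : 2 * (∫⁻ x, (∫⁻ z, k x z ∂νP) ∂νP) ≤ 2 * ∫⁻ x, H x ∂ν := by
    have hstep : 2 * (∫⁻ x, (∫⁻ z, k x z ∂νP) ∂νP)
        ≤ ∫⁻ x, (∫⁻ z, k x z * (H x / G x) ∂νP) ∂νP
          + ∫⁻ x, (∫⁻ z, k x z * (H z / G z) ∂νP) ∂νP := by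
      rw [← lintegral_const_mul 2 hmeas_inner]
      rw [← lintegral_add_left hmeas1']
      refine lintegral_mono_ae ?_
      refine (ae_restrict_iff' hPmeas).mpr (ae_of_all _ fun x hx => ?_)
      rw [← lintegral_const_mul 2 (hkunc.of_uncurry_left)]
      rw [← lintegral_add_left (f := fun z => k x z * (H x / G x)) (hkunc.of_uncurry_left.mul
        ((measurable_const : Measurable fun _ : α => H x / G x)))]
      · refine lintegral_mono_ae ?_
        refine (ae_restrict_iff' hPmeas).mpr (ae_of_all _ fun z hz => ?_)
        exact hpoint x hx z hz
    refine hstep.trans ?_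
    rw [two_mul]
    exact add_le_add J1 J2
  rw [hp, hq]
  have hfinal : 2 * (∫⁻ x, G x ∂ν) ≤ 2 * ∫⁻ x, H x ∂ν :=
    le_trans (mul_le_mul_right stepA 2) hBB
  exact (ENNReal.mul_le_mul_iff_right (by norm_num) (by norm_num)).mp hfinal

end Helpers

theorem stmt7 {d : ℕ} (n₁ n₂ : (Fin d → ℝ) → ℝ) (hn₁ : IsNorm n₁) (hn₂ : IsNorm n₂)
    {Ω : Type*} [MeasurableSpace Ω] (μ : Measure Ω) [IsProbabilityMeasure μ]
    (X Y : Ω → (Fin d → ℝ)) (hX : Measurable X) (hY : Measurable Y)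
    (hindep : IndepFun X Y μ) (hid : IdentDistrib X Y μ μ)
    (a b : ℝ) (ha : 0 < a) (hb : 0 < b) :
    μ {ω | n₂ (X ω + Y ω) ≤ b} ≤
      (coverNum {x | n₂ x ≤ b} {x | n₁ x ≤ a} (1 / 2) : ℝ≥0∞) *
        μ {ω | n₁ (X ω - Y ω) ≤ a} := by
  classical
  have hn₁c : Continuous n₁ := hn₁.continuous
  have hn₂c : Continuous n₂ := hn₂.continuous
  set ν : Measure (Fin d → ℝ) := μ.map X with hν
  haveI : IsProbabilityMeasure ν := Measure.isProbabilityMeasure_map hX.aemeasurable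
  have hXY : Measurable fun ω => (X ω, Y ω) := hX.prodMk hY
  have hjoint : μ.map (fun ω => (X ω, Y ω)) = ν.prod ν := by
    rw [(indepFun_iff_map_prod_eq_prod_map_map hX.aemeasurable hY.aemeasurable).mp hindep,
      ← hid.map_eq]
  have hadd : Measurable fun p : (Fin d → ℝ) × (Fin d → ℝ) => p.1 + p.2 :=
    (continuous_fst.add continuous_snd).measurable
  have hsub : Measurable fun p : (Fin d → ℝ) × (Fin d → ℝ) => p.1 - p.2 :=
    (continuous_fst.sub continuous_snd).measurable
  have hmEvL : MeasurableSet {p : (Fin d → ℝ) × (Fin d → ℝ) | n₂ (p.1 + p.2) ≤ b} :=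
    measurableSet_le ((hn₂c.measurable).comp hadd) measurable_const
  have hmEvR : MeasurableSet {p : (Fin d → ℝ) × (Fin d → ℝ) | n₁ (p.1 - p.2) ≤ a} :=
    measurableSet_le ((hn₁c.measurable).comp hsub) measurable_const
  have hL : μ {ω | n₂ (X ω + Y ω) ≤ b}
      = (ν.prod ν) {p | n₂ (p.1 + p.2) ≤ b} := by
    rw [← hjoint, Measure.map_apply hXY hmEvL]; rfl
  have hR : μ {ω | n₁ (X ω - Y ω) ≤ a}
      = (ν.prod ν) {p | n₁ (p.1 - p.2) ≤ a} := by
    rw [← hjoint, Measure.map_apply hXY hmEvR]; rfl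
  -- positivity of the RHS probability
  have hq0 : 0 < (ν.prod ν) {p | n₁ (p.1 - p.2) ≤ a} := by
    obtain ⟨s, hsc, hsd⟩ := TopologicalSpace.exists_countable_dense (Fin d → ℝ)
    set B : (Fin d → ℝ) → Set (Fin d → ℝ) := fun c => {x | n₁ (x - c) ≤ a / 2} with hB
    have hcov : (Set.univ : Set (Fin d → ℝ)) ⊆ ⋃ c ∈ s, B c := by
      intro x _
      have hU : IsOpen {y : Fin d → ℝ | n₁ (x - y) < a / 2} :=
        isOpen_lt (hn₁c.comp (continuous_const.sub continuous_id)) continuous_const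
      have hne : {y : Fin d → ℝ | n₁ (x - y) < a / 2}.Nonempty :=
        ⟨x, by simp [Set.mem_setOf_eq, sub_self, hn₁.zero, half_pos ha]⟩
      obtain ⟨c, hcs, hc⟩ := hsd.exists_mem_open hU hne
      refine Set.mem_biUnion hcs ?_
      show n₁ (x - c) ≤ a / 2
      exact le_of_lt hc
    have hne0 : ν (⋃ c ∈ s, B c) ≠ 0 := by
      intro h0
      have h1 : (1 : ℝ≥0∞) ≤ 0 := by
        calc (1 : ℝ≥0∞) = ν Set.univ := (measure_univ).symm
          _ ≤ ν (⋃ c ∈ s, B c) := measure_mono hcov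
          _ = 0 := h0
      simp at h1
    obtain ⟨c, hcs, hc⟩ : ∃ c ∈ s, ν (B c) ≠ 0 := by
      by_contra hcon
      push_neg at hcon
      exact hne0 ((measure_biUnion_null_iff hsc).mpr hcon)
    have hsubset : B c ×ˢ B c ⊆ {p : (Fin d → ℝ) × (Fin d → ℝ) | n₁ (p.1 - p.2) ≤ a} := by
      rintro ⟨x, y⟩ ⟨hx, hy⟩
      simp only [hB, Set.mem_setOf_eq] at hx hy ⊢
      have hxy : x - y = (x - c) - (y - c) := (sub_sub_sub_cancel_right x y c).symm
      rw [hxy]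
      have := hn₁.sub_triangle (x - c) (y - c)
      linarith
    calc (0 : ℝ≥0∞) < ν (B c) * ν (B c) :=
          ENNReal.mul_pos hc hc
      _ = (ν.prod ν) (B c ×ˢ B c) := (Measure.prod_prod _ _).symm
      _ ≤ _ := measure_mono hsubset
  rcases eq_or_ne (coverNum {x | n₂ x ≤ b} {x | n₁ x ≤ a} ((1 : ℝ) / 2)) ⊤ with htop | hne
  · rw [htop, ENat.toENNReal_top, hR, ENNReal.top_mul hq0.ne']
    exact le_top
  · -- extract a minimal cover
    set T : Set ℕ∞ := {m : ℕ∞ | ∃ A : Finset (Fin d → ℝ), (A.card : ℕ∞) = m ∧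
      {x | n₂ x ≤ b} ⊆ (A : Set (Fin d → ℝ)) + ((1 : ℝ) / 2) • {x | n₁ x ≤ a}} with hT
    have hcN : coverNum {x | n₂ x ≤ b} {x | n₁ x ≤ a} ((1 : ℝ) / 2) = sInf T := rfl
    rw [hcN] at hne ⊢
    obtain ⟨kk, hkk⟩ := WithTop.ne_top_iff_exists.mp hne
    have hlt : sInf T < (↑(kk + 1) : ℕ∞) := by
      rw [← hkk]
      exact Nat.cast_lt.mpr (by omega)
    obtain ⟨m, hmT, hmlt⟩ := sInf_lt_iff.mp hlt
    have hmne : m ≠ ⊤ := by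
      intro h
      rw [h] at hmlt
      exact absurd hmlt (by simp)
    obtain ⟨j, rfl⟩ := WithTop.ne_top_iff_exists.mp hmne
    have hjk : j ≤ kk := by
      have h2 : j < kk + 1 := Nat.cast_lt.mp hmlt
      omega
    have hmeq : (↑j : ℕ∞) = sInf T := by
      refine le_antisymm ?_ (sInf_le hmT)
      rw [← hkk]
      exact Nat.cast_le.mpr hjk
    obtain ⟨A, hAcard, hAcover⟩ := hmT
    rw [hL, hR]
    have hcover2 : {p : (Fin d → ℝ) × (Fin d → ℝ) | n₂ (p.1 + p.2) ≤ b} ⊆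
        ⋃ z ∈ A, {p : (Fin d → ℝ) × (Fin d → ℝ) | n₁ (p.1 + p.2 - z) ≤ a / 2} := by
      intro p hp
      have hx := hAcover hp
      rw [Set.mem_add] at hx
      obtain ⟨z, hzA, v, hv, hzv⟩ := hx
      obtain ⟨u, hu, huv⟩ := Set.mem_smul_set.mp hv
      refine Set.mem_biUnion hzA ?_
      have hpv : p.1 + p.2 - z = v := by rw [← hzv]; abel
      have hval : n₁ v ≤ a / 2 := by
        rw [← huv, hn₁.2.1, abs_of_pos (by norm_num : (0:ℝ) < 1/2)]
        simp only [Set.mem_setOf_eq] at hu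
        linarith
      simpa [Set.mem_setOf_eq, hpv] using hval
    have hpiece : ∀ z : Fin d → ℝ,
        (ν.prod ν) {p : (Fin d → ℝ) × (Fin d → ℝ) | n₁ (p.1 + p.2 - z) ≤ a / 2}
          ≤ (ν.prod ν) {p | n₁ (p.1 - p.2) ≤ a} := by
      intro z
      have hSm : MeasurableSet {x : Fin d → ℝ | n₁ (x - z) ≤ a / 2} :=
        measurableSet_le ((hn₁c.comp (continuous_id.sub continuous_const)).measurable)
          measurable_const
      have hDm : MeasurableSet {x : Fin d → ℝ | n₁ x ≤ a} :=
        measurableSet_le hn₁c.measurable measurable_const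
      have hSD : ∀ s' ∈ {x : Fin d → ℝ | n₁ (x - z) ≤ a / 2},
          ∀ t ∈ {x : Fin d → ℝ | n₁ (x - z) ≤ a / 2},
            s' - t ∈ {x : Fin d → ℝ | n₁ x ≤ a} := by
        intro s' hs' t ht
        simp only [Set.mem_setOf_eq] at hs' ht ⊢
        have hst : s' - t = (s' - z) - (t - z) := (sub_sub_sub_cancel_right s' t z).symm
        rw [hst]
        have := hn₁.sub_triangle (s' - z) (t - z)
        linarith
      exact keyA hadd hsub ν hSm hDm hSD
    calc (ν.prod ν) {p : (Fin d → ℝ) × (Fin d → ℝ) | n₂ (p.1 + p.2) ≤ b}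
        ≤ (ν.prod ν) (⋃ z ∈ A, {p : (Fin d → ℝ) × (Fin d → ℝ) | n₁ (p.1 + p.2 - z) ≤ a / 2}) :=
          measure_mono hcover2
      _ ≤ ∑ z ∈ A, (ν.prod ν) {p : (Fin d → ℝ) × (Fin d → ℝ) | n₁ (p.1 + p.2 - z) ≤ a / 2} :=
          measure_biUnion_finset_le A _
      _ ≤ ∑ _z ∈ A, (ν.prod ν) {p | n₁ (p.1 - p.2) ≤ a} :=
          Finset.sum_le_sum fun z _ => hpiece z
      _ = (A.card : ℝ≥0∞) * (ν.prod ν) {p | n₁ (p.1 - p.2) ≤ a} := by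
          rw [Finset.sum_const, nsmul_eq_mul]
      _ = ((sInf T : ℕ∞) : ℝ≥0∞) * (ν.prod ν) {p | n₁ (p.1 - p.2) ≤ a} := by
          have hAj : A.card = j := ENat.coe_inj.mp hAcard
          rw [← hmeq, hAj]
          norm_cast
end

section
/- For every real a > 0 and every ε > 0, there exist i.i.d. real random variables X, Y (finitely supported, depending on a, ε) such that P(|X+Y| ≤ 1) ≥ (⌈2/a⌉ − ε) · P(|X−Y| ≤ a). Consequently the constant ⌈2b/a⌉ in the inequality P(|X+Y| ≤ b) < ⌈2b/a⌉·P(|X−Y| ≤ a) cannot be improved. -/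
open MeasureTheory ProbabilityTheory
open scoped ENNReal

private lemma measure_finset_sum' {β : Type*} [MeasurableSpace β] [MeasurableSingletonClass β]
    (μ : Measure β) (s : Finset β) : μ ↑s = ∑ b ∈ s, μ {b} := by
  rw [show (↑s : Set β) = ⋃ b ∈ s, {b} by ext x; simp]
  rw [measure_biUnion_finset ?_ (fun b _ => measurableSet_singleton b)]
  intro x _ y _ hxy
  simp [Function.onFun, hxy]

private instance sumMSC {α β : Type*} [MeasurableSpace α] [MeasurableSpace β]
    [MeasurableSingletonClass α] [MeasurableSingletonClass β] :
    MeasurableSingletonClass (α ⊕ β) := by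
  constructor
  rintro (x | x)
  · rw [show ({Sum.inl x} : Set (α ⊕ β)) = Sum.inl '' {x} by simp]
    exact (MeasurableSet.singleton x).inl_image
  · rw [show ({Sum.inr x} : Set (α ⊕ β)) = Sum.inr '' {x} by simp]
    exact measurableSet_inr_image.mpr (MeasurableSet.singleton x)

private lemma abs_nat_sub_ge_one {p q : ℕ} (h : p ≠ q) : (1:ℝ) ≤ |(p:ℝ) - q| := by
  have h' : ((p:ℤ) - q) ≠ 0 := sub_ne_zero.mpr (by exact_mod_cast h)
  have h2 := Int.one_le_abs h'
  calc (1:ℝ) = ((1:ℤ):ℝ) := by norm_num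
  _ ≤ ((|(p:ℤ) - q| : ℤ) : ℝ) := by exact_mod_cast h2
  _ = |(p:ℝ) - q| := by push_cast; ring_nf

set_option maxHeartbeats 1000000 in
theorem stmt13 (a ε : ℝ) (ha : 0 < a) (hε : 0 < ε) :
    ∃ (Ω : Type) (_ : MeasurableSpace Ω) (μ : Measure Ω) (_ : IsProbabilityMeasure μ)
      (X Y : Ω → ℝ), Measurable X ∧ Measurable Y ∧ IndepFun X Y μ ∧
        IdentDistrib X Y μ μ ∧ (Set.range X).Finite ∧
        ENNReal.ofReal ((⌈2 / a⌉₊ : ℝ) - ε) * μ {ω | |X ω - Y ω| ≤ a} ≤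
          μ {ω | |X ω + Y ω| ≤ 1} := by
  set m := ⌈2 / a⌉₊ with hm_def
  have h2a : 0 < 2 / a := by positivity
  have hm1 : 1 ≤ m := Nat.ceil_pos.mpr h2a
  have hmR : (1:ℝ) ≤ (m:ℝ) := by exact_mod_cast hm1
  have hmlt : (m : ℝ) < 2 / a + 1 := Nat.ceil_lt_add_one h2a.le
  set t := 2 - a * ((m:ℝ) - 1) with ht_def
  have ht : 0 < t := by
    have h1 : a * ((m:ℝ) - 1) < a * (2 / a) := by
      apply mul_lt_mul_of_pos_left (by linarith) ha
    have h2 : a * (2 / a) = 2 := by field_simp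
    simp only [ht_def]; linarith
  have hmRpos : (0:ℝ) < m := by linarith
  set d := a + t / m with hd_def
  have hdm : 0 < t / m := div_pos ht hmRpos
  have hd : a < d := by simp only [hd_def]; linarith
  have hd0 : 0 < d := lt_trans ha hd
  have hu : (m:ℝ) * (t / m) = t := by field_simp
  have h2d : ((m:ℝ) - 1) * d ≤ 2 := by
    have h1 : ((m:ℝ) - 1) * (t / m) ≤ (m:ℝ) * (t / m) := by
      apply mul_le_mul_of_nonneg_right (by linarith) hdm.le
    simp only [hd_def]
    nlinarith
  set r := max ((m:ℝ) * d - 1) (d / 2) with hr_def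
  have hr0 : 0 < r := lt_of_lt_of_le (half_pos hd0) (le_max_right _ _)
  have hr1 : (m:ℝ) * d - 1 ≤ r := le_max_left _ _
  have hr2 : r ≤ d + 1 := max_le (by nlinarith) (by linarith)
  -- choose n
  set n := m + ⌈(m:ℝ) * m / ε⌉₊ with hn_def
  have hmn : m ≤ n := Nat.le_add_right _ _
  have hn0 : 0 < n := lt_of_lt_of_le hm1 hmn
  have hεn : (m:ℝ) * m ≤ ε * n := by
    have h1 : (m:ℝ) * m / ε ≤ (⌈(m:ℝ) * m / ε⌉₊ : ℝ) := Nat.le_ceil _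
    have h2' : ⌈(m:ℝ) * m / ε⌉₊ ≤ n := by rw [hn_def]; exact Nat.le_add_left _ _
    have h2 : ((⌈(m:ℝ) * m / ε⌉₊ : ℕ) : ℝ) ≤ (n : ℝ) := Nat.cast_le.mpr h2'
    have h3 : (m:ℝ) * m / ε ≤ (n:ℝ) := le_trans h1 h2
    calc (m:ℝ) * m = ((m:ℝ) * m / ε) * ε := by field_simp
    _ ≤ (n:ℝ) * ε := mul_le_mul_of_nonneg_right h3 hε.le
    _ = ε * n := mul_comm _ _
  -- the space
  clear_value n
  clear_value r
  clear_value d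
  clear_value t
  clear_value m
  haveI : NeZero n := ⟨hn0.ne'⟩
  set f : Fin n ⊕ Fin n → ℝ := Sum.elim (fun j : Fin n => -((j:ℕ):ℝ) * d - r)
    (fun i : Fin n => (((i:ℕ):ℝ) + 1) * d) with hf_def
  set ν := (PMF.uniformOfFintype (Fin n ⊕ Fin n)).toMeasure with hν_def
  set μ := ν.prod ν with hμ_def
  haveI : IsProbabilityMeasure ν := PMF.toMeasure.isProbabilityMeasure _
  haveI : IsProbabilityMeasure μ := by exact inferInstance
  set X : (Fin n ⊕ Fin n) × (Fin n ⊕ Fin n) → ℝ := f ∘ Prod.fst with hX_def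
  set Y : (Fin n ⊕ Fin n) × (Fin n ⊕ Fin n) → ℝ := f ∘ Prod.snd with hY_def
  have hXm : Measurable X := measurable_of_countable _
  have hYm : Measurable Y := measurable_of_countable _
  have hfm : Measurable f := measurable_of_countable _
  refine ⟨(Fin n ⊕ Fin n) × (Fin n ⊕ Fin n), inferInstance, μ, inferInstance, X, Y, hXm, hYm, ?_, ?_, Set.finite_range _, ?_⟩
  · -- independence
    rw [indepFun_iff_measure_inter_preimage_eq_mul]
    intro s t _ _
    have h1 : X ⁻¹' s ∩ Y ⁻¹' t = (f ⁻¹' s) ×ˢ (f ⁻¹' t) := by rw [Set.prod_eq]; rfl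
    have h2 : X ⁻¹' s = (f ⁻¹' s) ×ˢ (Set.univ : Set (Fin n ⊕ Fin n)) := by rw [Set.prod_univ]; rfl
    have h3 : Y ⁻¹' t = (Set.univ : Set (Fin n ⊕ Fin n)) ×ˢ (f ⁻¹' t) := by rw [Set.univ_prod]; rfl
    rw [h1, h2, h3, Measure.prod_prod, Measure.prod_prod, Measure.prod_prod, measure_univ]
    ring
  · -- identically distributed
    refine ⟨hXm.aemeasurable, hYm.aemeasurable, ?_⟩
    rw [hX_def, hY_def, ← Measure.map_map hfm measurable_fst,
      ← Measure.map_map hfm measurable_snd, hμ_def, Measure.map_fst_prod,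
      Measure.map_snd_prod, measure_univ, one_smul]
  · -- the main inequality
    set N := Fintype.card (Fin n ⊕ Fin n) with hN_def
    have hNval : N = n + n := by
      rw [hN_def, Fintype.card_sum, Fintype.card_fin]
    set c : ℝ≥0∞ := (N:ℝ≥0∞)⁻¹ * (N:ℝ≥0∞)⁻¹ with hc_def
    have key : ∀ s : Set ((Fin n ⊕ Fin n) × (Fin n ⊕ Fin n)), μ s = ((Set.toFinite s).toFinset.card : ℝ≥0∞) * c := by
      intro s
      have h0 : μ s = μ ↑(Set.toFinite s).toFinset := by rw [Set.Finite.coe_toFinset]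
      rw [h0, measure_finset_sum']
      have hsingle : ∀ x : (Fin n ⊕ Fin n) × (Fin n ⊕ Fin n), μ {x} = c := by
        rintro ⟨x, y⟩
        have h1 : ({(x,y)} : Set ((Fin n ⊕ Fin n) × (Fin n ⊕ Fin n))) = {x} ×ˢ {y} := (Set.singleton_prod_singleton).symm
        rw [h1, hμ_def, Measure.prod_prod, hν_def,
          PMF.toMeasure_apply_singleton _ _ (measurableSet_singleton _),
          PMF.toMeasure_apply_singleton _ _ (measurableSet_singleton _),
          PMF.uniformOfFintype_apply, PMF.uniformOfFintype_apply, hc_def, hN_def]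
      rw [Finset.sum_congr rfl (fun x _ => hsingle x), Finset.sum_const, nsmul_eq_mul]
    set D := {ω : (Fin n ⊕ Fin n) × (Fin n ⊕ Fin n) | |X ω - Y ω| ≤ a} with hD_def
    set S := {ω : (Fin n ⊕ Fin n) × (Fin n ⊕ Fin n) | |X ω + Y ω| ≤ 1} with hS_def
    rw [show μ D = ((Set.toFinite D).toFinset.card : ℝ≥0∞) * c from key D,
      show μ S = ((Set.toFinite S).toFinset.card : ℝ≥0∞) * c from key S, ← mul_assoc]
    apply mul_le_mul_left
    -- diff bound
    have hdiag : ∀ x y : Fin n ⊕ Fin n, |f x - f y| ≤ a → x = y := by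
      rintro (j | i) (j' | i') h
      · by_contra hne
        have hjj : (j:ℕ) ≠ (j':ℕ) := fun hv => hne (by rw [Sum.inl.injEq]; exact Fin.ext hv)
        have h1 : (1:ℝ) ≤ |((j':ℕ):ℝ) - ((j:ℕ):ℝ)| := abs_nat_sub_ge_one (Ne.symm hjj)
        have h2 : f (Sum.inl j) - f (Sum.inl j') = (((j':ℕ):ℝ) - ((j:ℕ):ℝ)) * d := by
          simp [hf_def]; ring
        rw [h2, abs_mul, abs_of_pos hd0] at h
        nlinarith
      · -- inl, inr : difference is -( (j+i+1) d + r )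
        exfalso
        have h2 : f (Sum.inl j) - f (Sum.inr i') = -((((j:ℕ):ℝ) + ((i':ℕ):ℝ) + 1) * d + r) := by
          simp [hf_def]; ring
        rw [h2, abs_neg] at h
        have hj0 : (0:ℝ) ≤ ((j:ℕ):ℝ) := Nat.cast_nonneg _
        have hi0 : (0:ℝ) ≤ ((i':ℕ):ℝ) := Nat.cast_nonneg _
        have hpos : 0 < (((j:ℕ):ℝ) + ((i':ℕ):ℝ) + 1) * d + r := by nlinarith
        rw [abs_of_pos hpos] at h
        nlinarith
      · exfalso
        have h2 : f (Sum.inr i) - f (Sum.inl j') = (((i:ℕ):ℝ) + ((j':ℕ):ℝ) + 1) * d + r := by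
          simp [hf_def]; ring
        rw [h2] at h
        have hj0 : (0:ℝ) ≤ ((j':ℕ):ℝ) := Nat.cast_nonneg _
        have hi0 : (0:ℝ) ≤ ((i:ℕ):ℝ) := Nat.cast_nonneg _
        have hpos : 0 < (((i:ℕ):ℝ) + ((j':ℕ):ℝ) + 1) * d + r := by nlinarith
        rw [abs_of_pos hpos] at h
        nlinarith
      · by_contra hne
        have hii : (i:ℕ) ≠ (i':ℕ) := fun hv => hne (by rw [Sum.inr.injEq]; exact Fin.ext hv)
        have h1 : (1:ℝ) ≤ |((i:ℕ):ℝ) - ((i':ℕ):ℝ)| := abs_nat_sub_ge_one hii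
        have h2 : f (Sum.inr i) - f (Sum.inr i') = (((i:ℕ):ℝ) - ((i':ℕ):ℝ)) * d := by
          simp [hf_def]; ring
        rw [h2, abs_mul, abs_of_pos hd0] at h
        nlinarith
    have hDcard : (Set.toFinite D).toFinset.card ≤ N := by
      have hsub : (Set.toFinite D).toFinset ⊆ Finset.univ.image (fun x : Fin n ⊕ Fin n => (x, x)) := by
        intro p hp
        rw [Set.Finite.mem_toFinset] at hp
        have hpe : p.1 = p.2 := hdiag p.1 p.2 hp
        rw [Finset.mem_image]
        exact ⟨p.1, Finset.mem_univ _, by rw [Prod.ext_iff]; exact ⟨rfl, hpe⟩⟩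
      calc (Set.toFinite D).toFinset.card ≤ (Finset.univ.image (fun x : Fin n ⊕ Fin n => (x, x))).card :=
            Finset.card_le_card hsub
      _ ≤ (Finset.univ : Finset (Fin n ⊕ Fin n)).card := Finset.card_image_le
      _ = N := Finset.card_univ
    -- sum bound
    haveI : NeZero m := ⟨Nat.one_le_iff_ne_zero.mp hm1⟩
    haveI : NeZero (n - m + 1) := ⟨Nat.succ_ne_zero _⟩
    have hidx : ∀ p : Fin m × Fin (n - m + 1), ((p.2 : ℕ) + (p.1 : ℕ)) < n := by
      rintro ⟨k, j⟩
      have h1 := k.isLt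
      have h2 := j.isLt
      simp only at h1 h2 ⊢
      omega
    have hjdx : ∀ p : Fin m × Fin (n - m + 1), ((p.2 : ℕ)) < n := by
      rintro ⟨k, j⟩; have h2 := j.isLt; have := hmn; simp only at h2 ⊢; omega
    set F : (Fin m × Fin (n - m + 1)) ⊕ (Fin m × Fin (n - m + 1)) → (Fin n ⊕ Fin n) × (Fin n ⊕ Fin n) := Sum.elim
      (fun p => (Sum.inr ⟨(p.2 : ℕ) + (p.1 : ℕ), hidx p⟩, Sum.inl ⟨(p.2 : ℕ), hjdx p⟩))
      (fun p => (Sum.inl ⟨(p.2 : ℕ), hjdx p⟩, Sum.inr ⟨(p.2 : ℕ) + (p.1 : ℕ), hidx p⟩))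
      with hF_def
    have hsum : ∀ (k : Fin m) (j : Fin (n - m + 1)),
        |((((j:ℕ) + (k:ℕ) : ℕ):ℝ) + 1) * d + (-(((j:ℕ):ℝ)) * d - r)| ≤ 1 := by
      intro k j
      have hkm : ((k:ℕ):ℝ) + 1 ≤ (m:ℝ) := by
        have := k.isLt; exact_mod_cast Nat.succ_le_of_lt this
      have hk0 : (0:ℝ) ≤ ((k:ℕ):ℝ) := Nat.cast_nonneg _
      have heq : ((((j:ℕ) + (k:ℕ) : ℕ):ℝ) + 1) * d + (-(((j:ℕ):ℝ)) * d - r)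
          = (((k:ℕ):ℝ) + 1) * d - r := by push_cast; ring
      rw [heq, abs_le]
      constructor
      · nlinarith
      · nlinarith
    have hFmem : ∀ x : (Fin m × Fin (n - m + 1)) ⊕ (Fin m × Fin (n - m + 1)), F x ∈ (Set.toFinite S).toFinset := by
      rintro (⟨k, j⟩ | ⟨k, j⟩) <;>
      · rw [Set.Finite.mem_toFinset, hS_def]
        simp only [Set.mem_setOf_eq, hF_def, hX_def, hY_def, hf_def, Sum.elim_inl,
          Sum.elim_inr, Function.comp_apply]
        first
          | exact hsum k j
          | (rw [add_comm]; exact hsum k j)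
    have hFinj : Function.Injective F := by
      rintro (⟨k, j⟩ | ⟨k, j⟩) (⟨k', j'⟩ | ⟨k', j'⟩) h <;>
        simp only [hF_def, Sum.elim_inl, Sum.elim_inr, Prod.mk.injEq, Sum.inr.injEq,
          Sum.inl.injEq, Fin.mk.injEq] at h
      · obtain ⟨h1, h2⟩ := h
        have hj : j = j' := Fin.ext h2
        have hk : k = k' := Fin.ext (by omega)
        rw [hj, hk]
      · exact absurd h.1 (by simp)
      · exact absurd h.1 (by simp)
      · obtain ⟨h1, h2⟩ := h
        have hj : j = j' := Fin.ext h1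
        have hk : k = k' := Fin.ext (by omega)
        rw [hj, hk]
    have hScard : 2 * (m * (n - m + 1)) ≤ (Set.toFinite S).toFinset.card := by
      have h1 : (Finset.univ : Finset ((Fin m × Fin (n - m + 1)) ⊕ (Fin m × Fin (n - m + 1)))).card ≤ (Set.toFinite S).toFinset.card :=
        Finset.card_le_card_of_injOn F (fun x _ => hFmem x) (hFinj.injOn)
      calc 2 * (m * (n - m + 1)) = (Finset.univ : Finset ((Fin m × Fin (n - m + 1)) ⊕ (Fin m × Fin (n - m + 1)))).card := by
            rw [Finset.card_univ, Fintype.card_sum, Fintype.card_prod,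
              Fintype.card_fin, Fintype.card_fin]
            ring
      _ ≤ _ := h1
    -- conclude
    rcases le_or_gt ((m:ℝ) - ε) 0 with hle | hgt
    · rw [ENNReal.ofReal_eq_zero.mpr hle, zero_mul]
      exact zero_le
    · have hreal : ((m:ℝ) - ε) * ((Set.toFinite D).toFinset.card : ℝ)
          ≤ ((Set.toFinite S).toFinset.card : ℝ) := by
        have hDR : ((Set.toFinite D).toFinset.card : ℝ) ≤ ((n:ℝ) + n) := by
          have := hDcard
          rw [hNval] at this
          exact_mod_cast this
        have hSR : 2 * ((m:ℝ) * (((n:ℝ) - m) + 1)) ≤ ((Set.toFinite S).toFinset.card : ℝ) := by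
          have := hScard
          have hcast : ((2 * (m * (n - m + 1)) : ℕ) : ℝ) = 2 * ((m:ℝ) * (((n:ℝ) - m) + 1)) := by
            push_cast [Nat.cast_sub hmn]
            ring
          calc 2 * ((m:ℝ) * (((n:ℝ) - m) + 1)) = ((2 * (m * (n - m + 1)) : ℕ) : ℝ) := hcast.symm
          _ ≤ _ := by exact_mod_cast this
        calc ((m:ℝ) - ε) * ((Set.toFinite D).toFinset.card : ℝ)
            ≤ ((m:ℝ) - ε) * ((n:ℝ) + n) := mul_le_mul_of_nonneg_left hDR hgt.le
        _ ≤ 2 * ((m:ℝ) * (((n:ℝ) - m) + 1)) := by nlinarith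
        _ ≤ _ := hSR
      calc ENNReal.ofReal ((m:ℝ) - ε) * ((Set.toFinite D).toFinset.card : ℝ≥0∞)
          = ENNReal.ofReal (((m:ℝ) - ε) * ((Set.toFinite D).toFinset.card : ℝ)) := by
            rw [ENNReal.ofReal_mul hgt.le, ENNReal.ofReal_natCast]
      _ ≤ ENNReal.ofReal (((Set.toFinite S).toFinset.card : ℝ)) := ENNReal.ofReal_le_ofReal hreal
      _ = ((Set.toFinite S).toFinset.card : ℝ≥0∞) := ENNReal.ofReal_natCast _
end

section
/- In the setting of the discrete example (X uniform on the 2n points x_i = i(1+ε)a, i=1..n, and x_i = i(1+ε)a − r, i=0,−1,…,−n+1, with Y an independent copy), lim_{n→∞} P(|X+Y| ≤ 1)/P(|X−Y| ≤ a) = 1 + ⌊(1−r)/((1+ε)a)⌋ + ⌊(1+r)/((1+ε)a)⌋. -/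
open MeasureTheory ProbabilityTheory Filter
open scoped ENNReal Topology

set_option maxHeartbeats 4000000 in
theorem stmt15 (a ε r : ℝ) (ha : 0 < a) (hε : 0 < ε) (hr : 0 < r)
    (hr' : r ≤ a * (1 + ε) / 2)
    (pt : ℤ → ℝ)
    (hpt : ∀ i : ℤ, pt i = if 1 ≤ i then (i : ℝ) * (1 + ε) * a
      else (i : ℝ) * (1 + ε) * a - r)
    (μ : ℕ → Measure ℝ)
    (hμ : ∀ n : ℕ, μ n =
      (2 * n : ℝ≥0∞)⁻¹ • ∑ i ∈ Finset.Icc (-(n : ℤ) + 1) (n : ℤ), Measure.dirac (pt i)) :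
    Tendsto (fun n : ℕ =>
        (((μ n).prod (μ n)) {p : ℝ × ℝ | |p.1 + p.2| ≤ 1}).toReal /
          (((μ n).prod (μ n)) {p : ℝ × ℝ | |p.1 - p.2| ≤ a}).toReal)
      atTop
      (𝓝 ((1 : ℝ) + (⌊(1 - r) / ((1 + ε) * a)⌋ : ℤ) + (⌊(1 + r) / ((1 + ε) * a)⌋ : ℤ))) := by
  classical
  set c : ℝ := (1 + ε) * a with hcdef
  have hc : 0 < c := by positivity
  have hca : a < c := by nlinarith
  have hrc : r ≤ c / 2 := by nlinarith
  -- branch formulas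
  have hpt_pos : ∀ i : ℤ, 1 ≤ i → pt i = (i : ℝ) * c := by
    intro i h1; rw [hpt i, if_pos h1]; ring
  have hpt_neg : ∀ i : ℤ, i ≤ 0 → pt i = (i : ℝ) * c - r := by
    intro i h1; rw [hpt i, if_neg (by omega)]; ring
  set lo : ℤ := -⌊(1 - r) / c⌋ with hlodef
  set hi : ℤ := ⌊(1 + r) / c⌋ with hhidef
  set K : ℤ := hi - lo + 1 with hKdef
  have hK0 : 0 ≤ K := by
    have f1 := Int.sub_one_lt_floor ((1 - r) / c)
    have f2 := Int.sub_one_lt_floor ((1 + r) / c)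
    have hsum : (1 - r) / c + (1 + r) / c = 2 / c := by field_simp; ring
    have h2c : 0 < 2 / c := by positivity
    have : (-2 : ℝ) < (⌊(1 - r) / c⌋ : ℤ) + (⌊(1 + r) / c⌋ : ℤ) := by
      push_cast; linarith
    have : (-2 : ℤ) < ⌊(1 - r) / c⌋ + ⌊(1 + r) / c⌋ := by exact_mod_cast this
    omega
  -- condition equivalence for mixed pairs
  have hmixed : ∀ s : ℤ, |(s : ℝ) * c - r| ≤ 1 ↔ (lo ≤ s ∧ s ≤ hi) := by
    intro s
    have e1 : lo ≤ s ↔ -1 ≤ (s : ℝ) * c - r := by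
      rw [hlodef, neg_le, Int.le_floor, le_div_iff₀ hc]
      push_cast
      constructor <;> intro h <;> nlinarith
    have e2 : s ≤ hi ↔ (s : ℝ) * c - r ≤ 1 := by
      rw [hhidef, Int.le_floor, le_div_iff₀ hc]
      push_cast
      constructor <;> intro h <;> linarith
    rw [abs_le, e1, e2]
  -- the gap lemma
  have hgap : ∀ i j : ℤ, i < j → c ≤ pt j - pt i := by
    intro i j hij
    have hij' : (i : ℝ) + 1 ≤ (j : ℝ) := by exact_mod_cast hij
    rcases le_or_gt 1 i with h1 | h1 <;> rcases le_or_gt 1 j with h2 | h2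
    · rw [hpt_pos i h1, hpt_pos j h2]
      nlinarith [mul_nonneg (by linarith : (0:ℝ) ≤ (j:ℝ) - i - 1) hc.le]
    · omega
    · rw [hpt_neg i (by omega), hpt_pos j h2]
      nlinarith [mul_nonneg (by linarith : (0:ℝ) ≤ (j:ℝ) - i - 1) hc.le]
    · rw [hpt_neg i (by omega), hpt_neg j (by omega)]
      nlinarith [mul_nonneg (by linarith : (0:ℝ) ≤ (j:ℝ) - i - 1) hc.le]
  have hDeq : ∀ i j : ℤ, |pt i - pt j| ≤ a → i = j := by
    intro i j h
    rw [abs_le] at h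
    by_contra hne
    rcases lt_or_gt_of_ne hne with hlt | hlt
    · have := hgap i j hlt; linarith [h.1]
    · have := hgap j i hlt; linarith [h.2]
  -- the counting lemma for the product measure
  have hcount : ∀ n : ℕ, 0 < n → ∀ S : Set (ℝ × ℝ), MeasurableSet S →
      (((μ n).prod (μ n)) S).toReal =
        (((Finset.Icc (-(n : ℤ) + 1) (n : ℤ) ×ˢ Finset.Icc (-(n : ℤ) + 1) (n : ℤ)).filter
          (fun p : ℤ × ℤ => (pt p.1, pt p.2) ∈ S)).card : ℝ) / (2 * n : ℝ) ^ 2 := by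
    intro n hn S hS
    rw [hμ n]
    set t := Finset.Icc (-(n : ℤ) + 1) (n : ℤ) with ht
    set ν : Measure ℝ := (2 * n : ℝ≥0∞)⁻¹ • ∑ i ∈ t, Measure.dirac (pt i) with hν
    have h1 : ∀ T : Set ℝ, ν T = (2 * n : ℝ≥0∞)⁻¹ * ∑ i ∈ t, T.indicator 1 (pt i) := by
      intro T
      simp [hν, Measure.finset_sum_apply, Measure.dirac_apply]
    have h2 : (ν.prod ν) S
        = (2*n : ℝ≥0∞)⁻¹ * ((2*n:ℝ≥0∞)⁻¹ * ∑ i ∈ t, ∑ j ∈ t, S.indicator 1 (pt i, pt j)) := by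
      rw [Measure.prod_apply hS, hν]
      rw [lintegral_smul_measure, lintegral_finset_sum_measure]
      congr 1
      rw [Finset.mul_sum]
      refine Finset.sum_congr rfl fun i _ => ?_
      rw [lintegral_dirac, h1]
      congr 1
    have h3 : ∑ i ∈ t, ∑ j ∈ t, S.indicator 1 (pt i, pt j)
        = (((t ×ˢ t).filter (fun p : ℤ × ℤ => (pt p.1, pt p.2) ∈ S)).card : ℝ≥0∞) := by
      rw [← Finset.sum_product']
      rw [Finset.card_filter]
      push_cast
      refine Finset.sum_congr rfl fun p _ => ?_
      simp [Set.indicator_apply]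
    rw [h2, h3]
    simp only [ENNReal.toReal_mul, ENNReal.toReal_inv, ENNReal.toReal_ofNat,
      ENNReal.toReal_natCast]
    have hn' : (0:ℝ) < (n:ℝ) := by exact_mod_cast hn
    field_simp
  -- measurability
  have hS1 : MeasurableSet {p : ℝ × ℝ | |p.1 + p.2| ≤ 1} :=
    measurableSet_le (measurable_fst.add measurable_snd).abs measurable_const
  have hS2 : MeasurableSet {p : ℝ × ℝ | |p.1 - p.2| ≤ a} :=
    measurableSet_le (measurable_fst.sub measurable_snd).abs measurable_const
  -- the denominator count
  have hD : ∀ n : ℕ,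
      (((Finset.Icc (-(n : ℤ) + 1) (n : ℤ) ×ˢ Finset.Icc (-(n : ℤ) + 1) (n : ℤ)).filter
        (fun p : ℤ × ℤ => (pt p.1, pt p.2) ∈ {q : ℝ × ℝ | |q.1 - q.2| ≤ a})).card : ℝ) = 2 * n := by
    intro n
    have : ((Finset.Icc (-(n : ℤ) + 1) (n : ℤ) ×ˢ Finset.Icc (-(n : ℤ) + 1) (n : ℤ)).filter
        (fun p : ℤ × ℤ => (pt p.1, pt p.2) ∈ {q : ℝ × ℝ | |q.1 - q.2| ≤ a}))
        = (Finset.Icc (-(n : ℤ) + 1) (n : ℤ)).diag := by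
      ext ⟨i, j⟩
      simp only [Finset.mem_filter, Finset.mem_product, Finset.mem_diag, Set.mem_setOf_eq]
      constructor
      · rintro ⟨⟨hit, hjt⟩, habs⟩
        exact ⟨hit, hDeq i j habs⟩
      · rintro ⟨hit, hij⟩
        subst hij
        refine ⟨⟨hit, hit⟩, by simp [ha.le]⟩
    rw [this, Finset.diag_card, Int.card_Icc]
    have : ((n : ℤ) + 1 - (-(n : ℤ) + 1)).toNat = 2 * n := by omega
    rw [this]; push_cast; ring
  -- the numerator count set
  set F : ℕ → Finset (ℤ × ℤ) := fun n =>
    ((Finset.Icc (-(n : ℤ) + 1) (n : ℤ) ×ˢ Finset.Icc (-(n : ℤ) + 1) (n : ℤ)).filter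
      (fun p : ℤ × ℤ => (pt p.1, pt p.2) ∈ {q : ℝ × ℝ | |q.1 + q.2| ≤ 1})) with hF
  -- ratio simplification
  have hratio : ∀ n : ℕ, 0 < n →
      (((μ n).prod (μ n)) {p : ℝ × ℝ | |p.1 + p.2| ≤ 1}).toReal /
        (((μ n).prod (μ n)) {p : ℝ × ℝ | |p.1 - p.2| ≤ a}).toReal
      = ((F n).card : ℝ) / (2 * n) := by
    intro n hn
    rw [hcount n hn _ hS1, hcount n hn _ hS2, hD n]
    have hn' : (0:ℝ) < (n:ℝ) := by exact_mod_cast hn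
    rw [hF]
    field_simp
  -- sum formulas
  have hsum_pp : ∀ i j : ℤ, 1 ≤ i → 1 ≤ j → pt i + pt j = ((i:ℝ) + j) * c := by
    intro i j h1 h2; rw [hpt_pos i h1, hpt_pos j h2]; ring
  have hsum_pn : ∀ i j : ℤ, 1 ≤ i → j ≤ 0 → pt i + pt j = ((i:ℝ) + j) * c - r := by
    intro i j h1 h2; rw [hpt_pos i h1, hpt_neg j h2]; ring
  have hsum_np : ∀ i j : ℤ, i ≤ 0 → 1 ≤ j → pt i + pt j = ((i:ℝ) + j) * c - r := by
    intro i j h1 h2; rw [hpt_neg i h1, hpt_pos j h2]; ring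
  have hsum_nn : ∀ i j : ℤ, i ≤ 0 → j ≤ 0 → pt i + pt j = ((i:ℝ) + j) * c - 2*r := by
    intro i j h1 h2; rw [hpt_neg i h1, hpt_neg j h2]; ring
  -- constants
  set B0 : ℤ := ⌊1/c⌋ + 1 with hB0def
  have hB0pos : 1 ≤ B0 := by
    have : (0:ℤ) ≤ ⌊1/c⌋ := Int.floor_nonneg.2 (by positivity)
    omega
  set B : ℤ := |lo| + |hi| + 1 with hBdef
  have habs1 := abs_nonneg lo
  have habs2 := abs_nonneg hi
  have habs3 := le_abs_self lo
  have habs4 := neg_abs_le lo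
  have habs5 := le_abs_self hi
  have habs6 := neg_abs_le hi
  have hBpos : 1 ≤ B := by omega
  have hloB : -B < lo := by omega
  have hhiB : hi < B := by omega
  have hKcast : ((K.toNat : ℕ) : ℝ) = (K:ℝ) := by exact_mod_cast Int.toNat_of_nonneg hK0
  set CC : ℝ := ((B0.toNat : ℝ))^2 + (((B0+1).toNat : ℝ))^2 with hCCdef
  -- the upper bound
  have hupper : ∀ n : ℕ, ((F n).card : ℝ) ≤ 2*(K:ℝ)*(n:ℝ) + CC := by
    intro n
    set A1 := (F n).filter (fun p : ℤ × ℤ => 1 ≤ p.1 ∧ 1 ≤ p.2) with hA1def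
    set A2 := (F n).filter (fun p : ℤ × ℤ => 1 ≤ p.1 ∧ p.2 ≤ 0) with hA2def
    set A3 := (F n).filter (fun p : ℤ × ℤ => p.1 ≤ 0 ∧ 1 ≤ p.2) with hA3def
    set A4 := (F n).filter (fun p : ℤ × ℤ => p.1 ≤ 0 ∧ p.2 ≤ 0) with hA4def
    have hcover : F n ⊆ A1 ∪ A2 ∪ A3 ∪ A4 := by
      intro p hp
      have h1 : 1 ≤ p.1 ∨ p.1 ≤ 0 := by omega
      have h2 : 1 ≤ p.2 ∨ p.2 ≤ 0 := by omega
      simp only [Finset.mem_union, hA1def, hA2def, hA3def, hA4def, Finset.mem_filter]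
      rcases h1 with h1|h1 <;> rcases h2 with h2|h2
      · exact Or.inl (Or.inl (Or.inl ⟨hp, h1, h2⟩))
      · exact Or.inl (Or.inl (Or.inr ⟨hp, h1, h2⟩))
      · exact Or.inl (Or.inr ⟨hp, h1, h2⟩)
      · exact Or.inr ⟨hp, h1, h2⟩
    have hcard_cover : (F n).card ≤ A1.card + A2.card + A3.card + A4.card := by
      calc (F n).card ≤ (A1 ∪ A2 ∪ A3 ∪ A4).card := Finset.card_le_card hcover
        _ ≤ (A1 ∪ A2 ∪ A3).card + A4.card := Finset.card_union_le _ _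
        _ ≤ (A1 ∪ A2).card + A3.card + A4.card := by
            have := Finset.card_union_le (A1 ∪ A2) A3; omega
        _ ≤ A1.card + A2.card + A3.card + A4.card := by
            have := Finset.card_union_le A1 A2; omega
    have hA1 : A1.card ≤ B0.toNat * B0.toNat := by
      have hsub : A1 ⊆ Finset.Icc (1:ℤ) B0 ×ˢ Finset.Icc (1:ℤ) B0 := by
        intro p hp
        simp only [hA1def, Finset.mem_filter] at hp
        obtain ⟨hpF, h1, h2⟩ := hp
        simp only [hF, Finset.mem_filter, Set.mem_setOf_eq] at hpF
        have habs := hpF.2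
        rw [hsum_pp _ _ h1 h2, abs_le] at habs
        have h1' : (1:ℝ) ≤ (p.1:ℝ) := by exact_mod_cast h1
        have h2' : (1:ℝ) ≤ (p.2:ℝ) := by exact_mod_cast h2
        have hp1 : p.1 ≤ B0 := by
          have : (p.1:ℝ) ≤ 1/c := by
            rw [le_div_iff₀ hc]
            nlinarith [habs.2]
          have := Int.le_floor.2 this
          omega
        have hp2 : p.2 ≤ B0 := by
          have : (p.2:ℝ) ≤ 1/c := by
            rw [le_div_iff₀ hc]
            nlinarith [habs.2]
          have := Int.le_floor.2 this
          omega
        simp only [Finset.mem_product, Finset.mem_Icc]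
        exact ⟨⟨h1, hp1⟩, h2, hp2⟩
      calc A1.card ≤ _ := Finset.card_le_card hsub
        _ = B0.toNat * B0.toNat := by
            rw [Finset.card_product, Int.card_Icc]
            congr 1 <;> omega
    have hA4 : A4.card ≤ (B0+1).toNat * (B0+1).toNat := by
      have hsub : A4 ⊆ Finset.Icc (-B0) (0:ℤ) ×ˢ Finset.Icc (-B0) (0:ℤ) := by
        intro p hp
        simp only [hA4def, Finset.mem_filter] at hp
        obtain ⟨hpF, h1, h2⟩ := hp
        simp only [hF, Finset.mem_filter, Set.mem_setOf_eq] at hpF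
        have habs := hpF.2
        rw [hsum_nn _ _ h1 h2, abs_le] at habs
        have h1' : (p.1:ℝ) ≤ 0 := by exact_mod_cast h1
        have h2' : (p.2:ℝ) ≤ 0 := by exact_mod_cast h2
        have hp1 : -B0 ≤ p.1 := by
          have : ((-p.1 : ℤ):ℝ) ≤ 1/c := by
            rw [le_div_iff₀ hc]
            push_cast
            nlinarith [habs.1, mul_nonpos_of_nonpos_of_nonneg h2' hc.le]
          have := Int.le_floor.2 this
          omega
        have hp2 : -B0 ≤ p.2 := by
          have : ((-p.2 : ℤ):ℝ) ≤ 1/c := by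
            rw [le_div_iff₀ hc]
            push_cast
            nlinarith [habs.1, mul_nonpos_of_nonpos_of_nonneg h1' hc.le]
          have := Int.le_floor.2 this
          omega
        simp only [Finset.mem_product, Finset.mem_Icc]
        exact ⟨⟨hp1, h1⟩, hp2, h2⟩
      calc A4.card ≤ _ := Finset.card_le_card hsub
        _ = (B0+1).toNat * (B0+1).toNat := by
            rw [Finset.card_product, Int.card_Icc]
            congr 1 <;> omega
    have hA2 : A2.card ≤ K.toNat * n := by
      have hle : A2.card ≤ (Finset.Icc lo hi ×ˢ Finset.Icc (1:ℤ) (n:ℤ)).card := by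
        apply Finset.card_le_card_of_injOn (fun p => (p.1 + p.2, p.1))
        · intro p hp
          simp only [hA2def, Finset.mem_coe, Finset.mem_filter] at hp
          obtain ⟨hpF, h1, h2⟩ := hp
          simp only [hF, Finset.mem_filter, Finset.mem_product, Finset.mem_Icc,
            Set.mem_setOf_eq] at hpF
          obtain ⟨⟨⟨_, hp1n⟩, _⟩, habs⟩ := hpF
          rw [hsum_pn _ _ h1 h2] at habs
          have habs' : |((p.1 + p.2 : ℤ):ℝ) * c - r| ≤ 1 := by push_cast; exact habs
          have hm := (hmixed _).1 habs'
          simp only [Finset.mem_product, Finset.mem_Icc]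
          simp only [Finset.mem_coe, Finset.mem_product, Finset.mem_Icc]
          exact ⟨hm, h1, hp1n⟩
        · intro p _ q _ h
          simp only [Prod.ext_iff] at h ⊢
          obtain ⟨ha', hb'⟩ := h
          exact ⟨by omega, by omega⟩
      calc A2.card ≤ _ := hle
        _ = K.toNat * n := by
            rw [Finset.card_product, Int.card_Icc, Int.card_Icc]
            congr 1 <;> omega
    have hA3 : A3.card ≤ K.toNat * n := by
      have hle : A3.card ≤ (Finset.Icc lo hi ×ˢ Finset.Icc (1:ℤ) (n:ℤ)).card := by
        apply Finset.card_le_card_of_injOn (fun p => (p.1 + p.2, p.2))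
        · intro p hp
          simp only [hA3def, Finset.mem_coe, Finset.mem_filter] at hp
          obtain ⟨hpF, h1, h2⟩ := hp
          simp only [hF, Finset.mem_filter, Finset.mem_product, Finset.mem_Icc,
            Set.mem_setOf_eq] at hpF
          obtain ⟨⟨_, ⟨_, hp2n⟩⟩, habs⟩ := hpF
          rw [hsum_np _ _ h1 h2] at habs
          have habs' : |((p.1 + p.2 : ℤ):ℝ) * c - r| ≤ 1 := by push_cast; exact habs
          have hm := (hmixed _).1 habs'
          simp only [Finset.mem_product, Finset.mem_Icc]
          simp only [Finset.mem_coe, Finset.mem_product, Finset.mem_Icc]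
          exact ⟨hm, h2, hp2n⟩
        · intro p _ q _ h
          simp only [Prod.ext_iff] at h ⊢
          obtain ⟨ha', hb'⟩ := h
          exact ⟨by omega, by omega⟩
      calc A3.card ≤ _ := hle
        _ = K.toNat * n := by
            rw [Finset.card_product, Int.card_Icc, Int.card_Icc]
            congr 1 <;> omega
    have htot : (F n).card ≤ K.toNat * n + K.toNat * n + B0.toNat * B0.toNat
        + (B0+1).toNat * (B0+1).toNat := by omega
    have := (Nat.cast_le (α := ℝ)).2 htot
    push_cast at this
    rw [hCCdef]
    have hb0c : ((B0.toNat : ℕ) : ℝ) = (B0 : ℝ) := by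
      exact_mod_cast Int.toNat_of_nonneg (by omega)
    nlinarith [this, hKcast]
  -- the lower bound
  have hlow : ∀ n : ℕ, 2*B+2 ≤ (n:ℤ) →
      2*(K:ℝ)*((n:ℝ) - (2*(B:ℝ)+1)) ≤ ((F n).card : ℝ) := by
    intro n hn
    set I := Finset.Icc lo hi ×ˢ Finset.Icc (B+1) ((n:ℤ) - B - 1) with hIdef
    set G1 := I.image (fun q : ℤ × ℤ => (q.2, q.1 - q.2)) with hG1def
    set G2 := I.image (fun q : ℤ × ℤ => (q.1 - q.2, q.2)) with hG2def
    have hmemI : ∀ q : ℤ × ℤ, q ∈ I →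
        lo ≤ q.1 ∧ q.1 ≤ hi ∧ B+1 ≤ q.2 ∧ q.2 ≤ (n:ℤ) - B - 1 := by
      intro q hq
      simp only [hIdef, Finset.mem_product, Finset.mem_Icc] at hq
      exact ⟨hq.1.1, hq.1.2, hq.2.1, hq.2.2⟩
    have hG1sub : G1 ⊆ F n := by
      intro p hp
      simp only [hG1def, Finset.mem_image] at hp
      obtain ⟨q, hq, rfl⟩ := hp
      obtain ⟨hq1, hq2, hq3, hq4⟩ := hmemI q hq
      have hj1 : 1 ≤ q.2 := by omega
      have hj0 : q.1 - q.2 ≤ 0 := by omega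
      simp only [hF, Finset.mem_filter, Finset.mem_product, Finset.mem_Icc, Set.mem_setOf_eq]
      refine ⟨⟨⟨by omega, by omega⟩, by omega, by omega⟩, ?_⟩
      rw [hsum_pn _ _ hj1 hj0]
      have e : ((q.2:ℝ) + ((q.1 - q.2 : ℤ):ℝ)) * c - r = (q.1:ℝ) * c - r := by push_cast; ring
      rw [e]
      exact (hmixed q.1).2 ⟨hq1, hq2⟩
    have hG2sub : G2 ⊆ F n := by
      intro p hp
      simp only [hG2def, Finset.mem_image] at hp
      obtain ⟨q, hq, rfl⟩ := hp
      obtain ⟨hq1, hq2, hq3, hq4⟩ := hmemI q hq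
      have hj1 : 1 ≤ q.2 := by omega
      have hj0 : q.1 - q.2 ≤ 0 := by omega
      simp only [hF, Finset.mem_filter, Finset.mem_product, Finset.mem_Icc, Set.mem_setOf_eq]
      refine ⟨⟨⟨by omega, by omega⟩, by omega, by omega⟩, ?_⟩
      rw [hsum_np _ _ hj0 hj1]
      have e : (((q.1 - q.2 : ℤ):ℝ) + (q.2:ℝ)) * c - r = (q.1:ℝ) * c - r := by push_cast; ring
      rw [e]
      exact (hmixed q.1).2 ⟨hq1, hq2⟩
    have hIcard : I.card = K.toNat * ((n:ℤ) - 2*B - 1).toNat := by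
      rw [hIdef, Finset.card_product, Int.card_Icc, Int.card_Icc]
      congr 1 <;> omega
    have hG1card : G1.card = K.toNat * ((n:ℤ) - 2*B - 1).toNat := by
      rw [hG1def, Finset.card_image_of_injOn, hIcard]
      intro p _ q _ h
      simp only [Prod.ext_iff] at h ⊢
      obtain ⟨ha', hb'⟩ := h
      exact ⟨by omega, by omega⟩
    have hG2card : G2.card = K.toNat * ((n:ℤ) - 2*B - 1).toNat := by
      rw [hG2def, Finset.card_image_of_injOn, hIcard]
      intro p _ q _ h
      simp only [Prod.ext_iff] at h ⊢
      obtain ⟨ha', hb'⟩ := h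
      exact ⟨by omega, by omega⟩
    have hdisj : Disjoint G1 G2 := by
      rw [Finset.disjoint_left]
      intro p hp1 hp2
      simp only [hG1def, Finset.mem_image] at hp1
      simp only [hG2def, Finset.mem_image] at hp2
      obtain ⟨q, hq, he⟩ := hp1
      obtain ⟨q', hq', he'⟩ := hp2
      obtain ⟨hq1, hq2, hq3, hq4⟩ := hmemI q hq
      obtain ⟨hq'1, hq'2, hq'3, hq'4⟩ := hmemI q' hq'
      rw [Prod.ext_iff] at he he'
      simp only at he he'
      omega
    have hcard : K.toNat * ((n:ℤ) - 2*B - 1).toNat + K.toNat * ((n:ℤ) - 2*B - 1).toNat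
        ≤ (F n).card := by
      have hu : G1 ∪ G2 ⊆ F n := Finset.union_subset hG1sub hG2sub
      have := Finset.card_le_card hu
      rw [Finset.card_union_of_disjoint hdisj, hG1card, hG2card] at this
      exact this
    have := (Nat.cast_le (α := ℝ)).2 hcard
    push_cast at this
    have hc1 : (((n:ℤ) - 2*B - 1).toNat : ℝ) = (n:ℝ) - 2*(B:ℝ) - 1 := by
      have h1 : ((((n:ℤ) - 2*B - 1).toNat : ℤ) : ℝ) = (((n:ℤ) - 2*B - 1 : ℤ) : ℝ) := by
        rw [Int.toNat_of_nonneg (by omega)]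
      push_cast at h1
      linarith [h1]
    rw [hc1] at this
    nlinarith [this, hKcast]
  -- the limit
  have hKR0 : (0:ℝ) ≤ (K:ℝ) := by exact_mod_cast hK0
  have hlim : Tendsto (fun n : ℕ =>
      (((μ n).prod (μ n)) {p : ℝ × ℝ | |p.1 + p.2| ≤ 1}).toReal /
        (((μ n).prod (μ n)) {p : ℝ × ℝ | |p.1 - p.2| ≤ a}).toReal)
      atTop (𝓝 (K:ℝ)) := by
    have t1 : Tendsto (fun n : ℕ => 1/(n:ℝ)) atTop (𝓝 0) := tendsto_one_div_atTop_nhds_zero_nat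
    have hg : Tendsto (fun n : ℕ => (K:ℝ) - (K:ℝ)*(2*(B:ℝ)+1) * (1/(n:ℝ))) atTop (𝓝 (K:ℝ)) := by
      have := (t1.const_mul ((K:ℝ)*(2*(B:ℝ)+1))).const_sub (K:ℝ)
      simpa using this
    have hh : Tendsto (fun n : ℕ => (K:ℝ) + (CC/2) * (1/(n:ℝ))) atTop (𝓝 (K:ℝ)) := by
      have := (t1.const_mul (CC/2)).const_add (K:ℝ)
      simpa using this
    refine tendsto_of_tendsto_of_tendsto_of_le_of_le' hg hh ?_ ?_
    · rw [eventually_atTop]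
      refine ⟨(2*B+2).toNat, fun n hn => ?_⟩
      have hn' : 2*B+2 ≤ (n:ℤ) := by
        have : ((2*B+2).toNat : ℤ) ≤ (n:ℤ) := by exact_mod_cast hn
        omega
      have hnpos : 0 < n := by omega
      have hnR : (0:ℝ) < (n:ℝ) := by exact_mod_cast hnpos
      rw [hratio n hnpos, le_div_iff₀ (by linarith : (0:ℝ) < 2*(n:ℝ))]
      have e : ((K:ℝ) - (K:ℝ)*(2*(B:ℝ)+1) * (1/(n:ℝ))) * (2*(n:ℝ))
          = 2*(K:ℝ)*((n:ℝ) - (2*(B:ℝ)+1)) := by field_simp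
      rw [e]
      exact hlow n hn'
    · rw [eventually_atTop]
      refine ⟨1, fun n hn => ?_⟩
      have hnpos : 0 < n := hn
      have hnR : (0:ℝ) < (n:ℝ) := by exact_mod_cast hnpos
      rw [hratio n hnpos, div_le_iff₀ (by linarith : (0:ℝ) < 2*(n:ℝ))]
      have e : ((K:ℝ) + (CC/2) * (1/(n:ℝ))) * (2*(n:ℝ)) = 2*(K:ℝ)*(n:ℝ) + CC := by
        field_simp
      rw [e]
      exact hupper n
  convert hlim using 2
  rw [hKdef, hlodef, hhidef]
  push_cast
  ring
end
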